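/- arXiv:2511.15213 — 7 statements merged into one kernel-verified Lean document; each statement's English description precedes it below -/
import Mathlib

section
/- Let Γ ⊆ ℝⁿ be an n-attractor, the attractor of an IFS s₁,…,s_M with contraction ratios ρ₁,…,ρ_M. Then (i) Γ is an n-set, and (ii) for all m ≠ m' the Lebesgue measure of s_m(Γ) ∩ s_{m'}(Γ) is zero. -/
open Metric MeasureTheory Set Pointwise

lemma sim_homeo {n : ℕ} (f : EuclideanSpace ℝ (Fin n) → EuclideanSpace ℝ (Fin n)) (ρ : ℝ)
    (hρ : 0 < ρ) (hf : ∀ x y, dist (f x) (f y) = ρ * dist x y) :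
    ∃ H : EuclideanSpace ℝ (Fin n) ≃ₜ EuclideanSpace ℝ (Fin n), ⇑H = f := by
  set g : EuclideanSpace ℝ (Fin n) → EuclideanSpace ℝ (Fin n) := fun x => ρ⁻¹ • f x with hg
  have hgi : Isometry g := Isometry.of_dist_eq (fun x y => by
    simp only [hg, dist_smul₀, hf, Real.norm_eq_abs, abs_inv, abs_of_pos hρ]
    field_simp)
  let A := hgi.affineIsometryOfStrictConvexSpace
  let e := A.toAffineIsometryEquiv rfl
  refine ⟨(e.toHomeomorph).trans (Homeomorph.smulOfNeZero ρ hρ.ne'), ?_⟩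
  funext x
  show ρ • (e x) = f x
  have h1 : e x = g x := rfl
  rw [h1, hg]
  simp [smul_smul, mul_inv_cancel₀ hρ.ne']

lemma sim_volume {n : ℕ} (f : EuclideanSpace ℝ (Fin n) → EuclideanSpace ℝ (Fin n)) (ρ : ℝ)
    (hρ : 0 < ρ) (hf : ∀ x y, dist (f x) (f y) = ρ * dist x y)
    (S : Set (EuclideanSpace ℝ (Fin n))) :
    volume (f '' S) = ENNReal.ofReal (ρ ^ n) * volume S := by
  set g : EuclideanSpace ℝ (Fin n) → EuclideanSpace ℝ (Fin n) := fun x => ρ⁻¹ • f x with hg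
  have hgi : Isometry g := Isometry.of_dist_eq (fun x y => by
    simp only [hg, dist_smul₀, hf, Real.norm_eq_abs, abs_inv, abs_of_pos hρ]
    field_simp)
  let A := hgi.affineIsometryOfStrictConvexSpace
  let e := A.toAffineIsometryEquiv (rfl)
  have hfg : f '' S = ρ • (g '' S) := by
    rw [← Set.image_smul, Set.image_image]
    apply Set.image_congr'
    intro x
    simp [hg, smul_smul, mul_inv_cancel₀ hρ.ne']
  rw [hfg]
  rw [Measure.addHaar_smul_of_nonneg volume hρ.le, finrank_euclideanSpace_fin]
  congr 1
  set L := e.linearIsometryEquiv with hL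
  have hex : ∀ x, g x = L x + e 0 := by
    intro x
    have := e.map_vadd (0 : EuclideanSpace ℝ (Fin n)) x
    have h2 : e x = g x := rfl
    rw [← h2]
    simp only [vadd_eq_add, add_zero] at this
    exact this
  let H : EuclideanSpace ℝ (Fin n) ≃ₜ EuclideanSpace ℝ (Fin n) :=
    L.toHomeomorph.trans (Homeomorph.addRight (e 0))
  have hH : ⇑H = g := by funext x; exact (hex x).symm
  have mp : MeasurePreserving (⇑H) volume volume := by
    have : MeasurePreserving (fun x : EuclideanSpace ℝ (Fin n) => L x + e 0) volume volume :=
      (measurePreserving_add_right volume (e 0)).comp L.measurePreserving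
    convert this using 1
    funext x; rfl
  have himg : g '' S = ⇑(H.toMeasurableEquiv.symm) ⁻¹' S := by
    rw [← hH]
    exact Equiv.image_eq_preimage_symm H.toEquiv S
  rw [himg]
  exact MeasurePreserving.measure_preimage_equiv (mp.symm H.toMeasurableEquiv) S

lemma infDist_image_le {X : Type*} [MetricSpace X] (f : X → X) (ρ : ℝ) (hρ : 0 < ρ)
    (hf : ∀ a b, dist (f a) (f b) = ρ * dist a b) {K : Set X} (hK : K.Nonempty) (y : X) :
    infDist (f y) (f '' K) ≤ ρ * infDist y K := by
  refine le_of_forall_pos_le_add fun ε hε => ?_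
  obtain ⟨z, hzK, hdz⟩ := (infDist_lt_iff hK).1
    (lt_add_of_pos_right (infDist y K) (div_pos hε hρ))
  calc infDist (f y) (f '' K) ≤ dist (f y) (f z) := infDist_le_dist_of_mem ⟨z, hzK, rfl⟩
    _ = ρ * dist y z := hf y z
    _ ≤ ρ * (infDist y K + ε / ρ) := by nlinarith
    _ = ρ * infDist y K + ε := by field_simp

set_option maxHeartbeats 2000000 in
/-- An n-attractor Γ (attractor of an IFS of contracting similarities
satisfying the OSC, with ∑ ρₘⁿ = 1) is an n-set, and the overlaps sₘ(Γ) ∩ sₘ'(Γ)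
have zero Lebesgue measure for m ≠ m'. -/
theorem statement0
    (n : ℕ) (hn : 1 ≤ n)
    (M : ℕ) (hM : 2 ≤ M)
    (s : Fin M → EuclideanSpace ℝ (Fin n) → EuclideanSpace ℝ (Fin n))
    (ρ : Fin M → ℝ)
    (hρ : ∀ m, ρ m ∈ Set.Ioo (0 : ℝ) 1)
    (hsim : ∀ m x y, dist (s m x) (s m y) = ρ m * dist x y)
    (Γ : Set (EuclideanSpace ℝ (Fin n)))
    (hΓne : Γ.Nonempty) (hΓcomp : IsCompact Γ)
    (hattr : Γ = ⋃ m, s m '' Γ)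
    (hOSC : ∃ O : Set (EuclideanSpace ℝ (Fin n)), O.Nonempty ∧ IsOpen O ∧
      Bornology.IsBounded O ∧ (⋃ m, s m '' O) ⊆ O ∧
      ∀ m m', m ≠ m' → Disjoint (s m '' O) (s m' '' O))
    (hsum : ∑ m, ρ m ^ n = 1) :
    (∃ c : ℝ, 0 < c ∧ ∀ x ∈ Γ, ∀ r : ℝ, 0 < r → r ≤ 1 →
      ENNReal.ofReal (c * r ^ n) ≤ volume (Γ ∩ Metric.closedBall x r)) ∧
    (∀ m m' : Fin M, m ≠ m' → volume (s m '' Γ ∩ s m' '' Γ) = 0) := by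
  obtain ⟨O, hOne, hOopen, hObd, hOsub, hOdisj⟩ := hOSC
  haveI : Nonempty (Fin M) := ⟨⟨0, by omega⟩⟩
  -- basic facts about the maps
  have hρ0 : ∀ m, 0 < ρ m := fun m => (hρ m).1
  have hρ1 : ∀ m, ρ m < 1 := fun m => (hρ m).2
  have hvol : ∀ m (A : Set (EuclideanSpace ℝ (Fin n))),
      volume (s m '' A) = ENNReal.ofReal (ρ m ^ n) * volume A :=
    fun m A => sim_volume (s m) (ρ m) (hρ0 m) (hsim m) A
  have hhomeo : ∀ m, ∃ H : EuclideanSpace ℝ (Fin n) ≃ₜ EuclideanSpace ℝ (Fin n), ⇑H = s m :=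
    fun m => sim_homeo (s m) (ρ m) (hρ0 m) (hsim m)
  have hopen : ∀ m (U : Set (EuclideanSpace ℝ (Fin n))), IsOpen U → IsOpen (s m '' U) := by
    intro m U hU
    obtain ⟨H, hH⟩ := hhomeo m
    rw [← hH]
    exact H.isOpenMap U hU
  have hscont : ∀ m, Continuous (s m) := by
    intro m
    obtain ⟨H, hH⟩ := hhomeo m
    rw [← hH]; exact H.continuous
  have hsinj : ∀ m, Function.Injective (s m) := by
    intro m a b hab
    by_contra hne
    have h1 : dist (s m a) (s m b) = ρ m * dist a b := hsim m a b
    rw [hab] at h1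
    simp only [dist_self] at h1
    have : dist a b ≠ 0 := fun h => hne (by rwa [dist_eq_zero] at h)
    have := (hρ0 m).ne'
    rcases mul_eq_zero.1 h1.symm with h | h <;> tauto
  have hsmΓ : ∀ m, s m '' Γ ⊆ Γ := by
    intro m
    conv_rhs => rw [hattr]
    exact subset_iUnion_of_subset m le_rfl
  -- the compact set K = closure O
  set K := closure O with hK
  have hKne : K.Nonempty := hOne.closure
  have hKbd : Bornology.IsBounded K := hObd.closure
  have hΓbd : Bornology.IsBounded Γ := hΓcomp.isBounded
  have hsmK : ∀ m, s m '' K ⊆ K := by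
    intro m
    calc s m '' K ⊆ closure (s m '' O) := image_closure_subset_closure_image (hscont m)
    _ ⊆ closure O := closure_mono ((subset_iUnion_of_subset m le_rfl).trans hOsub)
  have hΓK : Γ ⊆ K := by
    have hcont : Continuous fun p : EuclideanSpace ℝ (Fin n) => infDist p K :=
      continuous_infDist_pt K
    obtain ⟨x0, hx0Γ, hmax⟩ := hΓcomp.exists_isMaxOn hΓne hcont.continuousOn
    have h0 : infDist x0 K ≤ 0 := by
      have hx0 := hx0Γ
      rw [hattr] at hx0
      simp only [mem_iUnion] at hx0
      obtain ⟨m, y, hyΓ, hsy⟩ := hx0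
      have h1 : infDist (s m y) (s m '' K) ≤ ρ m * infDist y K :=
        infDist_image_le (s m) (ρ m) (hρ0 m) (hsim m) hKne y
      have h2 : infDist x0 K ≤ infDist x0 (s m '' K) :=
        infDist_le_infDist_of_subset (hsmK m) (hKne.image _)
      rw [← hsy] at h2
      have h3 : infDist y K ≤ infDist x0 K := hmax hyΓ
      have h4 : infDist x0 K ≤ ρ m * infDist x0 K := by
        calc infDist x0 K ≤ ρ m * infDist y K := by rw [← hsy]; exact h2.trans h1
        _ ≤ ρ m * infDist x0 K := by nlinarith [hρ0 m]
      nlinarith [hρ1 m, infDist_nonneg (x := x0) (s := K)]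
    intro z hz
    have h5 : infDist z K ≤ 0 := le_trans (hmax hz) h0
    have h6 : infDist z K = 0 := le_antisymm h5 infDist_nonneg
    exact (isClosed_closure.mem_iff_infDist_zero hKne).2 h6
  -- measures of O and Γ
  have hμOpos : 0 < volume O := hOopen.measure_pos volume hOne
  have hμOfin : volume O < ⊤ := hObd.measure_lt_top
  have hμΓfin : volume Γ < ⊤ := hΓbd.measure_lt_top
  have hΓmeas : MeasurableSet Γ := hΓcomp.isClosed.measurableSet
  have hsum' : ∑ m, ENNReal.ofReal (ρ m ^ n) = 1 := by
    rw [← ENNReal.ofReal_sum_of_nonneg (fun m _ => le_of_lt (pow_pos (hρ0 m) n)), hsum, ENNReal.ofReal_one]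
  -- the iterated open sets
  set U : ℕ → Set (EuclideanSpace ℝ (Fin n)) :=
    fun k => Nat.rec O (fun _ Uk => ⋃ m, s m '' Uk) k with hUdef
  have hU0 : U 0 = O := rfl
  have hUsucc : ∀ k, U (k + 1) = ⋃ m, s m '' U k := fun k => rfl
  have hU1 : U 1 = ⋃ m, s m '' O := rfl
  have hUopen : ∀ k, IsOpen (U k) := by
    intro k
    induction k with
    | zero => exact hOopen
    | succ k ih => exact isOpen_iUnion fun m => hopen m _ ih
  have hUsubO : ∀ k, U k ⊆ O := by
    intro k
    induction k with
    | zero => exact le_rfl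
    | succ k ih =>
      rw [hUsucc]
      exact (iUnion_mono fun m => image_mono ih).trans hOsub
  have hU1null : volume (O \ U 1) = 0 := by
    have hmeas : ∀ m, MeasurableSet (s m '' O) := fun m => (hopen m O hOopen).measurableSet
    have hdisj : Pairwise (Function.onFun Disjoint fun m => s m '' O) :=
      fun m m' hmm => hOdisj m m' hmm
    have hμU1 : volume (U 1) = volume O := by
      rw [hU1, measure_iUnion hdisj hmeas, tsum_fintype]
      simp_rw [hvol]
      rw [← Finset.sum_mul, hsum', one_mul]
    rw [measure_diff (hUsubO 1) (hUopen 1).measurableSet.nullMeasurableSet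
      (by rw [hμU1]; exact hμOfin.ne), hμU1, tsub_self]
  have hUnull : ∀ k, volume (O \ U k) = 0 := by
    intro k
    induction k with
    | zero => simp [hU0]
    | succ k ih =>
      have hsub : O \ U (k + 1) ⊆ (O \ U 1) ∪ ⋃ m, s m '' (O \ U k) := by
        intro z ⟨hzO, hzU⟩
        by_cases h1 : z ∈ U 1
        · right
          rw [hU1] at h1
          simp only [mem_iUnion] at h1 ⊢
          obtain ⟨m, y, hyO, hsy⟩ := h1
          refine ⟨m, y, ⟨hyO, fun hyU => hzU ?_⟩, hsy⟩
          rw [hUsucc]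
          exact mem_iUnion.2 ⟨m, ⟨y, hyU, hsy⟩⟩
        · exact Or.inl ⟨hzO, h1⟩
      refine le_antisymm ?_ zero_le
      calc volume (O \ U (k + 1)) ≤ volume ((O \ U 1) ∪ ⋃ m, s m '' (O \ U k)) :=
            measure_mono hsub
        _ ≤ volume (O \ U 1) + volume (⋃ m, s m '' (O \ U k)) := measure_union_le _ _
        _ ≤ 0 + ∑' m, volume (s m '' (O \ U k)) := by
            gcongr
            · exact hU1null.le
            · exact measure_iUnion_le _
        _ = 0 := by
            simp only [hvol, ih, mul_zero, tsum_zero, zero_add]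
  -- the maximal ratio
  obtain ⟨m0, _, hbmax⟩ := Finset.exists_max_image Finset.univ ρ ⟨Classical.arbitrary _,
    Finset.mem_univ _⟩
  set b := ρ m0 with hbdef
  have hb0 : 0 ≤ b := (hρ0 m0).le
  have hb1 : b < 1 := hρ1 m0
  have hbm : ∀ m, ρ m ≤ b := fun m => hbmax m (Finset.mem_univ m)
  -- diameter bound
  set D := Metric.diam K with hDdef
  have hdistK : ∀ a ∈ K, ∀ c ∈ K, dist a c ≤ D := fun a ha c hc =>
    Metric.dist_le_diam_of_mem hKbd ha hc
  -- points of U k are close to Γ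
  have hUdist : ∀ k, ∀ x ∈ U k, infDist x Γ ≤ b ^ k * D := by
    intro k
    induction k with
    | zero =>
      intro x hx
      obtain ⟨γ, hγ⟩ := hΓne
      calc infDist x Γ ≤ dist x γ := infDist_le_dist_of_mem hγ
        _ ≤ D := hdistK x (subset_closure hx) γ (hΓK hγ)
        _ = b ^ 0 * D := by ring
    | succ k ih =>
      intro x hx
      rw [hUsucc] at hx
      simp only [mem_iUnion] at hx
      obtain ⟨m, y, hyU, hsy⟩ := hx
      have h1 : infDist x Γ ≤ infDist x (s m '' Γ) :=
        infDist_le_infDist_of_subset (hsmΓ m) (hΓne.image _)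
      have h2 : infDist (s m y) (s m '' Γ) ≤ ρ m * infDist y Γ :=
        infDist_image_le (s m) (ρ m) (hρ0 m) (hsim m) hΓne y
      rw [hsy] at h2
      have h3 := ih y hyU
      have h4 : (0:ℝ) ≤ infDist y Γ := infDist_nonneg
      have h5 : (0:ℝ) ≤ b ^ k * D := by
        have : (0:ℝ) ≤ D := Metric.diam_nonneg
        positivity
      calc infDist x Γ ≤ ρ m * infDist y Γ := h1.trans h2
        _ ≤ b * (b ^ k * D) := by nlinarith [hρ0 m, hbm m]
        _ = b ^ (k + 1) * D := by ring
  -- a.e. O is contained in Γ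
  have hONull : volume (O \ Γ) = 0 := by
    have hsub : O \ Γ ⊆ ⋃ k, (O \ U k) := by
      intro z ⟨hzO, hzΓ⟩
      by_contra hz
      simp only [mem_iUnion, mem_diff, not_exists, not_and, not_not] at hz
      have hzU : ∀ k, z ∈ U k := fun k => hz k hzO
      have h1 : ∀ k, infDist z Γ ≤ b ^ k * D := fun k => hUdist k z (hzU k)
      have h2 : Filter.Tendsto (fun k : ℕ => b ^ k * D) Filter.atTop (nhds 0) := by
        have := (tendsto_pow_atTop_nhds_zero_of_lt_one hb0 hb1).mul_const D
        simpa using this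
      have h3 : infDist z Γ ≤ 0 := ge_of_tendsto' h2 h1
      have h4 : infDist z Γ = 0 := le_antisymm h3 infDist_nonneg
      exact hzΓ ((hΓcomp.isClosed.mem_iff_infDist_zero hΓne).2 h4)
    refine le_antisymm ?_ zero_le
    calc volume (O \ Γ) ≤ volume (⋃ k, (O \ U k)) := measure_mono hsub
      _ ≤ ∑' k, volume (O \ U k) := measure_iUnion_le _
      _ = 0 := by simp [hUnull]
  -- Part (ii): overlaps are null
  have part2 : ∀ m m' : Fin M, m ≠ m' → volume (s m '' Γ ∩ s m' '' Γ) = 0 := by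
    intro m m' hmm
    have hAmeas : ∀ k : Fin M, MeasurableSet (s k '' Γ) := fun k =>
      (hΓcomp.image (hscont k)).isClosed.measurableSet
    have hsumA : ∑ k, volume (s k '' Γ) = volume Γ := by
      simp_rw [hvol]
      rw [← Finset.sum_mul, hsum', one_mul]
    set X := ⋃ k ∈ Finset.univ.erase m', s k '' Γ with hXdef
    have hXm : s m '' Γ ⊆ X := by
      apply subset_biUnion_of_mem (u := fun k => s k '' Γ)
      exact Finset.mem_erase.2 ⟨hmm, Finset.mem_univ m⟩
    have hsplit : (⋃ k, s k '' Γ) = X ∪ s m' '' Γ := by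
      rw [hXdef]
      ext z
      simp only [mem_iUnion, mem_union, Finset.mem_erase, Finset.mem_univ, and_true,
        exists_prop]
      constructor
      · rintro ⟨k, hk⟩
        by_cases hkm : k = m'
        · right; rwa [hkm] at hk
        · left; exact ⟨k, hkm, hk⟩
      · rintro (⟨k, _, hk⟩ | hk)
        · exact ⟨k, hk⟩
        · exact ⟨m', hk⟩
    have h1 : volume Γ + volume (s m '' Γ ∩ s m' '' Γ) ≤ ∑ k, volume (s k '' Γ) := by
      calc volume Γ + volume (s m '' Γ ∩ s m' '' Γ)
          = volume (⋃ k, s k '' Γ) + volume (s m '' Γ ∩ s m' '' Γ) := by rw [← hattr]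
        _ ≤ volume (X ∪ s m' '' Γ) + volume (X ∩ s m' '' Γ) := by
            rw [hsplit]
            exact add_le_add le_rfl (measure_mono (inter_subset_inter_left _ hXm))
        _ = volume X + volume (s m' '' Γ) := measure_union_add_inter X (hAmeas m')
        _ ≤ (∑ k ∈ Finset.univ.erase m', volume (s k '' Γ)) + volume (s m' '' Γ) := by
            gcongr
            exact measure_biUnion_finset_le _ _
        _ = ∑ k, volume (s k '' Γ) := Finset.sum_erase_add _ _ (Finset.mem_univ m')
    rw [hsumA] at h1
    have h2 : volume Γ + volume (s m '' Γ ∩ s m' '' Γ) ≤ volume Γ + 0 := by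
      rwa [add_zero]
    have h3 := (ENNReal.add_le_add_iff_left hμΓfin.ne).1 h2
    exact le_antisymm h3 zero_le
  refine ⟨?_, part2⟩
  -- Part (i): the n-set property
  have hD0 : 0 < D := by
    obtain ⟨z, hz⟩ := hOne
    obtain ⟨ε, hε, hball⟩ := Metric.isOpen_iff.1 hOopen z hz
    haveI : Nonempty (Fin n) := ⟨⟨0, hn⟩⟩
    obtain ⟨v, hv⟩ := exists_ne (0 : EuclideanSpace ℝ (Fin n))
    have hvnorm : 0 < ‖v‖ := norm_pos_iff.2 hv
    set w := z + (ε / 2 / ‖v‖) • v with hw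
    have hdist : dist w z = ε / 2 := by
      rw [hw, dist_eq_norm]
      simp only [add_sub_cancel_left, norm_smul, Real.norm_eq_abs, abs_div, abs_of_pos hε,
        abs_of_pos hvnorm]
      field_simp
      ring
    have hwO : w ∈ O := hball (by rw [mem_ball, hdist]; linarith)
    calc (0:ℝ) < ε/2 := by linarith
      _ = dist w z := hdist.symm
      _ ≤ D := hdistK w (subset_closure hwO) z (subset_closure hz)
  set ρmin := Finset.univ.inf' Finset.univ_nonempty ρ with hρmindef
  have hρmin0 : 0 < ρmin := by
    rw [hρmindef, Finset.lt_inf'_iff]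
    exact fun m _ => hρ0 m
  have hρminle : ∀ m, ρmin ≤ ρ m := fun m => Finset.inf'_le _ (Finset.mem_univ m)
  have hρmin1 : ρmin ≤ 1 := le_of_lt ((hρminle m0).trans_lt (hρ1 m0))
  set D' := max D 1 with hD'def
  have hD'1 : (1:ℝ) ≤ D' := le_max_right _ _
  have hD'D : D ≤ D' := le_max_left _ _
  have hD'0 : (0:ℝ) < D' := lt_of_lt_of_le one_pos hD'1
  have hμOtoReal : 0 < (volume O).toReal := ENNReal.toReal_pos hμOpos.ne' hμOfin.ne
  refine ⟨(volume O).toReal * (ρmin / D') ^ n, by positivity, ?_⟩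
  intro x hx r hr0 hr1
  -- address sequence of x
  have hstep : ∀ p, p ∈ Γ → ∃ m, ∃ y, y ∈ Γ ∧ s m y = p := by
    intro p hp
    rw [hattr] at hp
    simp only [mem_iUnion] at hp
    obtain ⟨m, y, hy, hsy⟩ := hp
    exact ⟨m, y, hy, hsy⟩
  choose σf yf hyΓ hsy using hstep
  set seq : ℕ → {p : EuclideanSpace ℝ (Fin n) // p ∈ Γ} :=
    fun k => Nat.rec ⟨x, hx⟩ (fun _ q => ⟨yf q.1 q.2, hyΓ q.1 q.2⟩) k with hseqdef
  set σ : ℕ → Fin M := fun k => σf (seq k).1 (seq k).2 with hσdef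
  have hseq : ∀ k, s (σ k) (seq (k + 1)).1 = (seq k).1 := fun k => hsy (seq k).1 (seq k).2
  set rk : ℕ → ℝ := fun k => ∏ i ∈ Finset.range k, ρ (σ i) with hrkdef
  have hrk0 : ∀ k, 0 < rk k := fun k => Finset.prod_pos fun i _ => hρ0 (σ i)
  have hrkb : ∀ k, rk k ≤ b ^ k := by
    intro k
    calc rk k ≤ ∏ _i ∈ Finset.range k, b :=
          Finset.prod_le_prod (fun i _ => (hρ0 (σ i)).le) (fun i _ => hbm (σ i))
      _ = b ^ k := by rw [Finset.prod_const, Finset.card_range]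
  have hrksucc : ∀ k, rk (k + 1) = rk k * ρ (σ k) := fun k => Finset.prod_range_succ _ _
  have hrk0' : rk 0 = 1 := Finset.prod_range_zero _
  -- the composed similarity maps
  have main : ∀ k, ∃ g : EuclideanSpace ℝ (Fin n) → EuclideanSpace ℝ (Fin n),
      (∀ a c, dist (g a) (g c) = rk k * dist a c) ∧ g '' Γ ⊆ Γ ∧ g (seq k).1 = x := by
    intro k
    induction k with
    | zero =>
      exact ⟨id, fun a c => by simp [hrk0'], by simp, rfl⟩
    | succ k ih =>
      obtain ⟨g, hgsim, hgΓ, hgx⟩ := ih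
      refine ⟨g ∘ s (σ k), fun a c => ?_, ?_, ?_⟩
      · rw [Function.comp_apply, Function.comp_apply, hgsim, hsim, hrksucc]; ring
      · rw [image_comp]
        exact (image_mono (f := g) (hsmΓ (σ k))).trans hgΓ
      · rw [Function.comp_apply, hseq k, hgx]
  -- the key measure estimate
  have key : ∀ k, ENNReal.ofReal ((rk k) ^ n) * volume O ≤
      volume (Γ ∩ closedBall x (rk k * D)) := by
    intro k
    obtain ⟨g, hgsim, hgΓ, hgx⟩ := main k
    have hginj : Function.Injective g := by
      intro a c hac
      by_contra hne
      have h1 := hgsim a c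
      rw [hac, dist_self] at h1
      have h2 : dist a c ≠ 0 := fun h => hne (by rwa [dist_eq_zero] at h)
      have h3 : 0 < dist a c := lt_of_le_of_ne dist_nonneg (Ne.symm h2)
      nlinarith [hrk0 k]
    have h1 : g '' O ⊆ closedBall x (rk k * D) := by
      rintro p ⟨a, haO, rfl⟩
      rw [mem_closedBall, ← hgx, hgsim]
      have := hdistK a (subset_closure haO) (seq k).1 (hΓK (seq k).2)
      nlinarith [hrk0 k]
    have h2 : volume (g '' O \ Γ) = 0 := by
      have hsub : g '' O \ Γ ⊆ g '' (O \ Γ) := by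
        rw [Set.image_diff hginj]
        exact diff_subset_diff_right hgΓ
      refine le_antisymm ?_ zero_le
      calc volume (g '' O \ Γ) ≤ volume (g '' (O \ Γ)) := measure_mono hsub
        _ = ENNReal.ofReal ((rk k) ^ n) * volume (O \ Γ) :=
            sim_volume g (rk k) (hrk0 k) hgsim _
        _ = 0 := by rw [hONull, mul_zero]
    calc ENNReal.ofReal ((rk k) ^ n) * volume O
        = volume (g '' O) := (sim_volume g (rk k) (hrk0 k) hgsim O).symm
      _ ≤ volume (g '' O ∩ Γ) + volume (g '' O \ Γ) := measure_le_inter_add_diff volume _ _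
      _ = volume (g '' O ∩ Γ) := by rw [h2, add_zero]
      _ ≤ volume (Γ ∩ closedBall x (rk k * D)) :=
          measure_mono (fun p hp => ⟨hp.2, h1 hp.1⟩)
  -- choose the stopping time
  have hexk : ∃ k, rk k * D ≤ r := by
    have h2 : Filter.Tendsto (fun k : ℕ => b ^ k * D) Filter.atTop (nhds 0) := by
      have := (tendsto_pow_atTop_nhds_zero_of_lt_one hb0 hb1).mul_const D
      simpa using this
    obtain ⟨k, hk⟩ := (Filter.Tendsto.eventually_lt_const hr0 h2).exists
    exact ⟨k, le_of_lt (lt_of_le_of_lt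
      (mul_le_mul_of_nonneg_right (hrkb k) Metric.diam_nonneg) hk)⟩
  classical
  obtain ⟨k, hk, hkmin⟩ : ∃ k, (rk k * D ≤ r) ∧ ∀ j, j < k → ¬(rk j * D ≤ r) :=
    ⟨Nat.find hexk, Nat.find_spec hexk, fun j hj => Nat.find_min hexk hj⟩
  have hrmin : ρmin * r / D' ≤ rk k := by
    rcases Nat.eq_zero_or_pos k with hk0 | hk0
    · rw [hk0, hrk0']
      rw [div_le_one hD'0]
      nlinarith
    · set j := k - 1 with hjdef
      have hk1 : k = j + 1 := by omega
      have hjlt : j < k := by omega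
      have hmin : ¬ (rk j * D ≤ r) := hkmin j hjlt
      push_neg at hmin
      have ha : r / D ≤ rk j := by
        rw [div_le_iff₀ hD0]
        exact hmin.le
      have hb2 : r / D' ≤ r / D := div_le_div_of_nonneg_left hr0.le hD0 hD'D
      rw [hk1, hrksucc]
      have hc2 : ρmin ≤ ρ (σ j) := hρminle (σ j)
      have hd2 : 0 < rk j := hrk0 j
      calc ρmin * r / D' = ρmin * (r / D') := by ring
        _ ≤ ρ (σ j) * rk j := by nlinarith [div_nonneg hr0.le hD'0.le]
        _ = rk j * ρ (σ j) := by ring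
  have hle : (volume O).toReal * (ρmin / D') ^ n * r ^ n ≤ (rk k) ^ n * (volume O).toReal := by
    have h1 : (ρmin / D' * r) ^ n ≤ (rk k) ^ n :=
      pow_le_pow_left₀ (by positivity) (by rw [div_mul_eq_mul_div]; exact hrmin) n
    calc (volume O).toReal * (ρmin / D') ^ n * r ^ n
        = (ρmin / D' * r) ^ n * (volume O).toReal := by rw [mul_pow]; ring
      _ ≤ (rk k) ^ n * (volume O).toReal :=
          mul_le_mul_of_nonneg_right h1 hμOtoReal.le
  calc ENNReal.ofReal ((volume O).toReal * (ρmin / D') ^ n * r ^ n)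
      ≤ ENNReal.ofReal ((rk k) ^ n * (volume O).toReal) := ENNReal.ofReal_le_ofReal hle
    _ = ENNReal.ofReal ((rk k) ^ n) * volume O := by
        rw [ENNReal.ofReal_mul (pow_nonneg (hrk0 k).le n), ENNReal.ofReal_toReal hμOfin.ne]
    _ ≤ volume (Γ ∩ closedBall x (rk k * D)) := key k
    _ ≤ volume (Γ ∩ closedBall x r) :=
        measure_mono (inter_subset_inter_right _ (closedBall_subset_closedBall hk))
end

section
/- Let Γ ⊆ ℝⁿ be an n-attractor with defining IFS s₁,…,s_M, and let O be any non-empty bounded open set satisfying the OSC for this IFS. Then Γ equals the closure of O; in particular O ⊆ Γ and the interior of Γ is non-empty. -/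
open Metric MeasureTheory Set

/-- If Γ is an n-attractor with defining IFS s₁,…,s_M and O is any
non-empty bounded open set satisfying the OSC for this IFS, then Γ = closure O;
in particular O ⊆ Γ and the interior of Γ is non-empty. -/
theorem statement1
    (n : ℕ) (hn : 1 ≤ n)
    (M : ℕ) (hM : 2 ≤ M)
    (s : Fin M → EuclideanSpace ℝ (Fin n) → EuclideanSpace ℝ (Fin n))
    (ρ : Fin M → ℝ)
    (hρ : ∀ m, ρ m ∈ Set.Ioo (0 : ℝ) 1)
    (hsim : ∀ m x y, dist (s m x) (s m y) = ρ m * dist x y)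
    (Γ : Set (EuclideanSpace ℝ (Fin n)))
    (hΓne : Γ.Nonempty) (hΓcomp : IsCompact Γ)
    (hattr : Γ = ⋃ m, s m '' Γ)
    (hsum : ∑ m, ρ m ^ n = 1)
    (O : Set (EuclideanSpace ℝ (Fin n)))
    (hOne : O.Nonempty) (hOopen : IsOpen O) (hObdd : Bornology.IsBounded O)
    (hOSC1 : (⋃ m, s m '' O) ⊆ O)
    (hOSC2 : ∀ m m' : Fin M, m ≠ m' → Disjoint (s m '' O) (s m' '' O)) :
    Γ = closure O ∧ O ⊆ Γ ∧ (interior Γ).Nonempty := by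
  classical
  haveI : Nonempty (Fin M) := Fin.pos_iff_nonempty.mp (by omega)
  have hρpos : ∀ m, 0 < ρ m := fun m => (hρ m).1
  have hρlt : ∀ m, ρ m < 1 := fun m => (hρ m).2
  have hlip : ∀ m, LipschitzWith (ρ m).toNNReal (s m) := fun m =>
    LipschitzWith.of_dist_le_mul (fun x y => by
      rw [hsim, Real.coe_toNNReal _ (hρpos m).le])
  have hcont : ∀ m, Continuous (s m) := fun m => (hlip m).continuous
  have hinj : ∀ m, Function.Injective (s m) := by
    intro m x y hxy
    have h := hsim m x y
    rw [hxy, dist_self] at h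
    have : dist x y = 0 := by
      have := h.symm
      rcases mul_eq_zero.mp this with h' | h'
      · exact absurd h' (hρpos m).ne'
      · exact h'
    exact dist_eq_zero.mp this
  -- the contraction ratio bound
  set r : ℝ := Finset.univ.sup' Finset.univ_nonempty ρ with hr_def
  have hρ_le_r : ∀ m, ρ m ≤ r := fun m => Finset.le_sup' ρ (Finset.mem_univ m)
  have hr0 : 0 < r := lt_of_lt_of_le (hρpos (Classical.arbitrary _)) (hρ_le_r _)
  have hr1 : r < 1 := by
    rw [hr_def]
    exact (Finset.sup'_lt_iff _).mpr (fun m _ => hρlt m)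
  -- the Hutchinson operator
  set T : Set (EuclideanSpace ℝ (Fin n)) → Set (EuclideanSpace ℝ (Fin n)) :=
    fun A => ⋃ m, s m '' A with hT_def
  have hmemT : ∀ (A : Set (EuclideanSpace ℝ (Fin n))) x, x ∈ T A ↔ ∃ m, ∃ y ∈ A, s m y = x := by
    intro A x
    simp [hT_def]
  -- general approximation lemma
  have approx : ∀ (A K : Set (EuclideanSpace ℝ (Fin n))) (D : ℝ),
      (∀ a ∈ A, ∃ z ∈ K, dist a z ≤ D) → T K ⊆ K →
      ∀ k, ∀ x ∈ T^[k] A, ∃ z ∈ K, dist x z ≤ r ^ k * D := by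
    intro A K D hD hK k
    induction k with
    | zero => simpa using hD
    | succ k ih =>
      intro x hx
      rw [Function.iterate_succ_apply'] at hx
      obtain ⟨m, y, hy, rfl⟩ := (hmemT _ x).mp hx
      obtain ⟨z, hz, hdz⟩ := ih y hy
      refine ⟨s m z, hK ((hmemT K _).mpr ⟨m, z, hz, rfl⟩), ?_⟩
      rw [hsim]
      calc ρ m * dist y z ≤ r * (r ^ k * D) :=
            mul_le_mul (hρ_le_r m) hdz dist_nonneg hr0.le
        _ = r ^ (k + 1) * D := by ring
  have hTΓ : T Γ = Γ := hattr.symm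
  have hΓiter : ∀ k, T^[k] Γ = Γ := by
    intro k
    induction k with
    | zero => rfl
    | succ k ih => rw [Function.iterate_succ_apply', ih, hTΓ]
  -- closure O is invariant
  have hTclO : T (closure O) ⊆ closure O := by
    intro x hx
    obtain ⟨m, y, hy, rfl⟩ := (hmemT _ x).mp hx
    have h1 : s m y ∈ s m '' closure O := mem_image_of_mem _ hy
    have h2 : s m '' closure O ⊆ closure (s m '' O) :=
      image_closure_subset_closure_image (hcont m)
    have h3 : closure (s m '' O) ⊆ closure O :=
      closure_mono ((subset_iUnion (fun m => s m '' O) m).trans hOSC1)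
    exact h3 (h2 h1)
  -- Γ ⊆ closure O
  obtain ⟨z₀, hz₀⟩ := hOne
  obtain ⟨D₁', hD₁'⟩ := hΓcomp.isBounded.subset_closedBall z₀
  set D₁ : ℝ := max D₁' 1 with hD₁_def
  have hD₁pos : 0 < D₁ := lt_of_lt_of_le one_pos (le_max_right _ _)
  have hD₁ : ∀ a ∈ Γ, ∃ z ∈ closure O, dist a z ≤ D₁ := by
    intro a ha
    exact ⟨z₀, subset_closure hz₀, le_trans (mem_closedBall.mp (hD₁' ha)) (le_max_left _ _)⟩
  have happrox1 := approx Γ (closure O) D₁ hD₁ hTclO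
  have hpow : ∀ ε : ℝ, 0 < ε → ∀ D : ℝ, 0 < D → ∃ k : ℕ, r ^ k * D < ε := by
    intro ε hε D hD
    obtain ⟨k, hk⟩ := exists_pow_lt_of_lt_one (div_pos hε hD) hr1
    exact ⟨k, (lt_div_iff₀ hD).mp hk⟩
  have hΓsub : Γ ⊆ closure O := by
    intro x hx
    have : x ∈ closure (closure O) := by
      rw [Metric.mem_closure_iff]
      intro ε hε
      obtain ⟨k, hk⟩ := hpow ε hε D₁ hD₁pos
      obtain ⟨z, hz, hxz⟩ := happrox1 k x (by rw [hΓiter k]; exact hx)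
      exact ⟨z, hz, lt_of_le_of_lt hxz hk⟩
    rwa [closure_closure] at this
  -- Measure-theoretic part: O ⊆ closure (T O)
  haveI : Measure.IsAddHaarMeasure (μH[(n : ℝ)] : Measure (EuclideanSpace ℝ (Fin n))) := by
    have h : (n : ℝ) = (Module.finrank ℝ (EuclideanSpace ℝ (Fin n)) : ℝ) := by
      simp [finrank_euclideanSpace_fin]
    rw [h]
    infer_instance
  have hmeas : ∀ m, MeasurableSet (s m '' O) := fun m =>
    hOopen.measurableSet.image_of_continuousOn_injOn (hcont m).continuousOn
      ((hinj m).injOn)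
  have hscale : ∀ m (A : Set (EuclideanSpace ℝ (Fin n))),
      μH[(n : ℝ)] (s m '' A) = ((ρ m).toNNReal : ENNReal) ^ (n : ℝ) * μH[(n : ℝ)] A := by
    intro m A
    have hd : (0 : ℝ) ≤ (n : ℝ) := Nat.cast_nonneg n
    have hanti : AntilipschitzWith ((ρ m)⁻¹).toNNReal (s m) :=
      AntilipschitzWith.of_le_mul_dist (fun x y => by
        rw [hsim, Real.coe_toNNReal _ (inv_nonneg.mpr (hρpos m).le), ← mul_assoc,
          inv_mul_cancel₀ (hρpos m).ne', one_mul])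
    have h1 := (hlip m).hausdorffMeasure_image_le hd A
    have h2 := hanti.le_hausdorffMeasure_image hd A
    set c : ENNReal := ((ρ m).toNNReal : ENNReal) with hc_def
    have hc0 : c ≠ 0 := by
      simp [hc_def, Real.toNNReal_eq_zero, not_le, hρpos m]
    have hctop : c ≠ ⊤ := ENNReal.coe_ne_top
    have hcn0 : c ^ (n : ℝ) ≠ 0 := by
      simp [ENNReal.rpow_eq_zero_iff, hc0, hctop]
    have hcntop : c ^ (n : ℝ) ≠ ⊤ := by
      simp [ENNReal.rpow_eq_top_iff, hc0, hctop]
    have hcinv : ((((ρ m)⁻¹).toNNReal : NNReal)) = ((ρ m).toNNReal)⁻¹ := Real.toNNReal_inv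
    refine le_antisymm h1 ?_
    have h2' : μH[(n : ℝ)] A ≤ (c ^ (n : ℝ))⁻¹ * μH[(n : ℝ)] (s m '' A) := by
      calc μH[(n : ℝ)] A ≤ (((((ρ m)⁻¹).toNNReal : NNReal)) : ENNReal) ^ (n : ℝ) * μH[(n : ℝ)] (s m '' A) := h2
        _ = (c ^ (n : ℝ))⁻¹ * μH[(n : ℝ)] (s m '' A) := by
            rw [hcinv, ENNReal.coe_inv (by simpa [hc_def] using hc0), ← hc_def,
              ENNReal.inv_rpow]
    calc c ^ (n : ℝ) * μH[(n : ℝ)] A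
        ≤ c ^ (n : ℝ) * ((c ^ (n : ℝ))⁻¹ * μH[(n : ℝ)] (s m '' A)) := by
          gcongr
      _ = μH[(n : ℝ)] (s m '' A) := by
          rw [← mul_assoc, ENNReal.mul_inv_cancel hcn0 hcntop, one_mul]
  have hsum' : ∑ m, ((ρ m).toNNReal : ENNReal) ^ (n : ℝ) = 1 := by
    have heach : ∀ m, ((ρ m).toNNReal : ENNReal) ^ (n : ℝ) = ENNReal.ofReal (ρ m ^ n) := by
      intro m
      rw [ENNReal.rpow_natCast,
        show ((ρ m).toNNReal : ENNReal) = ENNReal.ofReal (ρ m) from rfl,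
        ← ENNReal.ofReal_pow (hρpos m).le]
    simp_rw [heach]
    rw [← ENNReal.ofReal_sum_of_nonneg (fun m _ => pow_nonneg (hρpos m).le n), hsum, ENNReal.ofReal_one]
  have hμTO : μH[(n : ℝ)] (T O) = μH[(n : ℝ)] O := by
    have hdisj : Pairwise (Function.onFun Disjoint (fun m => s m '' O)) :=
      fun m m' hmm' => hOSC2 m m' hmm'
    have h := measure_iUnion (μ := μH[(n : ℝ)]) hdisj hmeas
    rw [hT_def]
    simp only []
    rw [h, tsum_fintype]
    simp_rw [hscale]
    rw [← Finset.sum_mul, hsum', one_mul]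
  have hμOfin : μH[(n : ℝ)] O ≠ ⊤ :=
    ne_of_lt (lt_of_le_of_lt (measure_mono subset_closure)
      hObdd.isCompact_closure.measure_lt_top)
  have hbase : O ⊆ closure (T O) := by
    by_contra h
    obtain ⟨x, hxO, hx⟩ := not_subset.mp h
    have hWopen : IsOpen (O ∩ (closure (T O))ᶜ) :=
      hOopen.inter (isOpen_compl_iff.mpr isClosed_closure)
    have hWne : (O ∩ (closure (T O))ᶜ).Nonempty := ⟨x, hxO, hx⟩
    have hWsub : O ∩ (closure (T O))ᶜ ⊆ O \ T O :=
      fun y hy => ⟨hy.1, fun hyT => hy.2 (subset_closure hyT)⟩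
    have hTOsub : T O ⊆ O := hOSC1
    have hdiff : μH[(n : ℝ)] (O \ T O) = 0 := by
      rw [measure_diff hTOsub (MeasurableSet.iUnion hmeas).nullMeasurableSet
        (by rw [hμTO]; exact hμOfin), hμTO, tsub_self]
    have hpos := hWopen.measure_pos (μ := μH[(n : ℝ)]) hWne
    exact absurd (le_antisymm ((measure_mono hWsub).trans_eq hdiff) zero_le) hpos.ne'
  -- iterate: O ⊆ closure (T^[k] O)
  have hTmono_cl : ∀ X Y : Set (EuclideanSpace ℝ (Fin n)),
      X ⊆ closure Y → T X ⊆ closure (T Y) := by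
    intro X Y hXY x hx
    obtain ⟨m, y, hy, rfl⟩ := (hmemT _ x).mp hx
    have h1 : s m y ∈ s m '' closure Y := mem_image_of_mem _ (hXY hy)
    have h2 : s m '' closure Y ⊆ closure (s m '' Y) :=
      image_closure_subset_closure_image (hcont m)
    exact closure_mono (subset_iUnion (fun m => s m '' Y) m) (h2 h1)
  have hstep : ∀ k, T^[k] O ⊆ closure (T^[k + 1] O) := by
    intro k
    induction k with
    | zero => simpa using hbase
    | succ k ih =>
      rw [Function.iterate_succ_apply', Function.iterate_succ_apply' (n := k + 1)]
      exact hTmono_cl _ _ ih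
  have hchain : ∀ k, O ⊆ closure (T^[k] O) := by
    intro k
    induction k with
    | zero => simpa using subset_closure
    | succ k ih =>
      refine ih.trans ?_
      have := closure_mono (hstep k)
      rwa [closure_closure] at this
  -- approximation of iterates of O by Γ
  obtain ⟨w₀, hw₀⟩ := hΓne
  obtain ⟨D₂', hD₂'⟩ := hObdd.subset_closedBall w₀
  set D₂ : ℝ := max D₂' 1 with hD₂_def
  have hD₂pos : 0 < D₂ := lt_of_lt_of_le one_pos (le_max_right _ _)
  have hD₂ : ∀ a ∈ O, ∃ z ∈ Γ, dist a z ≤ D₂ := by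
    intro a ha
    exact ⟨w₀, hw₀, le_trans (mem_closedBall.mp (hD₂' ha)) (le_max_left _ _)⟩
  have happrox2 := approx O Γ D₂ hD₂ hTΓ.le
  have hOsubΓ : O ⊆ Γ := by
    intro x hx
    rw [← hΓcomp.isClosed.closure_eq, Metric.mem_closure_iff]
    intro ε hε
    obtain ⟨k, hk⟩ := hpow (ε / 2) (by positivity) D₂ hD₂pos
    obtain ⟨y, hy, hxy⟩ := Metric.mem_closure_iff.mp (hchain k hx) (ε / 2) (by positivity)
    obtain ⟨z, hz, hyz⟩ := happrox2 k y hy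
    refine ⟨z, hz, ?_⟩
    calc dist x z ≤ dist x y + dist y z := dist_triangle _ _ _
      _ < ε / 2 + ε / 2 := by linarith
      _ = ε := by ring
  have hΓeq : Γ = closure O :=
    le_antisymm hΓsub (closure_minimal hOsubΓ hΓcomp.isClosed)
  exact ⟨hΓeq, hOsubΓ, ⟨z₀, interior_maximal hOsubΓ hOopen hz₀⟩⟩
end

section
/- Let Γ ⊆ ℝⁿ be an n-attractor with defining IFS s₁,…,s_M, and let O be any non-empty bounded open set satisfying the OSC for this IFS. Then the Hausdorff dimension of the boundary ∂O is strictly less than n, so in particular |∂O| = 0; consequently also dim_H(∂Γ) < n and |∂Γ| = 0. -/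
open Metric MeasureTheory Set
open scoped ENNReal NNReal

set_option linter.unusedSectionVars false
set_option linter.unusedVariables false
set_option maxHeartbeats 1000000

namespace S2Aux


variable {X : Type*} [MetricSpace X] {M : ℕ}

/-- Composition of the IFS maps along a word. -/
def comp (s : Fin M → X → X) (l : List (Fin M)) (x : X) : X := l.foldr s x

@[simp] lemma comp_nil (s : Fin M → X → X) (x : X) : comp s [] x = x := rfl

@[simp] lemma comp_cons (s : Fin M → X → X) (m : Fin M) (l : List (Fin M)) (x : X) :
    comp s (m :: l) x = s m (comp s l x) := rfl

lemma comp_append (s : Fin M → X → X) (l₁ l₂ : List (Fin M)) (x : X) :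
    comp s (l₁ ++ l₂) x = comp s l₁ (comp s l₂ x) := by
  simp [comp, List.foldr_append]

/-- The contraction ratio along a word. -/
def rl (ρ : Fin M → ℝ≥0) (l : List (Fin M)) : ℝ≥0 := (l.map ρ).prod

@[simp] lemma rl_nil (ρ : Fin M → ℝ≥0) : rl ρ [] = 1 := rfl

@[simp] lemma rl_cons (ρ : Fin M → ℝ≥0) (m : Fin M) (l : List (Fin M)) :
    rl ρ (m :: l) = ρ m * rl ρ l := by simp [rl]

lemma rl_append (ρ : Fin M → ℝ≥0) (l₁ l₂ : List (Fin M)) :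
    rl ρ (l₁ ++ l₂) = rl ρ l₁ * rl ρ l₂ := by simp [rl]

lemma rl_ofFn {L : ℕ} (ρ : Fin M → ℝ≥0) (u : Fin L → Fin M) :
    rl ρ (List.ofFn u) = ∏ i, ρ (u i) := by
  simp [rl, List.map_ofFn, List.prod_ofFn]

variable {s : Fin M → X → X} {ρ : Fin M → ℝ≥0}

lemma dist_comp (hs : ∀ m x y, dist (s m x) (s m y) = ρ m * dist x y)
    (l : List (Fin M)) (x y : X) :
    dist (comp s l x) (comp s l y) = rl ρ l * dist x y := by
  induction l with
  | nil => simp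
  | cons m l ih => simp [hs, ih]; ring

lemma lipschitz_comp (hs : ∀ m x y, dist (s m x) (s m y) = ρ m * dist x y)
    (l : List (Fin M)) : LipschitzWith (rl ρ l) (comp s l) :=
  LipschitzWith.of_dist_le_mul fun x y => (dist_comp hs l x y).le

lemma rl_le_pow {r : ℝ≥0} (hr : ∀ m, ρ m ≤ r) (l : List (Fin M)) :
    rl ρ l ≤ r ^ l.length := by
  induction l with
  | nil => simp
  | cons m l ih => simpa [pow_succ, mul_comm] using mul_le_mul' (hr m) ih

lemma comp_mem {B : Set X} (hB : ∀ m, s m '' B ⊆ B) (l : List (Fin M)) {b : X}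
    (hb : b ∈ B) : comp s l b ∈ B := by
  induction l with
  | nil => simpa
  | cons m l ih => exact hB m ⟨comp s l b, ih, rfl⟩

lemma comp_image_subset {B : Set X} (hB : ∀ m, s m '' B ⊆ B) (l : List (Fin M)) :
    comp s l '' B ⊆ B := by
  rintro - ⟨b, hb, rfl⟩
  exact comp_mem hB l hb

/-- Any point of a set `K ⊆ ⋃ s m '' K` lies in arbitrarily deep cylinders. -/
lemma chain {K : Set X} (hK : K ⊆ ⋃ m, s m '' K) {x : X} (hx : x ∈ K) (k : ℕ) :
    ∃ l : List (Fin M), l.length = k ∧ x ∈ comp s l '' K := by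
  induction k with
  | zero => exact ⟨[], rfl, ⟨x, hx, rfl⟩⟩
  | succ k ih =>
    obtain ⟨l, hlen, y, hyK, hyx⟩ := ih
    obtain ⟨m, z, hzK, rfl⟩ := by simpa using hK hyK
    exact ⟨l ++ [m], by simp [hlen], z, hzK, by rw [comp_append]; simpa [hyx]⟩

/-- A bounded set sub-invariant under the IFS is contained in any closed non-empty
invariant set. -/
lemma subset_of_invariant [Nonempty (Fin M)]
    (hs : ∀ m x y, dist (s m x) (s m y) = ρ m * dist x y)
    (hρ : ∀ m, ρ m < 1)
    {A B : Set X} (hA : A ⊆ ⋃ m, s m '' A) (hAb : Bornology.IsBounded A)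
    (hBcl : IsClosed B) (hBne : B.Nonempty) (hBinv : ∀ m, s m '' B ⊆ B) : A ⊆ B := by
  obtain ⟨b, hb⟩ := hBne
  set r : ℝ≥0 := Finset.univ.sup ρ with hrdef
  have hrle : ∀ m, ρ m ≤ r := fun m => Finset.le_sup (Finset.mem_univ m)
  have hrlt : r < 1 := by
    rw [hrdef, Finset.sup_lt_iff (by norm_num : (0:ℝ≥0) < 1)]
    exact fun m _ => hρ m
  obtain ⟨C, hC⟩ := hAb.subset_closedBall b
  intro x hx
  rw [← hBcl.closure_eq]
  rw [Metric.mem_closure_iff]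
  intro ε hε
  have hten : Filter.Tendsto (fun k : ℕ => (r:ℝ) ^ k * C) Filter.atTop (nhds 0) := by
    simpa using (tendsto_pow_atTop_nhds_zero_of_lt_one r.coe_nonneg hrlt).mul_const C
  obtain ⟨k, hk⟩ := ((hten.eventually (eventually_lt_nhds hε)).and
    (Filter.eventually_atTop.2 ⟨0, fun _ _ => trivial⟩)).exists
  obtain ⟨l, hlen, a, haA, hax⟩ := chain hA hx k
  refine ⟨comp s l b, comp_mem hBinv l hb, ?_⟩
  have h1 : dist x (comp s l b) = rl ρ l * dist a b := by rw [← hax]; exact dist_comp hs l a b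
  have h2 : dist a b ≤ C := hC haA
  have h3 : (rl ρ l : ℝ) ≤ (r:ℝ) ^ k := by
    have := rl_le_pow hrle l
    rw [hlen] at this
    exact_mod_cast this
  calc dist x (comp s l b) = rl ρ l * dist a b := h1
    _ ≤ (r:ℝ) ^ k * C := by
        apply mul_le_mul h3 h2 dist_nonneg (by positivity)
    _ < ε := hk.1


lemma rl_pos (hρ : ∀ m, 0 < ρ m) (l : List (Fin M)) : 0 < rl ρ l := by
  induction l with
  | nil => simp
  | cons m l ih => simpa [rl_cons] using mul_pos (hρ m) ih

/-- Core covering estimate: a compact-ish set `F ⊆ K` which is sub-self-similar and avoids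
the open cylinder `comp s (ofFn w) '' K ⊆ O`, `F ∩ O = ∅`, has Hausdorff dimension `< n`. -/
lemma dimH_lt_of_word
    {n : ℕ} (hn : 1 ≤ n) (hM : 0 < M)
    {s : Fin M → EuclideanSpace ℝ (Fin n) → EuclideanSpace ℝ (Fin n)}
    {ρ : Fin M → ℝ≥0}
    (hρ0 : ∀ m, 0 < ρ m) (hρ1 : ∀ m, ρ m < 1)
    (hs : ∀ m x y, dist (s m x) (s m y) = ρ m * dist x y)
    (hsum : ∑ m, (ρ m : ℝ) ^ n = 1)
    {K F O : Set (EuclideanSpace ℝ (Fin n))}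
    (hKb : Bornology.IsBounded K)
    (hFK : F ⊆ K)
    (hFs : F ⊆ ⋃ m, s m '' F)
    (hFO : Disjoint F O)
    {L : ℕ} (hL : 1 ≤ L) (w : Fin L → Fin M)
    (hw : comp s (List.ofFn w) '' K ⊆ O) :
    dimH F < (n : ℝ≥0∞) := by
  classical
  haveI : Nonempty (Fin M) := ⟨⟨0, hM⟩⟩
  -- single block covering
  have hblock : ∀ k : ℕ, F ⊆ ⋃ u : Fin k → Fin M, comp s (List.ofFn u) '' F := by
    intro k
    induction k with
    | zero =>
      intro x hx
      refine mem_iUnion.2 ⟨fun i => i.elim0, ⟨x, hx, ?_⟩⟩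
      simp
    | succ k ih =>
      intro x hx
      obtain ⟨m, y, hyF, rfl⟩ := by simpa using hFs hx
      obtain ⟨u, z, hzF, hz⟩ := by simpa using ih hyF
      refine mem_iUnion.2 ⟨Fin.cons m u, ⟨z, hzF, ?_⟩⟩
      have hofn : List.ofFn (Fin.cons m u : Fin (k+1) → Fin M) = m :: List.ofFn u := by
        rw [List.ofFn_succ]
        simp
      rw [hofn, comp_cons, hz]
  -- excluded block covering
  set T := {u : Fin L → Fin M // u ≠ w} with hT
  have hTcover : F ⊆ ⋃ u : T, comp s (List.ofFn u.1) '' F := by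
    intro x hx
    obtain ⟨u, hu⟩ := mem_iUnion.1 (hblock L hx)
    by_cases h : u = w
    · subst h
      obtain ⟨z, hzF, hz⟩ := hu
      exact absurd (hw ⟨z, hFK hzF, hz⟩) fun hO => (Set.disjoint_left.1 hFO hx) hO
    · exact mem_iUnion.2 ⟨⟨u, h⟩, hu⟩
  -- multi-block words
  let bl : ∀ {k : ℕ}, (Fin k → T) → List (Fin M) :=
    fun {k} σ => (List.ofFn fun i => List.ofFn ((σ i).1 : Fin L → Fin M)).flatten
  have hbl_cons : ∀ {k : ℕ} (a : T) (σ : Fin k → T),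
      bl (Fin.cons (α := fun _ => T) a σ) = List.ofFn a.1 ++ bl σ := by
    intro k a σ
    show (List.ofFn fun i =>
      List.ofFn (((Fin.cons (α := fun _ => T) a σ) i).1 : Fin L → Fin M)).flatten = _
    rw [List.ofFn_succ]
    simp [bl]
  have hmulti : ∀ k : ℕ, F ⊆ ⋃ σ : Fin k → T, comp s (bl σ) '' F := by
    intro k
    induction k with
    | zero =>
      intro x hx
      refine mem_iUnion.2 ⟨fun i => i.elim0, ⟨x, hx, ?_⟩⟩
      show comp s (List.ofFn _).flatten x = x
      simp
    | succ k ih =>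
      intro x hx
      obtain ⟨a, y, hyF, hyx⟩ := mem_iUnion.1 (hTcover hx)
      obtain ⟨σ, z, hzF, hzy⟩ := mem_iUnion.1 (ih hyF)
      refine mem_iUnion.2 ⟨Fin.cons a σ, ⟨z, hzF, ?_⟩⟩
      rw [hbl_cons, comp_append, hzy, hyx]
  have hrl_bl : ∀ {k : ℕ} (σ : Fin k → T),
      rl ρ (bl σ) = ∏ i, rl ρ (List.ofFn ((σ i).1)) := by
    intro k
    induction k with
    | zero =>
      intro σ
      show rl ρ (List.ofFn _).flatten = _
      simp
    | succ k ih =>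
      intro σ
      have hσ : σ = Fin.cons (α := fun _ => T) (σ 0) (Fin.tail σ) :=
        (Fin.cons_self_tail σ).symm
      rw [hσ, hbl_cons, rl_append, ih, Fin.prod_univ_succ]
      simp [Fin.tail]
  -- maximal contraction ratio
  set r : ℝ≥0 := Finset.univ.sup ρ with hrdef
  have hrle : ∀ m, ρ m ≤ r := fun m => Finset.le_sup (Finset.mem_univ m)
  have hrlt : r < 1 := by
    rw [hrdef, Finset.sup_lt_iff (by norm_num : (0:ℝ≥0) < 1)]
    exact fun m _ => hρ1 m
  -- weights of blocks
  set q : (Fin L → Fin M) → ℝ≥0 := fun u => rl ρ (List.ofFn u) with hq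
  have hq_pos : ∀ u, 0 < q u := fun u => rl_pos hρ0 _
  have htotal : ∑ u : Fin L → Fin M, ((q u : ℝ)) ^ n = 1 := by
    have h1 : (∑ m, ((ρ m : ℝ)) ^ n) ^ L = 1 := by rw [hsum]; simp
    rw [Fintype.sum_pow (fun m => ((ρ m : ℝ)) ^ n) L] at h1
    rw [← h1]
    refine Finset.sum_congr rfl fun u _ => ?_
    rw [hq]
    simp only [rl_ofFn]
    push_cast
    rw [← Finset.prod_pow]
  -- the pressure-type function and continuity in the exponent
  set φ : ℝ → ℝ := fun e => ∑ u ∈ Finset.univ.erase w, ((q u : ℝ)) ^ e with hφ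
  have hφcont : Continuous φ := by
    refine continuous_finset_sum _ fun u _ => ?_
    have hc2 : Continuous fun e : ℝ => Real.exp (Real.log (q u) * e) :=
      Real.continuous_exp.comp (continuous_const.mul continuous_id)
    exact hc2.congr fun e => (Real.rpow_def_of_pos (by exact_mod_cast hq_pos u) e).symm
  have hφn : φ (n : ℝ) < 1 := by
    have hsplit : ∑ u ∈ Finset.univ.erase w, ((q u:ℝ))^n + ((q w:ℝ))^n = 1 := by
      rw [Finset.sum_erase_add _ _ (Finset.mem_univ w)]
      exact htotal
    have hφval : φ (n:ℝ) = ∑ u ∈ Finset.univ.erase w, ((q u:ℝ))^n := by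
      rw [hφ]
      refine Finset.sum_congr rfl fun u _ => ?_
      rw [Real.rpow_natCast]
    have hqw : 0 < ((q w:ℝ))^n := pow_pos (by exact_mod_cast hq_pos w) n
    rw [hφval]
    linarith
  -- choose an exponent d < n with φ d < 1
  have hev : ∀ᶠ e in nhds ((n:ℝ)), φ e < 1 :=
    hφcont.continuousAt.eventually (eventually_lt_nhds hφn)
  obtain ⟨ε, hε, hball⟩ := Metric.eventually_nhds_iff.1 hev
  set δ : ℝ := min (ε/2) (1/2) with hδ
  have hδpos : 0 < δ := lt_min (by linarith) (by norm_num)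
  have hδle : δ ≤ 1/2 := min_le_right _ _
  set d : ℝ := (n:ℝ) - δ with hd
  have hn1 : (1:ℝ) ≤ (n:ℝ) := by exact_mod_cast hn
  have hd0 : 0 ≤ d := by rw [hd]; linarith
  have hdn : d < (n:ℝ) := by rw [hd]; linarith
  have hφd : φ d < 1 := by
    apply hball
    rw [hd, Real.dist_eq]
    have habs : |(n:ℝ) - δ - (n:ℝ)| = δ := by
      rw [show (n:ℝ) - δ - (n:ℝ) = -δ by ring, abs_neg, abs_of_pos hδpos]
    rw [habs]
    calc δ ≤ ε/2 := min_le_left _ _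
      _ < ε := by linarith
  -- the key summability bound in ℝ≥0∞
  have hc : (∑ a : T, ((q a.1 : ℝ≥0∞)) ^ d) ≤ 1 := by
    have h1 : ∀ a : T, ((q a.1 : ℝ≥0∞)) ^ d = ((q a.1 ^ d : ℝ≥0) : ℝ≥0∞) :=
      fun a => (ENNReal.coe_rpow_of_ne_zero (hq_pos a.1).ne' d).symm
    rw [Finset.sum_congr rfl (fun a _ => h1 a), ← ENNReal.coe_finset_sum,
      ← ENNReal.coe_one, ENNReal.coe_le_coe, ← NNReal.coe_le_coe]
    push_cast
    have hsub : ∑ a : T, ((q a.1 : ℝ)) ^ d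
        = ∑ u ∈ Finset.univ.erase w, ((q u : ℝ)) ^ d :=
      (Finset.sum_subtype (p := fun u => u ≠ w) (Finset.univ.erase w)
        (fun u => by simp [Finset.mem_erase]) (fun u => ((q u:ℝ))^d)).symm
    calc ∑ a : T, ((q a.1 : ℝ)) ^ d
        = ∑ u ∈ Finset.univ.erase w, ((q u : ℝ)) ^ d := hsub
      _ = φ d := rfl
      _ ≤ 1 := hφd.le
  -- covering estimate for the Hausdorff measure
  have hdiam : EMetric.diam K ≠ ∞ := hKb.ediam_ne_top
  set aa : ℝ≥0 := r ^ L with haa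
  have ha1 : aa < 1 := pow_lt_one₀ r.2 hrlt (by omega)
  have hrk : Filter.Tendsto (fun k : ℕ => ((aa ^ k : ℝ≥0) : ℝ≥0∞) * EMetric.diam K)
      Filter.atTop (nhds 0) := by
    have h0 : Filter.Tendsto (fun k : ℕ => ((aa ^ k : ℝ≥0) : ℝ≥0∞)) Filter.atTop (nhds 0) := by
      rw [← ENNReal.coe_zero]
      exact ENNReal.tendsto_coe.2 (NNReal.tendsto_pow_atTop_nhds_zero_of_lt_one ha1)
    simpa using ENNReal.Tendsto.mul_const h0 (Or.inr hdiam)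
  have hrlbound : ∀ (k : ℕ) (σ : Fin k → T), rl ρ (bl σ) ≤ aa ^ k := by
    intro k σ
    rw [hrl_bl σ]
    calc ∏ i, rl ρ (List.ofFn ((σ i).1)) ≤ ∏ _i : Fin k, aa := by
          refine Finset.prod_le_prod' fun i _ => ?_
          have h := rl_le_pow hrle (List.ofFn ((σ i).1))
          simpa [List.length_ofFn, haa] using h
      _ = aa ^ k := by simp
  have hμ : μH[d] F ≤ Filter.liminf
      (fun k : ℕ => ∑ σ : Fin k → T, EMetric.diam (comp s (bl σ) '' K) ^ d) Filter.atTop := by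
    refine MeasureTheory.Measure.hausdorffMeasure_le_liminf_sum d F
      (fun k => ((aa ^ k : ℝ≥0) : ℝ≥0∞) * EMetric.diam K) hrk
      (fun k σ => comp s (bl σ) '' K) ?_ ?_
    · refine Filter.Eventually.of_forall fun k σ => ?_
      calc EMetric.diam (comp s (bl σ) '' K) ≤ (rl ρ (bl σ) : ℝ≥0∞) * EMetric.diam K :=
            (lipschitz_comp hs (bl σ)).ediam_image_le K
        _ ≤ ((aa ^ k : ℝ≥0) : ℝ≥0∞) * EMetric.diam K :=
            mul_le_mul_left (ENNReal.coe_le_coe.2 (hrlbound k σ)) _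
    · exact Filter.Eventually.of_forall fun k =>
        (hmulti k).trans (Set.iUnion_mono fun σ => Set.image_mono hFK)
  have hsumb : ∀ k : ℕ, (∑ σ : Fin k → T, EMetric.diam (comp s (bl σ) '' K) ^ d)
      ≤ (EMetric.diam K) ^ d := by
    intro k
    have h2 : ∀ σ : Fin k → T, ((rl ρ (bl σ) : ℝ≥0∞)) ^ d
        = ∏ i, ((q ((σ i).1) : ℝ≥0∞)) ^ d := by
      intro σ
      rw [← ENNReal.coe_rpow_of_ne_zero (rl_pos hρ0 _).ne' d, hrl_bl σ,
        ← NNReal.finset_prod_rpow, ENNReal.coe_finset_prod]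
      refine Finset.prod_congr rfl fun i _ => ?_
      rw [ENNReal.coe_rpow_of_ne_zero (hq_pos _).ne' d]
    calc ∑ σ : Fin k → T, EMetric.diam (comp s (bl σ) '' K) ^ d
        ≤ ∑ σ : Fin k → T, ((rl ρ (bl σ) : ℝ≥0∞) * EMetric.diam K) ^ d := by
          refine Finset.sum_le_sum fun σ _ => ?_
          exact ENNReal.rpow_le_rpow ((lipschitz_comp hs (bl σ)).ediam_image_le K) hd0
      _ = ∑ σ : Fin k → T, (rl ρ (bl σ) : ℝ≥0∞) ^ d * (EMetric.diam K) ^ d :=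
          Finset.sum_congr rfl fun σ _ => ENNReal.mul_rpow_of_nonneg _ _ hd0
      _ = (∑ σ : Fin k → T, (rl ρ (bl σ) : ℝ≥0∞) ^ d) * (EMetric.diam K) ^ d :=
          (Finset.sum_mul _ _ _).symm
      _ ≤ 1 * (EMetric.diam K) ^ d := by
          refine mul_le_mul_left ?_ _
          calc ∑ σ : Fin k → T, (rl ρ (bl σ) : ℝ≥0∞) ^ d
              = ∑ σ : Fin k → T, ∏ i, ((q ((σ i).1) : ℝ≥0∞)) ^ d :=
                Finset.sum_congr rfl fun σ _ => h2 σ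
            _ = (∑ a : T, ((q a.1 : ℝ≥0∞)) ^ d) ^ k :=
                (Fintype.sum_pow (fun a : T => ((q a.1 : ℝ≥0∞)) ^ d) k).symm
            _ ≤ 1 := pow_le_one' hc k
      _ = (EMetric.diam K) ^ d := one_mul _
  have hμF : μH[d] F ≤ (EMetric.diam K) ^ d := by
    refine hμ.trans ?_
    exact Filter.liminf_le_of_frequently_le
      (Filter.Frequently.of_forall hsumb)
  have hμFne : μH[d] F ≠ ∞ :=
    ne_top_of_le_ne_top (ENNReal.rpow_ne_top_of_nonneg hd0 hdiam) hμF
  set dnn : ℝ≥0 := ⟨d, hd0⟩ with hdnn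
  have hμFne' : μH[(dnn : ℝ)] F ≠ ∞ := hμFne
  have hdim : dimH F ≤ (dnn : ℝ≥0∞) :=
    dimH_le_of_hausdorffMeasure_ne_top hμFne'
  refine lt_of_le_of_lt hdim ?_
  have hlt : dnn < (n : ℝ≥0) := by
    rw [← NNReal.coe_lt_coe]
    push_cast [hdnn]
    exact hdn
  calc (dnn : ℝ≥0∞) < ((n : ℝ≥0) : ℝ≥0∞) := ENNReal.coe_lt_coe.2 hlt
    _ = (n : ℝ≥0∞) := by simp



variable {n : ℕ}

/-- Lebesgue measure is absolutely continuous w.r.t. `n`-dimensional Hausdorff measure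
on `n`-dimensional Euclidean space. -/
lemma volume_ac (n : ℕ) :
    (volume : Measure (EuclideanSpace ℝ (Fin n))) ≪ μH[(n:ℝ)] := by
  refine Measure.AbsolutelyContinuous.mk fun A hA h0 => ?_
  set φ := (MeasurableEquiv.toLp 2 (Fin n → ℝ)).symm with hφ
  have hφl : LipschitzWith 1 (⇑φ) := by
    exact PiLp.lipschitzWith_ofLp 2 _
  have h1 : μH[(n:ℝ)] (⇑φ '' A) ≤ (1:ℝ≥0∞) ^ (n:ℝ) * μH[(n:ℝ)] A :=
    hφl.hausdorffMeasure_image_le (by positivity) A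
  rw [h0] at h1
  simp only [ENNReal.one_rpow, one_mul, le_zero_iff] at h1
  have hpi : (μH[(n:ℝ)] : Measure (Fin n → ℝ)) = volume := by
    have := hausdorffMeasure_pi_real (ι := Fin n)
    simpa using this
  have h2 : volume (⇑φ '' A) = 0 := by rw [← hpi]; exact h1
  have h3 : volume A = volume (⇑φ ⁻¹' (⇑φ '' A)) := by
    rw [Set.preimage_image_eq A φ.injective]
  rw [h3]
  rw [(EuclideanSpace.volume_preserving_symm_measurableEquiv_toLp (Fin n)).measure_preimage
    (φ.measurableSet_image.2 hA).nullMeasurableSet]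
  exact h2

/-- Hausdorff `n`-measure of bounded sets in `n`-dimensional Euclidean space is finite. -/
lemma hausdorff_ne_top {A : Set (EuclideanSpace ℝ (Fin n))} (hA : Bornology.IsBounded A) :
    μH[(n:ℝ)] A ≠ ∞ := by
  set φ := (MeasurableEquiv.toLp 2 (Fin n → ℝ)).symm with hφ
  have hφc : ⇑φ = @WithLp.ofLp 2 (Fin n → ℝ) := rfl
  have hφa : AntilipschitzWith ((Fintype.card (Fin n) : ℝ≥0) ^ (1 / (2:ℝ≥0∞)).toReal) (⇑φ) := by rw [hφc]; exact PiLp.antilipschitzWith_ofLp 2 _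
  have hφl : LipschitzWith 1 (⇑φ) := by rw [hφc]; exact PiLp.lipschitzWith_ofLp 2 _
  have h1 := hφa.le_hausdorffMeasure_image (by positivity : (0:ℝ) ≤ (n:ℝ)) A
  have hpi : (μH[(n:ℝ)] : Measure (Fin n → ℝ)) = volume := by
    have := hausdorffMeasure_pi_real (ι := Fin n)
    simpa using this
  rw [hpi] at h1
  have hb : Bornology.IsBounded (⇑φ '' A) := hφl.isBounded_image hA
  have h2 : volume (⇑φ '' A) < ∞ := hb.measure_lt_top
  refine ne_top_of_le_ne_top ?_ h1
  exact ENNReal.mul_ne_top (ENNReal.rpow_ne_top_of_nonneg (by positivity) ENNReal.coe_ne_top)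
    h2.ne

/-- A similarity with ratio `r` scales `d`-dimensional Hausdorff measure by `r ^ d`. -/
lemma hausdorff_image (f : EuclideanSpace ℝ (Fin n) → EuclideanSpace ℝ (Fin n)) (r : ℝ≥0)
    (hr : 0 < r) (hf : ∀ x y, dist (f x) (f y) = r * dist x y) {d : ℝ} (hd : 0 ≤ d)
    (A : Set (EuclideanSpace ℝ (Fin n))) :
    μH[d] (f '' A) = (r : ℝ≥0∞) ^ d * μH[d] A := by
  have hlip : LipschitzWith r f := LipschitzWith.of_dist_le_mul fun x y => (hf x y).le
  have hanti : AntilipschitzWith r⁻¹ f := by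
    refine AntilipschitzWith.of_le_mul_dist fun x y => ?_
    rw [hf, NNReal.coe_inv, ← mul_assoc, inv_mul_cancel₀ (by exact_mod_cast hr.ne')]
    simp
  have h1 : μH[d] (f '' A) ≤ (r : ℝ≥0∞) ^ d * μH[d] A := hlip.hausdorffMeasure_image_le hd A
  have h2 : μH[d] A ≤ ((r⁻¹ : ℝ≥0) : ℝ≥0∞) ^ d * μH[d] (f '' A) :=
    hanti.le_hausdorffMeasure_image hd A
  refine le_antisymm h1 ?_
  have hrne : ((r : ℝ≥0∞)) ^ d ≠ 0 := by
    simp only [ne_eq, ENNReal.rpow_eq_zero_iff, not_or, not_and, not_lt]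
    constructor
    · intro h; exact absurd h (by simp [hr.ne'])
    · intro h; exact absurd h (by simp)
  have hrnet : ((r : ℝ≥0∞)) ^ d ≠ ∞ :=
    ENNReal.rpow_ne_top_of_nonneg hd ENNReal.coe_ne_top
  have hinv : ((r⁻¹ : ℝ≥0) : ℝ≥0∞) ^ d = ((r : ℝ≥0∞) ^ d)⁻¹ := by
    rw [ENNReal.coe_inv hr.ne', ENNReal.inv_rpow]
  calc (r : ℝ≥0∞) ^ d * μH[d] A
      ≤ (r : ℝ≥0∞) ^ d * (((r⁻¹ : ℝ≥0) : ℝ≥0∞) ^ d * μH[d] (f '' A)) := by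
        exact mul_le_mul_right h2 _
    _ = μH[d] (f '' A) := by
        rw [hinv, ← mul_assoc, ENNReal.mul_inv_cancel hrne hrnet, one_mul]

end S2Aux

/-- If Γ is an n-attractor with defining IFS s₁,…,s_M and O is any
non-empty bounded open set satisfying the OSC for this IFS, then dim_H(∂O) < n,
so |∂O| = 0; consequently also dim_H(∂Γ) < n and |∂Γ| = 0. -/
theorem statement2
    (n : ℕ) (hn : 1 ≤ n)
    (M : ℕ) (hM : 2 ≤ M)
    (s : Fin M → EuclideanSpace ℝ (Fin n) → EuclideanSpace ℝ (Fin n))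
    (ρ : Fin M → ℝ)
    (hρ : ∀ m, ρ m ∈ Set.Ioo (0 : ℝ) 1)
    (hsim : ∀ m x y, dist (s m x) (s m y) = ρ m * dist x y)
    (Γ : Set (EuclideanSpace ℝ (Fin n)))
    (hΓne : Γ.Nonempty) (hΓcomp : IsCompact Γ)
    (hattr : Γ = ⋃ m, s m '' Γ)
    (hsum : ∑ m, ρ m ^ n = 1)
    (O : Set (EuclideanSpace ℝ (Fin n)))
    (hOne : O.Nonempty) (hOopen : IsOpen O) (hObdd : Bornology.IsBounded O)
    (hOSC1 : (⋃ m, s m '' O) ⊆ O)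
    (hOSC2 : ∀ m m' : Fin M, m ≠ m' → Disjoint (s m '' O) (s m' '' O)) :
    dimH (frontier O) < (n : ℝ≥0∞) ∧ volume (frontier O) = 0 ∧
    dimH (frontier Γ) < (n : ℝ≥0∞) ∧ volume (frontier Γ) = 0 := by
  classical
  haveI : Nonempty (Fin M) := ⟨⟨0, by omega⟩⟩
  -- NNReal ratios
  set ρ' : Fin M → ℝ≥0 := fun m => ⟨ρ m, (hρ m).1.le⟩ with hρ'
  have hρ0 : ∀ m, 0 < ρ' m := fun m => by
    rw [← NNReal.coe_lt_coe]; exact (hρ m).1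
  have hρ1 : ∀ m, ρ' m < 1 := fun m => by
    rw [← NNReal.coe_lt_coe]; exact (hρ m).2
  have hsim' : ∀ m x y, dist (s m x) (s m y) = (ρ' m : ℝ) * dist x y := hsim
  have hsum' : ∑ m, ((ρ' m : ℝ)) ^ n = 1 := hsum
  -- basic facts about the maps
  have hlip : ∀ m, LipschitzWith (ρ' m) (s m) := fun m =>
    LipschitzWith.of_dist_le_mul fun x y => (hsim' m x y).le
  have hcont : ∀ m, Continuous (s m) := fun m => (hlip m).continuous
  have hanti : ∀ m, AntilipschitzWith (ρ' m)⁻¹ (s m) := fun m => by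
    refine AntilipschitzWith.of_le_mul_dist fun x y => ?_
    rw [hsim' m, NNReal.coe_inv, ← mul_assoc,
      inv_mul_cancel₀ (by exact_mod_cast (hρ0 m).ne')]
    simp
  have hemb : ∀ m, MeasurableEmbedding (s m) := fun m =>
    ((hanti m).isClosedEmbedding (hlip m).uniformContinuous).measurableEmbedding
  -- the closure of O
  set K : Set (EuclideanSpace ℝ (Fin n)) := closure O with hK
  have hKb : Bornology.IsBounded K := hObdd.closure
  have hKcl : IsClosed K := isClosed_closure
  have hKcomp : IsCompact K := Metric.isCompact_of_isClosed_isBounded hKcl hKb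
  have hOK : O ⊆ K := subset_closure
  have hKne : K.Nonempty := hOne.mono hOK
  have hsO : ∀ m, s m '' O ⊆ O := fun m a ha => hOSC1 (mem_iUnion.2 ⟨m, ha⟩)
  have hsK : ∀ m, s m '' K ⊆ K := fun m =>
    calc s m '' K ⊆ closure (s m '' O) := image_closure_subset_closure_image (hcont m)
      _ ⊆ closure O := closure_mono (hsO m)
      _ = K := rfl
  -- Hausdorff measure scaling
  have hscale : ∀ m (A : Set (EuclideanSpace ℝ (Fin n))),
      μH[(n:ℝ)] (s m '' A) = ((ρ' m : ℝ≥0∞)) ^ (n:ℝ) * μH[(n:ℝ)] A := fun m A =>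
    S2Aux.hausdorff_image (s m) (ρ' m) (hρ0 m) (hsim' m) (by positivity) A
  -- the images of O fill O up to measure zero
  have hUmeas : ∀ m, MeasurableSet (s m '' O) := fun m =>
    (hemb m).measurableSet_image.2 hOopen.measurableSet
  have hdisj : Pairwise (Function.onFun Disjoint fun m => s m '' O) :=
    fun m m' h => hOSC2 m m' h
  have hsumNN : (∑ m, ρ' m ^ n) = 1 := by
    have h1 : ((∑ m, ρ' m ^ n : ℝ≥0) : ℝ) = 1 := by push_cast; exact hsum
    exact_mod_cast h1
  have hsumE : (∑ m, ((ρ' m : ℝ≥0∞)) ^ (n:ℝ)) = 1 := by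
    have h1 : ∀ m, ((ρ' m : ℝ≥0∞)) ^ (n:ℝ) = ((ρ' m ^ n : ℝ≥0) : ℝ≥0∞) := fun m => by
      rw [ENNReal.rpow_natCast, ENNReal.coe_pow]
    rw [Finset.sum_congr rfl fun m _ => h1 m, ← ENNReal.coe_finset_sum, hsumNN,
      ENNReal.coe_one]
  have hμO_ne : μH[(n:ℝ)] O ≠ ∞ := S2Aux.hausdorff_ne_top hObdd
  have hUval : μH[(n:ℝ)] (⋃ m, s m '' O) = μH[(n:ℝ)] O := by
    rw [measure_iUnion hdisj hUmeas, tsum_fintype]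
    calc (∑ m, μH[(n:ℝ)] (s m '' O))
        = ∑ m, ((ρ' m : ℝ≥0∞)) ^ (n:ℝ) * μH[(n:ℝ)] O :=
          Finset.sum_congr rfl fun m _ => hscale m O
      _ = (∑ m, ((ρ' m : ℝ≥0∞)) ^ (n:ℝ)) * μH[(n:ℝ)] O := (Finset.sum_mul _ _ _).symm
      _ = μH[(n:ℝ)] O := by rw [hsumE, one_mul]
  have hdiff0 : μH[(n:ℝ)] (O \ ⋃ m, s m '' O) = 0 := by
    rw [measure_diff hOSC1 (MeasurableSet.iUnion hUmeas).nullMeasurableSet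
      (by rw [hUval]; exact hμO_ne), hUval, tsub_self]
  have hvol0 : volume (O \ ⋃ m, s m '' O) = 0 := S2Aux.volume_ac n hdiff0
  -- O is covered by the images of K
  have hOcover : O ⊆ ⋃ m, s m '' K := by
    by_contra hcon
    obtain ⟨x, hxO, hxn⟩ := not_subset.1 hcon
    have hVopen : IsOpen (O \ ⋃ m, s m '' K) :=
      hOopen.sdiff (isClosed_iUnion_of_finite fun m => (hKcomp.image (hcont m)).isClosed)
    have hVne : (O \ ⋃ m, s m '' K).Nonempty := ⟨x, hxO, hxn⟩
    have hVsub : (O \ ⋃ m, s m '' K) ⊆ O \ ⋃ m, s m '' O :=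
      diff_subset_diff_right (iUnion_mono fun m => image_mono hOK)
    have hV0 : volume (O \ ⋃ m, s m '' K) = 0 := measure_mono_null hVsub hvol0
    exact absurd hV0 (hVopen.measure_pos volume hVne).ne'
  -- K is fully invariant
  have hKfix : K = ⋃ m, s m '' K := by
    refine subset_antisymm ?_ (iUnion_subset fun m => hsK m)
    rw [hK]
    exact closure_minimal hOcover
      (isClosed_iUnion_of_finite fun m => (hKcomp.image (hcont m)).isClosed)
  -- the attractor is the closure of O
  have hΓsubK : Γ ⊆ K :=
    S2Aux.subset_of_invariant hsim' hρ1 (subset_of_eq hattr) hΓcomp.isBounded hKcl hKne hsK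
  have hKsubΓ : K ⊆ Γ :=
    S2Aux.subset_of_invariant hsim' hρ1 (subset_of_eq hKfix) hKb hΓcomp.isClosed hΓne
      (fun m => (subset_iUnion (fun m' => s m' '' Γ) m).trans (subset_of_eq hattr.symm))
  have hΓK : Γ = K := subset_antisymm hΓsubK hKsubΓ
  -- the boundary set
  set F : Set (EuclideanSpace ℝ (Fin n)) := K \ O with hF
  have hFs : F ⊆ ⋃ m, s m '' F := by
    rintro x ⟨hxK, hxO⟩
    obtain ⟨m, y, hyK, rfl⟩ := by simpa using hKfix.subset hxK
    exact mem_iUnion.2 ⟨m, ⟨y, ⟨hyK, fun hyO => hxO (hsO m ⟨y, hyO, rfl⟩)⟩, rfl⟩⟩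
  have hFK : F ⊆ K := diff_subset
  have hFO : Disjoint F O := disjoint_sdiff_left
  -- find a word mapping K inside O
  obtain ⟨x0, hx0⟩ := hOne
  obtain ⟨ε, hε, hball⟩ := Metric.isOpen_iff.1 hOopen x0 hx0
  set r : ℝ≥0 := Finset.univ.sup ρ' with hrdef
  have hrle : ∀ m, ρ' m ≤ r := fun m => Finset.le_sup (Finset.mem_univ m)
  have hrlt : r < 1 := by
    rw [hrdef, Finset.sup_lt_iff (by norm_num : (0:ℝ≥0) < 1)]
    exact fun m _ => hρ1 m
  have hten : Filter.Tendsto (fun k : ℕ => (r:ℝ) ^ k * Metric.diam K)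
      Filter.atTop (nhds 0) := by
    simpa using
      (tendsto_pow_atTop_nhds_zero_of_lt_one r.coe_nonneg hrlt).mul_const (Metric.diam K)
  obtain ⟨k0, hk0⟩ := (hten.eventually (eventually_lt_nhds hε)).exists
  set k1 := max k0 1 with hk1def
  have hk1 : (r:ℝ) ^ k1 * Metric.diam K < ε := by
    have hle : (r:ℝ) ^ k1 ≤ (r:ℝ) ^ k0 :=
      pow_le_pow_of_le_one r.coe_nonneg hrlt.le (le_max_left _ _)
    calc (r:ℝ) ^ k1 * Metric.diam K ≤ (r:ℝ) ^ k0 * Metric.diam K :=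
          mul_le_mul_of_nonneg_right hle Metric.diam_nonneg
      _ < ε := hk0
  obtain ⟨l, hlen, y0, hy0K, hy0⟩ := S2Aux.chain hKfix.subset (hOK hx0) k1
  have himg : S2Aux.comp s l '' K ⊆ O := by
    rintro z ⟨zK, hzK, rfl⟩
    apply hball
    rw [mem_ball, ← hy0, S2Aux.dist_comp hsim' l]
    have h1 : (S2Aux.rl ρ' l : ℝ) ≤ (r:ℝ) ^ k1 := by
      have := S2Aux.rl_le_pow hrle l
      rw [hlen] at this
      exact_mod_cast this
    calc (S2Aux.rl ρ' l : ℝ) * dist zK y0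
        ≤ (r:ℝ) ^ k1 * Metric.diam K :=
          mul_le_mul h1 (Metric.dist_le_diam_of_mem hKb hzK hy0K) dist_nonneg
            (by positivity)
      _ < ε := hk1
  have hL1 : 1 ≤ l.length := by rw [hlen]; exact le_max_right k0 1
  -- the dimension bound for F
  have hdimF : dimH F < (n : ℝ≥0∞) := by
    refine S2Aux.dimH_lt_of_word hn (by omega) hρ0 hρ1 hsim' hsum' hKb hFK hFs hFO hL1
      l.get ?_
    rw [List.ofFn_get]
    exact himg
  -- transfer to volume
  have hac : (volume : Measure (EuclideanSpace ℝ (Fin n))) ≪ μH[((n : ℝ≥0) : ℝ)] := by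
    rw [NNReal.coe_natCast]
    exact S2Aux.volume_ac n
  have hdimF' : dimH F < ((n : ℝ≥0) : ℝ≥0∞) := by
    rw [ENNReal.coe_natCast]
    exact hdimF
  have hvolF : volume F = 0 := measure_zero_of_dimH_lt hac hdimF'
  -- conclusions
  have hfrO : frontier O = F := by
    rw [hOopen.frontier_eq]
  have hfrΓ : frontier Γ ⊆ F := by
    rw [hΓK, frontier, hKcl.closure_eq]
    exact diff_subset_diff_right (interior_maximal hOK hOopen)
  refine ⟨hfrO ▸ hdimF, hfrO ▸ hvolF, lt_of_le_of_lt (dimH_mono hfrΓ) hdimF,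
    measure_mono_null hfrΓ hvolF⟩
end

section
/- Let Γ ⊆ ℝⁿ be an n-attractor. Then Γ equals the closure of its interior, Γ = cl(int Γ); consequently ∂Γ = ∂(int Γ) = ∂(Γᶜ). Moreover the Hausdorff dimension of ∂Γ satisfies dim_H(∂Γ) ≥ n − 1. -/
open Metric MeasureTheory Set
open scoped ENNReal

private lemma similar_affine {n : ℕ} (f : EuclideanSpace ℝ (Fin n) → EuclideanSpace ℝ (Fin n))
    {r : ℝ} (hr : 0 < r) (hf : ∀ x y, dist (f x) (f y) = r * dist x y) :
    ∃ L : EuclideanSpace ℝ (Fin n) ≃ₗᵢ[ℝ] EuclideanSpace ℝ (Fin n),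
      ∀ x, f x = f 0 + r • L x := by
  set g : EuclideanSpace ℝ (Fin n) → EuclideanSpace ℝ (Fin n) :=
    fun x => r⁻¹ • (f x - f 0) with hgdef
  have hgd : ∀ x y, dist (g x) (g y) = dist x y := by
    intro x y
    simp only [hgdef]
    rw [dist_smul₀, dist_sub_right, hf, Real.norm_eq_abs, abs_of_pos (inv_pos.2 hr)]
    field_simp
  have hg0 : g 0 = 0 := by simp [hgdef]
  have hgnorm : ∀ x, ‖g x‖ = ‖x‖ := by
    intro x
    have := hgd x 0
    rwa [hg0, dist_zero_right, dist_zero_right] at this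
  have hinner : ∀ x y, inner ℝ (g x) (g y) = inner ℝ x y := by
    intro x y
    have h1 := hgd x y
    rw [dist_eq_norm, dist_eq_norm] at h1
    have e1 : ‖g x - g y‖ ^ 2 = ‖g x‖ ^ 2 - 2 * inner ℝ (g x) (g y) + ‖g y‖ ^ 2 :=
      norm_sub_sq_real _ _
    have e2 : ‖x - y‖ ^ 2 = ‖x‖ ^ 2 - 2 * inner ℝ x y + ‖y‖ ^ 2 := norm_sub_sq_real _ _
    rw [h1, hgnorm, hgnorm] at e1
    nlinarith [e1, e2]
  have hadd : ∀ x y, g (x + y) = g x + g y := by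
    intro x y
    have h0 : inner ℝ (g (x + y) - (g x + g y)) (g (x + y) - (g x + g y)) = 0 := by
      simp only [inner_sub_left, inner_sub_right, inner_add_left, inner_add_right, hinner]
      ring
    have := inner_self_eq_zero.1 h0
    rwa [sub_eq_zero] at this
  have hsmul : ∀ (c : ℝ) x, g (c • x) = c • g x := by
    intro c x
    have h0 : inner ℝ (g (c • x) - c • g x) (g (c • x) - c • g x) = 0 := by
      simp only [inner_sub_left, inner_sub_right, real_inner_smul_left, real_inner_smul_right,
        hinner]
      ring
    have := inner_self_eq_zero.1 h0
    rwa [sub_eq_zero] at this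
  let L0 : EuclideanSpace ℝ (Fin n) →ₗ[ℝ] EuclideanSpace ℝ (Fin n) :=
    { toFun := g, map_add' := hadd, map_smul' := hsmul }
  have hinner' : ∀ x y, inner ℝ (L0 x) (L0 y) = inner ℝ x y := hinner
  let Li : EuclideanSpace ℝ (Fin n) →ₗᵢ[ℝ] EuclideanSpace ℝ (Fin n) :=
    L0.isometryOfInner hinner'
  refine ⟨Li.toLinearIsometryEquiv rfl, fun x => ?_⟩
  have : (Li.toLinearIsometryEquiv rfl) x = g x := rfl
  rw [this, hgdef]
  simp [smul_smul, mul_inv_cancel₀ hr.ne']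

private lemma similar_measure {n : ℕ} (f : EuclideanSpace ℝ (Fin n) → EuclideanSpace ℝ (Fin n))
    {r : ℝ} (hr : 0 < r) (hf : ∀ x y, dist (f x) (f y) = r * dist x y)
    (A : Set (EuclideanSpace ℝ (Fin n))) :
    volume (f '' A) = ENNReal.ofReal (r ^ n) * volume A := by
  obtain ⟨L, hL⟩ := similar_affine f hr hf
  have himg : f '' A = (fun y => f 0 + y) '' ((fun y => r • y) '' (⇑L '' A)) := by
    rw [← image_comp, ← image_comp]
    exact image_congr fun x _ => hL x
  rw [himg]
  have h1 : volume ((fun y => f 0 + y) '' ((fun y => r • y) '' (⇑L '' A)))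
      = volume ((fun y => r • y) '' (⇑L '' A)) := by
    rw [Set.image_add_left, measure_preimage_add]
  rw [h1, Set.image_smul, Measure.addHaar_smul_of_nonneg volume hr.le, finrank_euclideanSpace_fin]
  congr 1
  have h2 : ⇑L '' A = ⇑L.symm ⁻¹' A := by
    ext y
    constructor
    · rintro ⟨x, hx, rfl⟩; simpa using hx
    · intro h; exact ⟨L.symm y, h, by simp⟩
  rw [h2]
  exact L.symm.measurePreserving.measure_preimage_emb
    L.symm.toHomeomorph.measurableEmbedding A

private lemma similar_isOpenMap {n : ℕ} (f : EuclideanSpace ℝ (Fin n) → EuclideanSpace ℝ (Fin n))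
    {r : ℝ} (hr : 0 < r) (hf : ∀ x y, dist (f x) (f y) = r * dist x y)
    {A : Set (EuclideanSpace ℝ (Fin n))} (hA : IsOpen A) : IsOpen (f '' A) := by
  obtain ⟨L, hL⟩ := similar_affine f hr hf
  have himg : f '' A = (fun y => f 0 + y) '' ((fun y => r • y) '' (⇑L '' A)) := by
    rw [← image_comp, ← image_comp]
    exact image_congr fun x _ => hL x
  rw [himg]
  exact (Homeomorph.addLeft (f 0)).isOpenMap _
    (((Homeomorph.smulOfNeZero r hr.ne').isOpenMap _ (L.toHomeomorph.isOpenMap _ hA)))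

section FinGeom

variable {n' : ℕ}

private noncomputable def projE (x : EuclideanSpace ℝ (Fin (n' + 1))) :
    EuclideanSpace ℝ (Fin n') := WithLp.toLp 2 (fun i : Fin n' => x (Fin.castSucc i))

private noncomputable def liftE (z : EuclideanSpace ℝ (Fin n')) (t : ℝ) :
    EuclideanSpace ℝ (Fin (n' + 1)) := WithLp.toLp 2 (Fin.snoc (α := fun _ => ℝ) z.ofLp t)

private lemma dist_sq_eq (z z' : EuclideanSpace ℝ (Fin n')) :
    dist z z' ^ 2 = ∑ i, dist (z i) (z' i) ^ 2 := by
  rw [EuclideanSpace.dist_eq]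
  exact Real.sq_sqrt (Finset.sum_nonneg fun i _ => sq_nonneg _)

private lemma dist_liftE (z z' : EuclideanSpace ℝ (Fin n')) (t t' : ℝ) :
    dist (liftE z t) (liftE z' t') = Real.sqrt (dist z z' ^ 2 + dist t t' ^ 2) := by
  rw [EuclideanSpace.dist_eq, Fin.sum_univ_castSucc, dist_sq_eq]
  simp [liftE]

private lemma projE_liftE (z : EuclideanSpace ℝ (Fin n')) (t : ℝ) : projE (liftE z t) = z := by
  ext i
  simp [projE, liftE]

private lemma liftE_projE (x : EuclideanSpace ℝ (Fin (n' + 1))) :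
    liftE (projE x) (x (Fin.last n')) = x := by
  ext i
  exact congrFun (Fin.snoc_init_self (α := fun _ => ℝ) x.ofLp) i

private lemma lip_projE : LipschitzWith 1 (projE (n' := n')) := by
  apply LipschitzWith.of_dist_le_mul
  intro x y
  rw [NNReal.coe_one, one_mul]
  conv_rhs => rw [← liftE_projE x, ← liftE_projE y]
  rw [dist_liftE]
  calc dist (projE x) (projE y) = Real.sqrt (dist (projE x) (projE y) ^ 2) :=
        (Real.sqrt_sq dist_nonneg).symm
    _ ≤ _ := Real.sqrt_le_sqrt (by nlinarith [sq_nonneg (dist (x (Fin.last n')) (y (Fin.last n')))])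

private lemma dist_liftE_same (z : EuclideanSpace ℝ (Fin n')) (t t' : ℝ) :
    dist (liftE z t) (liftE z t') = dist t t' := by
  rw [dist_liftE]
  simp [Real.sqrt_sq dist_nonneg]

private lemma dist_liftE_samet (z z' : EuclideanSpace ℝ (Fin n')) (t : ℝ) :
    dist (liftE z t) (liftE z' t) = dist z z' := by
  rw [dist_liftE]
  simp [Real.sqrt_sq dist_nonneg]

private lemma coord_le_dist (x y : EuclideanSpace ℝ (Fin (n' + 1))) (i : Fin (n' + 1)) :
    dist (x i) (y i) ≤ dist x y := by
  rw [EuclideanSpace.dist_eq]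
  calc dist (x i) (y i) = Real.sqrt (dist (x i) (y i) ^ 2) := (Real.sqrt_sq dist_nonneg).symm
    _ ≤ _ := Real.sqrt_le_sqrt (Finset.single_le_sum (f := fun j => dist (x j) (y j) ^ 2)
        (fun j _ => sq_nonneg _) (Finset.mem_univ i))

end FinGeom

/-- If Γ is an n-attractor then Γ = cl(int Γ), hence
∂Γ = ∂(int Γ) = ∂(Γᶜ), and dim_H(∂Γ) ≥ n − 1. -/
theorem statement3
    (n : ℕ) (hn : 1 ≤ n)
    (M : ℕ) (hM : 2 ≤ M)
    (s : Fin M → EuclideanSpace ℝ (Fin n) → EuclideanSpace ℝ (Fin n))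
    (ρ : Fin M → ℝ)
    (hρ : ∀ m, ρ m ∈ Set.Ioo (0 : ℝ) 1)
    (hsim : ∀ m x y, dist (s m x) (s m y) = ρ m * dist x y)
    (Γ : Set (EuclideanSpace ℝ (Fin n)))
    (hΓne : Γ.Nonempty) (hΓcomp : IsCompact Γ)
    (hattr : Γ = ⋃ m, s m '' Γ)
    (hOSC : ∃ O : Set (EuclideanSpace ℝ (Fin n)), O.Nonempty ∧ IsOpen O ∧
      Bornology.IsBounded O ∧ (⋃ m, s m '' O) ⊆ O ∧
      ∀ m m', m ≠ m' → Disjoint (s m '' O) (s m' '' O))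
    (hsum : ∑ m, ρ m ^ n = 1) :
    Γ = closure (interior Γ) ∧
    frontier Γ = frontier (interior Γ) ∧
    frontier Γ = frontier Γᶜ ∧
    (n : ℝ≥0∞) - 1 ≤ dimH (frontier Γ) := by
  obtain ⟨n', rfl⟩ : ∃ n', n = n' + 1 := ⟨n - 1, by omega⟩
  obtain ⟨O, hOne, hOopen, hObd, hOsub, hOdisj⟩ := hOSC
  have hM0 : 0 < M := by omega
  set m0 : Fin M := ⟨0, hM0⟩ with hm0
  have hne : (Finset.univ : Finset (Fin M)).Nonempty := ⟨m0, Finset.mem_univ m0⟩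
  set r : ℝ := Finset.univ.sup' hne ρ with hrdef
  have hρr : ∀ m, ρ m ≤ r := fun m => Finset.le_sup' ρ (Finset.mem_univ m)
  have hr1 : r < 1 := (Finset.sup'_lt_iff hne).2 fun m _ => (hρ m).2
  have hr0 : 0 < r := lt_of_lt_of_le (hρ m0).1 (hρr m0)
  have sΓ : ∀ m, ∀ x ∈ Γ, s m x ∈ Γ := by
    intro m x hx
    rw [hattr]
    exact mem_iUnion.2 ⟨m, mem_image_of_mem _ hx⟩
  obtain ⟨γ0, hγ0⟩ := hΓne
  -- the iterated open sets
  set V : ℕ → Set (EuclideanSpace ℝ (Fin (n' + 1))) :=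
    fun k => (fun A => ⋃ m, s m '' A)^[k] O with hVdef
  have hV0 : V 0 = O := rfl
  have hVsucc : ∀ k, V (k + 1) = ⋃ m, s m '' V k := fun k =>
    Function.iterate_succ_apply' (fun A => ⋃ m, s m '' A) k O
  have hVO : ∀ k, V k ⊆ O ∧ IsOpen (V k) := by
    intro k
    induction k with
    | zero => exact ⟨subset_rfl, hOopen⟩
    | succ k ih =>
      constructor
      · rw [hVsucc]
        exact (iUnion_mono fun m => image_mono ih.1).trans hOsub
      · rw [hVsucc]
        exact isOpen_iUnion fun m => similar_isOpenMap (s m) (hρ m).1 (hsim m) ih.2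
  have hVvol : ∀ k, volume (V k) = volume O := by
    intro k
    induction k with
    | zero => rfl
    | succ k ih =>
      rw [hVsucc]
      have hdisj : Pairwise (Function.onFun Disjoint fun m => s m '' V k) := fun m m' h =>
        ((hOdisj m m' h).mono (image_mono (hVO k).1) (image_mono (hVO k).1))
      have hmeas : ∀ m : Fin M, MeasurableSet (s m '' V k) := fun m =>
        (similar_isOpenMap (s m) (hρ m).1 (hsim m) (hVO k).2).measurableSet
      rw [measure_iUnion hdisj hmeas, tsum_fintype]
      have : ∀ m : Fin M, volume (s m '' V k)
          = ENNReal.ofReal (ρ m ^ (n' + 1)) * volume (V k) := fun m =>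
        similar_measure (s m) (hρ m).1 (hsim m) (V k)
      rw [Finset.sum_congr rfl fun m _ => this m, ← Finset.sum_mul,
        ← ENNReal.ofReal_sum_of_nonneg (fun m _ => pow_nonneg (hρ m).1.le _), hsum,
        ENNReal.ofReal_one, one_mul, ih]
  -- points of V k are close to Γ
  obtain ⟨R0, hR0⟩ := hObd.subset_closedBall γ0
  set C : ℝ := max R0 0 with hCdef
  have hC0 : 0 ≤ C := le_max_right _ _
  have hVnear : ∀ k, ∀ x ∈ V k, ∃ γ ∈ Γ, dist x γ ≤ C * r ^ k := by
    intro k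
    induction k with
    | zero =>
      intro x hx
      refine ⟨γ0, hγ0, ?_⟩
      have h := mem_closedBall.1 (hR0 hx)
      rw [pow_zero, mul_one]
      exact h.trans (le_max_left R0 0)
    | succ k ih =>
      intro x hx
      rw [hVsucc] at hx
      obtain ⟨m, y, hy, rfl⟩ := by simpa using hx
      obtain ⟨γ, hγ, hd⟩ := ih y hy
      refine ⟨s m γ, sΓ m γ hγ, ?_⟩
      rw [hsim m]
      calc ρ m * dist y γ ≤ r * (C * r ^ k) :=
            mul_le_mul (hρr m) hd dist_nonneg hr0.le
        _ = C * r ^ (k + 1) := by ring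
  have hOfin : volume O ≠ ⊤ := hObd.measure_lt_top.ne
  have hnull : ∀ k, volume (O \ V k) = 0 := by
    intro k
    rw [measure_diff (hVO k).1 (hVO k).2.measurableSet.nullMeasurableSet
      (by rw [hVvol k]; exact hOfin), hVvol k, tsub_self _]
  have htendC : ∀ {D : ℝ}, Filter.Tendsto (fun k : ℕ => D * r ^ k) Filter.atTop (nhds 0) := by
    intro D
    simpa using (tendsto_pow_atTop_nhds_zero_of_lt_one hr0.le hr1).const_mul D
  have hOsubΓ : O ⊆ Γ := by
    have hsub2 : O \ Γ ⊆ ⋃ k, O \ V k := by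
      intro x hx
      have hδ : 0 < infDist x Γ :=
        (hΓcomp.isClosed.notMem_iff_infDist_pos ⟨γ0, hγ0⟩).1 hx.2
      obtain ⟨k, hk⟩ := (htendC.eventually (gt_mem_nhds hδ)).exists
      refine mem_iUnion.2 ⟨k, hx.1, fun hxV => ?_⟩
      obtain ⟨γ, hγ, hd⟩ := hVnear k x hxV
      exact absurd ((infDist_le_dist_of_mem hγ).trans hd) (not_le.2 hk)
    have hOG : volume (O \ Γ) = 0 :=
      measure_mono_null hsub2 (measure_iUnion_null fun k => hnull k)
    intro x hx
    by_contra hxΓ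
    exact absurd hOG
      ((hOopen.sdiff hΓcomp.isClosed).measure_pos volume ⟨x, hx, hxΓ⟩).ne'
  -- Γ ⊆ closure O
  obtain ⟨y0, hy0⟩ := id hOne
  obtain ⟨R1, hR1⟩ := (hΓcomp.isBounded.union hObd).subset_closedBall γ0
  set C' : ℝ := max (2 * R1) 0 with hC'def
  have hC'bound : ∀ p ∈ Γ, ∀ y ∈ O, dist p y ≤ C' := by
    intro p hp y hy
    have h1 : dist p γ0 ≤ R1 := mem_closedBall.1 (hR1 (Or.inl hp))
    have h2 : dist y γ0 ≤ R1 := mem_closedBall.1 (hR1 (Or.inr hy))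
    calc dist p y ≤ dist p γ0 + dist γ0 y := dist_triangle _ _ _
      _ = dist p γ0 + dist y γ0 := by rw [dist_comm γ0 y]
      _ ≤ 2 * R1 := by linarith
      _ ≤ C' := le_max_left _ _
  have hΓk : ∀ k, ∀ x ∈ Γ, ∃ y ∈ O, dist x y ≤ C' * r ^ k := by
    intro k
    induction k with
    | zero =>
      intro x hx
      exact ⟨y0, hy0, by simpa using hC'bound x hx y0 hy0⟩
    | succ k ih =>
      intro x hx
      rw [hattr] at hx
      obtain ⟨m, z, hz, rfl⟩ := by simpa using hx
      obtain ⟨y, hyO, hd⟩ := ih z hz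
      refine ⟨s m y, hOsub (mem_iUnion.2 ⟨m, mem_image_of_mem _ hyO⟩), ?_⟩
      rw [hsim m]
      calc ρ m * dist z y ≤ r * (C' * r ^ k) :=
            mul_le_mul (hρr m) hd dist_nonneg hr0.le
        _ = C' * r ^ (k + 1) := by ring
  have hΓcl : Γ ⊆ closure O := by
    intro x hx
    rw [Metric.mem_closure_iff]
    intro ε hε
    obtain ⟨k, hk⟩ := (htendC.eventually (gt_mem_nhds hε)).exists
    obtain ⟨y, hy, hd⟩ := hΓk k x hx
    exact ⟨y, hy, lt_of_le_of_lt hd hk⟩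
  -- part 1
  have part1 : Γ = closure (interior Γ) :=
    subset_antisymm (hΓcl.trans (closure_mono (interior_maximal hOsubΓ hOopen)))
      (closure_minimal interior_subset hΓcomp.isClosed)
  refine ⟨part1, ?_, (frontier_compl Γ).symm, ?_⟩
  · rw [frontier, frontier, interior_interior, ← part1, hΓcomp.isClosed.closure_eq]
  -- part 4 : Hausdorff dimension of the frontier
  · obtain ⟨c, hc⟩ := hOne
    obtain ⟨ε, hε, hball⟩ := Metric.isOpen_iff.1 hOopen c hc
    have hballΓ : ball c ε ⊆ Γ := hball.trans hOsubΓ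
    have hsurj : ball (projE c) ε ⊆ projE '' frontier Γ := by
      intro z hz
      set T : Set ℝ := {t | liftE z t ∈ Γ} with hTdef
      have hTne : T.Nonempty := by
        refine ⟨c (Fin.last n'), hballΓ ?_⟩
        rw [mem_ball]
        calc dist (liftE z (c (Fin.last n'))) c
            = dist (liftE z (c (Fin.last n'))) (liftE (projE c) (c (Fin.last n'))) := by
              rw [liftE_projE]
          _ = dist z (projE c) := dist_liftE_samet _ _ _
          _ < ε := mem_ball.1 hz
      have hTbdd : BddAbove T := by
        obtain ⟨R2, hR2⟩ := hΓcomp.isBounded.subset_closedBall γ0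
        refine ⟨γ0 (Fin.last n') + R2, fun t ht => ?_⟩
        have h1 : dist (liftE z t) γ0 ≤ R2 := mem_closedBall.1 (hR2 ht)
        have h2 : dist t (γ0 (Fin.last n')) ≤ R2 := by
          have h3 := coord_le_dist (liftE z t) γ0 (Fin.last n')
          have h4 : liftE z t (Fin.last n') = t := by simp [liftE]
          rw [h4] at h3
          exact h3.trans h1
        rw [Real.dist_eq, abs_le] at h2
        linarith [h2.2]
      have hTclosed : IsClosed T := by
        have hcont : Continuous (fun t => liftE z t) := by
          refine LipschitzWith.continuous (K := 1) ?_
          apply LipschitzWith.of_dist_le_mul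
          intro t t'
          rw [dist_liftE_same, NNReal.coe_one, one_mul]
        exact hΓcomp.isClosed.preimage hcont
      set t0 : ℝ := sSup T with ht0def
      have ht0 : t0 ∈ T := hTclosed.csSup_mem hTne hTbdd
      have hfront : liftE z t0 ∈ frontier Γ := by
        rw [frontier, hΓcomp.isClosed.closure_eq]
        refine ⟨ht0, fun hint => ?_⟩
        obtain ⟨δ, hδ, hδball⟩ := Metric.isOpen_iff.1 isOpen_interior _ hint
        have hmem : liftE z (t0 + δ / 2) ∈ Γ := by
          refine interior_subset (hδball ?_)
          rw [mem_ball, dist_liftE_same, Real.dist_eq]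
          rw [abs_of_pos (by linarith)]
          linarith
        have hle : t0 + δ / 2 ≤ t0 := le_csSup hTbdd hmem
        linarith
      exact ⟨liftE z t0, hfront, projE_liftE z t0⟩
    have hd1 : dimH (ball (projE c) ε) = (n' : ℝ≥0∞) := by
      rw [Real.dimH_of_mem_nhds (Metric.ball_mem_nhds _ hε), finrank_euclideanSpace_fin]
    calc ((n' + 1 : ℕ) : ℝ≥0∞) - 1 = (n' : ℝ≥0∞) := by
          push_cast
          exact ENNReal.add_sub_cancel_right ENNReal.one_ne_top
      _ = dimH (ball (projE c) ε) := hd1.symm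
      _ ≤ dimH (projE '' frontier Γ) := dimH_mono hsurj
      _ ≤ dimH (frontier Γ) := lip_projE.dimH_image_le _
end

section
/- Let Γ ⊆ ℝⁿ be an n-attractor. Then the interior int Γ is an open n-set: int Γ is a non-empty open set and there exists c > 0 such that c·rⁿ ≤ |int Γ ∩ B(x,r)| for all x ∈ int Γ and all 0 < r ≤ 1. -/
open Metric MeasureTheory Set
open scoped RealInnerProductSpace Pointwise

section Aux

variable {n : ℕ}

local notation "E" => EuclideanSpace ℝ (Fin n)

/-- A similarity of Euclidean space is a translation of a scaled linear isometry. -/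
lemma exists_linearIsometryEquiv (f : E → E) {ρ : ℝ} (hρ : 0 < ρ)
    (hf : ∀ x y, dist (f x) (f y) = ρ * dist x y) :
    ∃ L : E ≃ₗᵢ[ℝ] E, ∀ x, f x = f 0 + ρ • L x := by
  set g : E → E := fun x => ρ⁻¹ • (f x - f 0) with hg
  have hdist : ∀ x y : E, ‖g x - g y‖ = ‖x - y‖ := by
    intro x y
    have h1 : g x - g y = ρ⁻¹ • (f x - f y) := by
      simp only [hg, ← smul_sub]
      congr 1
      abel
    rw [h1, norm_smul, ← dist_eq_norm (f x) (f y), hf, ← dist_eq_norm]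
    rw [Real.norm_eq_abs, abs_of_pos (inv_pos.2 hρ)]
    field_simp
  have hg0 : g 0 = 0 := by simp [hg]
  have hnorm : ∀ x : E, ‖g x‖ = ‖x‖ := by
    intro x
    have := hdist x 0
    rwa [hg0, sub_zero, sub_zero] at this
  have hinner : ∀ x y : E, ⟪g x, g y⟫ = ⟪x, y⟫ := by
    intro x y
    have h1 := norm_sub_sq_real (g x) (g y)
    have h2 := norm_sub_sq_real x y
    rw [hnorm, hnorm, hdist] at h1
    linarith
  have hadd : ∀ x y : E, g (x + y) = g x + g y := by
    intro x y
    have h0 : ⟪g (x + y) - (g x + g y), g (x + y) - (g x + g y)⟫ = 0 := by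
      simp only [inner_sub_left, inner_sub_right, inner_add_left, inner_add_right, hinner]
      ring
    have := inner_self_eq_zero.1 h0
    rwa [sub_eq_zero] at this
  have hsmul : ∀ (c : ℝ) (x : E), g (c • x) = c • g x := by
    intro c x
    have h0 : ⟪g (c • x) - c • g x, g (c • x) - c • g x⟫ = 0 := by
      simp only [inner_sub_left, inner_sub_right, real_inner_smul_left, real_inner_smul_right,
        hinner]
      ring
    have := inner_self_eq_zero.1 h0
    rwa [sub_eq_zero] at this
  let L0 : E →ₗ[ℝ] E :=
    { toFun := g, map_add' := hadd, map_smul' := hsmul }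
  have hinner' : ∀ x y : E, ⟪L0 x, L0 y⟫ = ⟪x, y⟫ := hinner
  let Li : E →ₗᵢ[ℝ] E := L0.isometryOfInner hinner'
  refine ⟨Li.toLinearIsometryEquiv rfl, fun x => ?_⟩
  have hLx : (Li.toLinearIsometryEquiv rfl) x = g x := rfl
  rw [hLx]
  have : ρ • g x = f x - f 0 := by
    rw [hg]
    exact smul_inv_smul₀ hρ.ne' _
  rw [this]
  abel

lemma sim_volume_s4 (hn : 1 ≤ n) (L : E ≃ₗᵢ[ℝ] E) (c : E) {ρ : ℝ} (hρ : 0 < ρ) (A : Set E) :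
    volume ((fun x => c + ρ • L x) '' A) = ENNReal.ofReal (ρ ^ n) * volume A := by
  haveI : Nonempty (Fin n) := ⟨⟨0, hn⟩⟩
  haveI : Nontrivial E := inferInstance
  set T : E →ₗ[ℝ] E := ρ • (L.toLinearEquiv : E →ₗ[ℝ] E) with hT
  have hTapp : ∀ x, T x = ρ • L x := fun x => rfl
  have hsplit : ∀ B : Set E, (fun x => c + ρ • L x) '' B = (c + ·) '' (⇑T '' B) := by
    intro B
    rw [Set.image_image]
    exact Set.image_congr fun x _ => by rw [hTapp]
  have htrans : ∀ B : Set E, volume ((c + ·) '' B) = volume B := by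
    intro B
    rw [Set.image_add_left, measure_preimage_add]
  set ω := volume (ball (0 : E) 1) with hω
  have hω0 : ω ≠ 0 := (measure_ball_pos volume 0 one_pos).ne'
  have hωtop : ω ≠ ⊤ := measure_ball_lt_top.ne
  have himgball : ⇑T '' ball (0 : E) 1 = ball (0 : E) ρ := by
    have h1 : ⇑T '' ball (0 : E) 1 = (fun y : E => ρ • y) '' (⇑L '' ball (0 : E) 1) := by
      rw [Set.image_image]
      exact Set.image_congr fun x _ => by rw [hTapp]
    have h2 : ⇑L '' ball (0 : E) 1 = ball (0 : E) 1 := by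
      have := L.toIsometryEquiv.image_ball (0 : E) 1
      simpa using this
    have h3 : (fun y : E => ρ • y) '' ball (0 : E) 1 = ρ • ball (0 : E) 1 := Set.image_smul
    rw [h1, h2, h3, smul_ball hρ.ne' (0 : E) 1]
    simp [Real.norm_eq_abs, abs_of_pos hρ]
  have hdet : ENNReal.ofReal |LinearMap.det T| = ENNReal.ofReal (ρ ^ n) := by
    have h1 := volume.addHaar_image_linearMap T (ball (0 : E) 1)
    rw [himgball] at h1
    have h2 : volume (ball (0 : E) ρ) = ENNReal.ofReal (ρ ^ n) * ω := by
      have := Measure.addHaar_ball (μ := volume) (0 : E) hρ.le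
      rwa [finrank_euclideanSpace_fin] at this
    rw [h2] at h1
    exact ((ENNReal.mul_left_inj hω0 hωtop).1 h1.symm)
  rw [hsplit, htrans, volume.addHaar_image_linearMap T A, hdet]

lemma sim_isOpenMap (L : E ≃ₗᵢ[ℝ] E) (c : E) {ρ : ℝ} (hρ : 0 < ρ) :
    IsOpenMap (fun x => c + ρ • L x) := by
  have h1 : IsOpenMap (⇑L) := L.toHomeomorph.isOpenMap
  have h2 : IsOpenMap (fun y : E => ρ • y) := isOpenMap_smul₀ hρ.ne'
  have h3 : IsOpenMap (fun y : E => c + y) := (Homeomorph.addLeft c).isOpenMap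
  have := (h3.comp h2).comp h1
  exact this

end Aux

/-- If Γ is an n-attractor then int Γ is an open n-set: int Γ is
non-empty (and open), and there exists c > 0 with c·rⁿ ≤ |int Γ ∩ B(x,r)| for
all x ∈ int Γ and 0 < r ≤ 1. -/
theorem statement4
    (n : ℕ) (hn : 1 ≤ n)
    (M : ℕ) (hM : 2 ≤ M)
    (s : Fin M → EuclideanSpace ℝ (Fin n) → EuclideanSpace ℝ (Fin n))
    (ρ : Fin M → ℝ)
    (hρ : ∀ m, ρ m ∈ Set.Ioo (0 : ℝ) 1)
    (hsim : ∀ m x y, dist (s m x) (s m y) = ρ m * dist x y)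
    (Γ : Set (EuclideanSpace ℝ (Fin n)))
    (hΓne : Γ.Nonempty) (hΓcomp : IsCompact Γ)
    (hattr : Γ = ⋃ m, s m '' Γ)
    (hOSC : ∃ O : Set (EuclideanSpace ℝ (Fin n)), O.Nonempty ∧ IsOpen O ∧
      Bornology.IsBounded O ∧ (⋃ m, s m '' O) ⊆ O ∧
      ∀ m m', m ≠ m' → Disjoint (s m '' O) (s m' '' O))
    (hsum : ∑ m, ρ m ^ n = 1) :
    (interior Γ).Nonempty ∧
    ∃ c : ℝ, 0 < c ∧ ∀ x ∈ interior Γ, ∀ r : ℝ, 0 < r → r ≤ 1 →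
      ENNReal.ofReal (c * r ^ n) ≤ volume (interior Γ ∩ Metric.closedBall x r) := by
  classical
  obtain ⟨O, hOne, hOopen, hObdd, hOsub, hOdisj⟩ := hOSC
  haveI : Nonempty (Fin n) := ⟨⟨0, hn⟩⟩
  haveI : Nonempty (Fin M) := ⟨⟨0, by omega⟩⟩
  have hρpos : ∀ m, 0 < ρ m := fun m => (hρ m).1
  have hρlt1 : ∀ m, ρ m < 1 := fun m => (hρ m).2
  -- affine structure of the similarities
  choose L hL using fun m => exists_linearIsometryEquiv (s m) (hρpos m) (hsim m)
  have hsvol : ∀ m (A : Set (EuclideanSpace ℝ (Fin n))),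
      volume (s m '' A) = ENNReal.ofReal (ρ m ^ n) * volume A := by
    intro m A
    have h1 : s m '' A = (fun x => s m 0 + ρ m • L m x) '' A :=
      Set.image_congr fun x _ => hL m x
    rw [h1, sim_volume_s4 hn (L m) (s m 0) (hρpos m) A]
  have hsopen : ∀ m, IsOpenMap (s m) := by
    intro m
    rw [show s m = fun x => s m 0 + ρ m • L m x from funext (hL m)]
    exact sim_isOpenMap (L m) (s m 0) (hρpos m)
  have hsO : ∀ m, s m '' O ⊆ O := fun m =>
    (Set.subset_iUnion (fun m => s m '' O) m).trans hOsub
  have hsΓ : ∀ m, s m '' Γ ⊆ Γ := fun m =>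
    (Set.subset_iUnion (fun m => s m '' Γ) m).trans hattr.symm.subset
  -- the iterated open sets
  let U : ℕ → Set (EuclideanSpace ℝ (Fin n)) :=
    fun k => Nat.rec O (fun _ V => ⋃ m, s m '' V) k
  have hU0 : U 0 = O := rfl
  have hUsucc : ∀ k, U (k + 1) = ⋃ m, s m '' U k := fun k => rfl
  have hUopen : ∀ k, IsOpen (U k) := by
    intro k
    induction k with
    | zero => exact hOopen
    | succ k ih => exact isOpen_iUnion fun m => hsopen m _ ih
  have hUsub : ∀ k, U k ⊆ O := by
    intro k
    induction k with
    | zero => exact subset_rfl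
    | succ k ih =>
      exact Set.iUnion_subset fun m => (Set.image_mono ih).trans (hsO m)
  have hUvol : ∀ k, volume (U k) = volume O := by
    intro k
    induction k with
    | zero => rfl
    | succ k ih =>
      have hd : Pairwise (Function.onFun Disjoint fun m => s m '' U k) := fun m m' hmm =>
        (hOdisj m m' hmm).mono (Set.image_mono (hUsub k)) (Set.image_mono (hUsub k))
      have hmeas : ∀ m, MeasurableSet (s m '' U k) := fun m =>
        (hsopen m _ (hUopen k)).measurableSet
      calc volume (U (k + 1)) = ∑' m, volume (s m '' U k) := by
            rw [hUsucc]; exact measure_iUnion hd hmeas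
        _ = ∑ m, volume (s m '' U k) := tsum_fintype _
        _ = ∑ m, ENNReal.ofReal (ρ m ^ n) * volume (U k) := by
            exact Finset.sum_congr rfl fun m _ => hsvol m (U k)
        _ = (∑ m, ENNReal.ofReal (ρ m ^ n)) * volume (U k) := by rw [Finset.sum_mul]
        _ = volume (U k) := by
            rw [← ENNReal.ofReal_sum_of_nonneg fun m _ => pow_nonneg (hρpos m).le n, hsum]
            simp
        _ = volume O := ih
  have hOfin : volume O ≠ ⊤ := hObdd.measure_lt_top.ne
  have hnull : volume (O \ ⋂ k, U k) = 0 := by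
    rw [Set.diff_iInter]
    refine measure_iUnion_null fun k => ?_
    have h1 := measure_diff (hUsub k) (hUopen k).measurableSet.nullMeasurableSet
      (by rw [hUvol k]; exact hOfin)
    rw [h1, hUvol k, tsub_self]
  -- the intersection is contained in Γ
  have hρmaxex : ∃ t : ℝ, 0 < t ∧ t < 1 ∧ ∀ m, ρ m ≤ t := by
    refine ⟨Finset.univ.sup' Finset.univ_nonempty ρ, ?_, ?_, ?_⟩
    · exact lt_of_lt_of_le (hρpos (Classical.arbitrary _))
        (Finset.le_sup' ρ (Finset.mem_univ _))
    · exact (Finset.sup'_lt_iff Finset.univ_nonempty).2 fun m _ => hρlt1 m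
    · exact fun m => Finset.le_sup' ρ (Finset.mem_univ m)
  obtain ⟨ρmax, hρmaxpos, hρmaxlt, hρmaxle⟩ := hρmaxex
  have hρminex : ∃ t : ℝ, 0 < t ∧ t < 1 ∧ ∀ m, t ≤ ρ m := by
    refine ⟨Finset.univ.inf' Finset.univ_nonempty ρ, ?_, ?_, ?_⟩
    · exact (Finset.lt_inf'_iff Finset.univ_nonempty).2 fun m _ => hρpos m
    · exact lt_of_le_of_lt (Finset.inf'_le ρ (Finset.mem_univ (Classical.arbitrary _)))
        (hρlt1 _)
    · exact fun m => Finset.inf'_le ρ (Finset.mem_univ m)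
  obtain ⟨ρmin, hρminpos, hρminlt, hρminle⟩ := hρminex
  obtain ⟨q0, hq0⟩ := hΓne
  obtain ⟨R, hR⟩ := Metric.isBounded_iff.1 (hΓcomp.isBounded.union hObdd)
  have hR0 : (0 : ℝ) ≤ R := le_trans dist_nonneg (hR (Or.inl hq0) (Or.inl hq0))
  have hUnear : ∀ k, ∀ x ∈ U k, ∃ z ∈ Γ, dist x z ≤ ρmax ^ k * R := by
    intro k
    induction k with
    | zero =>
      intro x hx
      exact ⟨q0, hq0, by simpa using hR (Or.inr hx) (Or.inl hq0)⟩
    | succ k ih =>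
      intro x hx
      rw [hUsucc] at hx
      obtain ⟨m, hm⟩ := Set.mem_iUnion.1 hx
      obtain ⟨y, hyU, rfl⟩ := hm
      obtain ⟨z, hz, hdz⟩ := ih y hyU
      refine ⟨s m z, hsΓ m ⟨z, hz, rfl⟩, ?_⟩
      rw [hsim m y z]
      calc ρ m * dist y z ≤ ρmax * (ρmax ^ k * R) :=
            mul_le_mul (hρmaxle m) hdz dist_nonneg hρmaxpos.le
        _ = ρmax ^ (k + 1) * R := by ring
  have hInter : (⋂ k, U k) ⊆ Γ := by
    intro x hx
    rw [← hΓcomp.isClosed.closure_eq]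
    rw [Metric.mem_closure_iff]
    intro ε hε
    obtain ⟨k, hk⟩ := exists_pow_lt_of_lt_one
      (show (0 : ℝ) < ε / (R + 1) from div_pos hε (by linarith)) hρmaxlt
    obtain ⟨z, hz, hdz⟩ := hUnear k x (Set.mem_iInter.1 hx k)
    refine ⟨z, hz, lt_of_le_of_lt hdz ?_⟩
    have h1 : ρmax ^ k * R ≤ ε / (R + 1) * R :=
      mul_le_mul_of_nonneg_right hk.le hR0
    have h2 : ε / (R + 1) * R = ε * (R / (R + 1)) := by ring
    have h3 : R / (R + 1) < 1 := (div_lt_one (by linarith)).2 (by linarith)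
    calc ρmax ^ k * R ≤ ε * (R / (R + 1)) := by rw [← h2]; exact h1
      _ < ε * 1 := mul_lt_mul_of_pos_left h3 hε
      _ = ε := mul_one ε
  -- O is contained in the interior of Γ
  obtain ⟨z0, hz0⟩ := hOne
  obtain ⟨b, hbpos, hball⟩ := Metric.isOpen_iff.1 hOopen z0 hz0
  have hOint : O ⊆ interior Γ := by
    intro x hx
    obtain ⟨ε, hεpos, hεball⟩ := Metric.isOpen_iff.1 hOopen x hx
    have hsubΓ : ball x ε ⊆ Γ := by
      by_contra hcon
      obtain ⟨y, hy, hyΓ⟩ := Set.not_subset.1 hcon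
      have hopen : IsOpen (ball x ε \ Γ) := isOpen_ball.sdiff hΓcomp.isClosed
      have hpos : 0 < volume (ball x ε \ Γ) := hopen.measure_pos volume ⟨y, hy, hyΓ⟩
      have hsub : ball x ε \ Γ ⊆ O \ ⋂ k, U k := fun w hw =>
        ⟨hεball hw.1, fun hwi => hw.2 (hInter hwi)⟩
      exact absurd (measure_mono_null hsub hnull) hpos.ne'
    exact mem_interior.2 ⟨ball x ε, hsubΓ, isOpen_ball, mem_ball_self hεpos⟩
  have part1 : (interior Γ).Nonempty := ⟨z0, hOint hz0⟩
  -- constants for part 2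
  haveI : Nontrivial (EuclideanSpace ℝ (Fin n)) := inferInstance
  set D : ℝ := Metric.diam Γ with hD
  have hDmax1 : (1 : ℝ) ≤ max D 1 := le_max_right _ _
  have hDmaxpos : (0 : ℝ) < max D 1 := lt_of_lt_of_le one_pos hDmax1
  have hDle : D ≤ max D 1 := le_max_left _ _
  set ω := volume (ball (0 : EuclideanSpace ℝ (Fin n)) 1) with hω
  have hωpos : 0 < ω := measure_ball_pos volume 0 one_pos
  have hωfin : ω ≠ ⊤ := measure_ball_lt_top.ne
  have hωtR : 0 < ω.toReal := ENNReal.toReal_pos hωpos.ne' hωfin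
  refine ⟨part1, (ρmin * b / max D 1) ^ n * ω.toReal, ?_, ?_⟩
  · have h1 : 0 < ρmin * b / max D 1 := by positivity
    positivity
  · intro x hxint r hr hr1
    have hxΓ : x ∈ Γ := interior_subset hxint
    -- address sequence for x
    have hstep : ∀ q : {q // q ∈ Γ}, ∃ (m : Fin M) (y : {q // q ∈ Γ}),
        (q : EuclideanSpace ℝ (Fin n)) = s m y := by
      intro q
      have hq : (q : EuclideanSpace ℝ (Fin n)) ∈ ⋃ m, s m '' Γ := hattr ▸ q.2
      obtain ⟨m, hm⟩ := Set.mem_iUnion.1 hq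
      obtain ⟨y, hyΓ, hEq⟩ := hm
      exact ⟨m, ⟨y, hyΓ⟩, hEq.symm⟩
    choose idx nxt hnxt using hstep
    let a : ℕ → {q // q ∈ Γ} := fun k => Nat.rec ⟨x, hxΓ⟩ (fun _ p => nxt p) k
    have ha : ∀ k, a (k + 1) = nxt (a k) := fun k => rfl
    let G : ℕ → EuclideanSpace ℝ (Fin n) → EuclideanSpace ℝ (Fin n) :=
      fun k => Nat.rec id (fun j g => g ∘ s (idx (a j))) k
    have hG0 : G 0 = id := rfl
    have hGsucc : ∀ k, G (k + 1) = G k ∘ s (idx (a k)) := fun k => rfl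
    let P : ℕ → ℝ := fun k => ∏ j ∈ Finset.range k, ρ (idx (a j))
    have hP0 : P 0 = 1 := Finset.prod_range_zero _
    have hPsucc : ∀ k, P (k + 1) = P k * ρ (idx (a k)) := fun k => Finset.prod_range_succ _ k
    have hPpos : ∀ k, 0 < P k := fun k => Finset.prod_pos fun j _ => hρpos _
    have hGx : ∀ k, G k (a k).1 = x := by
      intro k
      induction k with
      | zero => rfl
      | succ k ih =>
        rw [hGsucc]
        show G k (s (idx (a k)) (a (k + 1))) = x
        rw [ha k, ← hnxt (a k)]
        exact ih
    have hGdist : ∀ k u v, dist (G k u) (G k v) = P k * dist u v := by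
      intro k
      induction k with
      | zero => intro u v; simp [hG0, hP0]
      | succ k ih =>
        intro u v
        rw [hGsucc]
        show dist (G k (s (idx (a k)) u)) (G k (s (idx (a k)) v)) = _
        rw [ih, hsim, hPsucc]
        ring
    have hGΓ : ∀ k, G k '' Γ ⊆ Γ := by
      intro k
      induction k with
      | zero => simp [hG0]
      | succ k ih =>
        rw [hGsucc, Set.image_comp]
        exact (Set.image_mono (hsΓ _)).trans ih
    have hGvol : ∀ k (A : Set (EuclideanSpace ℝ (Fin n))),
        volume (G k '' A) = ENNReal.ofReal (P k ^ n) * volume A := by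
      intro k
      induction k with
      | zero => intro A; simp [hG0, hP0]
      | succ k ih =>
        intro A
        rw [hGsucc, Set.image_comp, ih, hsvol, ← mul_assoc, ← ENNReal.ofReal_mul
          (pow_nonneg (hPpos k).le n), ← mul_pow, ← hPsucc]
    have hGopen : ∀ k (V : Set (EuclideanSpace ℝ (Fin n))), IsOpen V → IsOpen (G k '' V) := by
      intro k
      induction k with
      | zero => intro V hV; simpa [hG0] using hV
      | succ k ih =>
        intro V hV
        rw [hGsucc, Set.image_comp]
        exact ih _ (hsopen _ _ hV)
    -- choose the scale
    set t : ℝ := r / max D 1 with ht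
    have htpos : 0 < t := div_pos hr hDmaxpos
    have ht1 : t ≤ 1 := le_trans (div_le_self hr.le hDmax1) hr1
    have hex : ∃ k, P k ≤ t := by
      obtain ⟨k, hk⟩ := exists_pow_lt_of_lt_one htpos hρmaxlt
      refine ⟨k, le_trans (le_trans ?_ hk.le) le_rfl⟩
      calc P k ≤ ∏ j ∈ Finset.range k, ρmax :=
            Finset.prod_le_prod (fun j _ => (hρpos _).le) (fun j _ => hρmaxle _)
        _ = ρmax ^ k := by rw [Finset.prod_const, Finset.card_range]
    obtain ⟨k, hkle, hklb⟩ : ∃ k, P k ≤ t ∧ ρmin * t < P k := by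
      refine ⟨Nat.find hex, Nat.find_spec hex, ?_⟩
      cases hfk : Nat.find hex with
      | zero =>
        rw [hP0]
        nlinarith
      | succ j =>
        have hj : ¬P j ≤ t := Nat.find_min hex (by omega)
        have h1 : t < P j := lt_of_not_ge hj
        rw [hPsucc]
        nlinarith [mul_lt_mul_of_pos_right h1 hρminpos,
          mul_le_mul_of_nonneg_left (hρminle (idx (a j))) (hPpos j).le]
    -- the small ball inside Γ close to x
    have hballΓ : ball z0 b ⊆ Γ := hball.trans (hOint.trans interior_subset)
    have hsubset1 : G k '' ball z0 b ⊆ interior Γ :=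
      interior_maximal ((Set.image_mono hballΓ).trans (hGΓ k))
        (hGopen k _ isOpen_ball)
    have hsubset2 : G k '' ball z0 b ⊆ closedBall x r := by
      rintro y ⟨w, hw, rfl⟩
      have hwΓ : w ∈ Γ := hballΓ hw
      rw [mem_closedBall]
      calc dist (G k w) x = dist (G k w) (G k (a k).1) := by rw [hGx k]
        _ = P k * dist w (a k).1 := hGdist k w _
        _ ≤ t * D :=
            mul_le_mul hkle (Metric.dist_le_diam_of_mem hΓcomp.isBounded hwΓ (a k).2)
              dist_nonneg htpos.le
        _ ≤ r := by
            rw [ht, div_mul_eq_mul_div, div_le_iff₀ hDmaxpos]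
            exact mul_le_mul_of_nonneg_left hDle hr.le
    have hvol1 : volume (G k '' ball z0 b)
        = ENNReal.ofReal (P k ^ n) * (ENNReal.ofReal (b ^ n) * ω) := by
      rw [hGvol k]
      congr 1
      have := Measure.addHaar_ball (μ := volume) z0 hbpos.le
      rwa [finrank_euclideanSpace_fin] at this
    have hkey : ENNReal.ofReal ((ρmin * b / max D 1) ^ n * ω.toReal * r ^ n)
        ≤ volume (G k '' ball z0 b) := by
      have h2 : ρmin * b / max D 1 * r ≤ P k * b := by
        have h3 : ρmin * t ≤ P k := hklb.le
        have h4 : ρmin * b / max D 1 * r = ρmin * (r / max D 1) * b := by ring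
        rw [h4, ← ht]
        exact mul_le_mul_of_nonneg_right h3 hbpos.le
      have h1 : (ρmin * b / max D 1) ^ n * r ^ n ≤ P k ^ n * b ^ n := by
        calc (ρmin * b / max D 1) ^ n * r ^ n = (ρmin * b / max D 1 * r) ^ n :=
              (mul_pow _ _ n).symm
          _ ≤ (P k * b) ^ n := pow_le_pow_left₀ (by positivity) h2 n
          _ = P k ^ n * b ^ n := mul_pow _ _ n
      calc ENNReal.ofReal ((ρmin * b / max D 1) ^ n * ω.toReal * r ^ n)
          = ENNReal.ofReal ((ρmin * b / max D 1) ^ n * r ^ n) * ENNReal.ofReal ω.toReal := by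
            rw [← ENNReal.ofReal_mul (by positivity)]
            ring_nf
        _ = ENNReal.ofReal ((ρmin * b / max D 1) ^ n * r ^ n) * ω := by
            rw [ENNReal.ofReal_toReal hωfin]
        _ ≤ ENNReal.ofReal (P k ^ n * b ^ n) * ω := by
            exact mul_le_mul_of_nonneg_right (ENNReal.ofReal_le_ofReal h1) zero_le
        _ = ENNReal.ofReal (P k ^ n) * (ENNReal.ofReal (b ^ n) * ω) := by
            rw [ENNReal.ofReal_mul (pow_nonneg (hPpos k).le n), mul_assoc]
        _ = volume (G k '' ball z0 b) := hvol1.symm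
    refine le_trans hkey (measure_mono ?_)
    exact Set.subset_inter hsubset1 hsubset2
end

section
/- Let Γ ⊆ ℝⁿ be an n-attractor with defining IFS s₁,…,s_M. Then the open set condition holds with O = int Γ: int Γ is a non-empty bounded open set, ⋃_{m=1}^M s_m(int Γ) ⊆ int Γ, and s_m(int Γ) ∩ s_{m'}(int Γ) = ∅ for all m ≠ m'. -/
open Metric MeasureTheory Set Pointwise

section Aux

variable {n : ℕ}

local notation "Euc" => EuclideanSpace ℝ (Fin n)

lemma aux_lie_preimage (L : Euc ≃ₗᵢ[ℝ] Euc) (S : Set Euc) : volume (⇑L ⁻¹' S) = volume S := by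
  have h := Measure.addHaar_preimage_linearEquiv (volume : Measure Euc) L.toLinearEquiv
  have hpre : ⇑L.toLinearEquiv ⁻¹' (ball 0 1) = ball 0 1 := by
    ext x; simp [mem_ball, dist_zero_right]
  have hball := h (ball 0 1)
  rw [hpre] at hball
  have hb0 : volume (ball (0 : Euc) 1) ≠ 0 := (measure_ball_pos volume 0 one_pos).ne'
  have hbt : volume (ball (0 : Euc) 1) ≠ ⊤ := measure_ball_lt_top.ne
  have hdet : ENNReal.ofReal |LinearMap.det (L.toLinearEquiv.symm : Euc →ₗ[ℝ] Euc)| = 1 := by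
    refine (ENNReal.mul_left_inj hb0 hbt).mp ?_
    rw [one_mul]; exact hball.symm
  have hS := h S
  rw [hdet, one_mul] at hS
  simpa using hS

lemma aux_lie_image (L : Euc ≃ₗᵢ[ℝ] Euc) (S : Set Euc) : volume (⇑L '' S) = volume S := by
  have himg : ⇑L '' S = ⇑L.symm ⁻¹' S := by
    ext y
    constructor
    · rintro ⟨x, hx, rfl⟩; simpa using hx
    · intro hy; exact ⟨L.symm y, hy, by simp⟩
  rw [himg, aux_lie_preimage]

lemma simil_decomp {f : Euc → Euc} {ρ : ℝ} (hρ : 0 < ρ)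
    (h : ∀ x y, dist (f x) (f y) = ρ * dist x y) :
    ∃ (L : Euc ≃ₗᵢ[ℝ] Euc) (c : Euc), ∀ x, f x = ρ • L x + c := by
  have hgi : Isometry (fun x => ρ⁻¹ • f x : Euc → Euc) := by
    refine Isometry.of_dist_eq (fun x y => ?_)
    rw [dist_smul₀, h, Real.norm_eq_abs, abs_of_pos (inv_pos.2 hρ)]
    field_simp
  let A := hgi.affineIsometryOfStrictConvexSpace
  let L : Euc ≃ₗᵢ[ℝ] Euc := A.linearIsometry.toLinearIsometryEquiv rfl
  refine ⟨L, ρ • (ρ⁻¹ • f 0), fun x => ?_⟩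
  have h2 : A.linearIsometry (x - 0) = A x - A 0 := A.map_vsub x 0
  have hAx : A x = ρ⁻¹ • f x := rfl
  have hA0 : A 0 = ρ⁻¹ • f 0 := rfl
  rw [sub_zero] at h2
  have hLx : (L x : Euc) = ρ⁻¹ • f x - ρ⁻¹ • f 0 := by rw [← hAx, ← hA0, ← h2]; rfl
  rw [hLx, smul_sub, smul_smul, mul_inv_cancel₀ hρ.ne', one_smul]
  abel

lemma simil_homeo {f : Euc → Euc} {ρ : ℝ} (hρ : 0 < ρ) {L : Euc ≃ₗᵢ[ℝ] Euc} {c : Euc}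
    (hf : ∀ x, f x = ρ • L x + c) : ∃ e : Euc ≃ₜ Euc, ⇑e = f := by
  refine ⟨(L.toHomeomorph.trans (Homeomorph.smulOfNeZero ρ hρ.ne')).trans
    (Homeomorph.addRight c), ?_⟩
  funext x
  simp [hf x]

lemma simil_vol {f : Euc → Euc} {ρ : ℝ} (hρ : 0 < ρ) {L : Euc ≃ₗᵢ[ℝ] Euc} {c : Euc}
    (hf : ∀ x, f x = ρ • L x + c) (S : Set Euc) :
    volume (f '' S) = ENNReal.ofReal (ρ ^ n) * volume S := by
  have himg : f '' S = (fun y => y + c) '' ((ρ • (⇑L '' S) : Set Euc)) := by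
    rw [← image_smul, ← image_comp, ← image_comp]
    exact image_congr (fun x _ => hf x)
  rw [himg, image_add_right, measure_preimage_add_right,
    Measure.addHaar_smul_of_nonneg volume hρ.le, aux_lie_image, finrank_euclideanSpace_fin]

end Aux

/-- If Γ is an n-attractor with defining IFS s₁,…,s_M then the OSC
holds with O = int Γ: int Γ is a non-empty bounded open set,
⋃ₘ sₘ(int Γ) ⊆ int Γ, and sₘ(int Γ) ∩ sₘ'(int Γ) = ∅ for m ≠ m'. -/
theorem statement5
    (n : ℕ) (hn : 1 ≤ n)
    (M : ℕ) (hM : 2 ≤ M)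
    (s : Fin M → EuclideanSpace ℝ (Fin n) → EuclideanSpace ℝ (Fin n))
    (ρ : Fin M → ℝ)
    (hρ : ∀ m, ρ m ∈ Set.Ioo (0 : ℝ) 1)
    (hsim : ∀ m x y, dist (s m x) (s m y) = ρ m * dist x y)
    (Γ : Set (EuclideanSpace ℝ (Fin n)))
    (hΓne : Γ.Nonempty) (hΓcomp : IsCompact Γ)
    (hattr : Γ = ⋃ m, s m '' Γ)
    (hOSC : ∃ O : Set (EuclideanSpace ℝ (Fin n)), O.Nonempty ∧ IsOpen O ∧
      Bornology.IsBounded O ∧ (⋃ m, s m '' O) ⊆ O ∧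
      ∀ m m', m ≠ m' → Disjoint (s m '' O) (s m' '' O))
    (hsum : ∑ m, ρ m ^ n = 1) :
    (interior Γ).Nonempty ∧ Bornology.IsBounded (interior Γ) ∧
    (⋃ m, s m '' interior Γ) ⊆ interior Γ ∧
    ∀ m m' : Fin M, m ≠ m' → Disjoint (s m '' interior Γ) (s m' '' interior Γ) := by
  obtain ⟨O, hOne, hOopen, hObdd, hOsub, hOdisj⟩ := hOSC
  have hdec : ∀ m, ∃ (L : EuclideanSpace ℝ (Fin n) ≃ₗᵢ[ℝ] EuclideanSpace ℝ (Fin n))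
      (c : EuclideanSpace ℝ (Fin n)), ∀ x, s m x = ρ m • L x + c :=
    fun m => simil_decomp (hρ m).1 (hsim m)
  choose L c hLc using hdec
  have hhomeo : ∀ m, ∃ e : EuclideanSpace ℝ (Fin n) ≃ₜ EuclideanSpace ℝ (Fin n), ⇑e = s m :=
    fun m => simil_homeo (hρ m).1 (hLc m)
  choose e he using hhomeo
  have hopen : ∀ m (U : Set (EuclideanSpace ℝ (Fin n))), IsOpen U → IsOpen (s m '' U) := by
    intro m U hU
    rw [← he m]
    exact (e m).isOpenMap _ hU
  have hcont : ∀ m, Continuous (s m) := fun m => (he m) ▸ (e m).continuous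
  have hvol : ∀ m S, volume (s m '' S) = ENNReal.ofReal (ρ m ^ n) * volume S :=
    fun m S => simil_vol (hρ m).1 (hLc m) S
  have hsmΓ : ∀ m, s m '' Γ ⊆ Γ :=
    fun m => (subset_iUnion (fun m => s m '' Γ) m).trans hattr.symm.subset
  have hsum' : ∑ m, ENNReal.ofReal (ρ m ^ n) = 1 := by
    rw [← ENNReal.ofReal_sum_of_nonneg (fun m _ => pow_nonneg (hρ m).1.le n), hsum, ENNReal.ofReal_one]
  -- measure of one application of the IFS
  have hTvol : ∀ A : Set (EuclideanSpace ℝ (Fin n)), IsOpen A → A ⊆ O →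
      volume (⋃ m, s m '' A) = volume A := by
    intro A hAo hAO
    rw [measure_iUnion (fun m m' hmm' =>
        (hOdisj m m' hmm').mono (image_mono hAO) (image_mono hAO))
      (fun m => (hopen m A hAo).measurableSet)]
    rw [tsum_fintype]
    simp_rw [hvol]
    rw [← Finset.sum_mul, hsum', one_mul]
  -- the iterated sets
  set OS : ℕ → Set (EuclideanSpace ℝ (Fin n)) :=
    fun k => (fun A => ⋃ m, s m '' A)^[k] O with hOS
  have hOS0 : OS 0 = O := rfl
  have hOSsucc : ∀ k, OS (k + 1) = ⋃ m, s m '' OS k :=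
    fun k => Function.iterate_succ_apply' _ _ _
  have hprop : ∀ k, IsOpen (OS k) ∧ OS k ⊆ O ∧ volume (OS k) = volume O := by
    intro k
    induction k with
    | zero => exact ⟨hOopen, subset_rfl, rfl⟩
    | succ k ih =>
      obtain ⟨h1, h2, h3⟩ := ih
      refine ⟨?_, ?_, ?_⟩
      · rw [hOSsucc]; exact isOpen_iUnion (fun m => hopen m _ h1)
      · rw [hOSsucc]
        exact (iUnion_mono (fun m => image_mono h2)).trans hOsub
      · rw [hOSsucc, hTvol _ h1 h2, h3]
  have hTmono : Monotone (fun A => ⋃ m, s m '' A : Set (EuclideanSpace ℝ (Fin n)) → Set (EuclideanSpace ℝ (Fin n))) :=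
    fun A B h => iUnion_mono (fun m => image_mono h)
  have hanti1 : ∀ k, OS (k + 1) ⊆ OS k := by
    intro k
    have h1 : OS (k + 1) = (fun A => ⋃ m, s m '' A)^[k] (⋃ m, s m '' O) :=
      Function.iterate_succ_apply _ _ _
    rw [h1]
    exact (hTmono.iterate k) hOsub
  have hanti : Antitone OS := antitone_nat_of_succ_le hanti1
  have hOfin : volume O ≠ ⊤ := hObdd.measure_lt_top.ne
  have hiInt : volume (⋂ k, OS k) = volume O := by
    rw [hanti.measure_iInter (fun k => (hprop k).1.measurableSet.nullMeasurableSet)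
      ⟨0, by rw [hOS0]; exact hOfin⟩]
    simp_rw [fun k => (hprop k).2.2]
    exact iInf_const
  -- the intersection is inside Γ
  obtain ⟨z₀, hz₀⟩ := hΓne
  obtain ⟨R, hR⟩ : ∃ R, O ⊆ closedBall z₀ R := hObdd.subset_closedBall z₀
  have hne' : Nonempty (Fin M) := ⟨⟨0, by omega⟩⟩
  set r : ℝ := Finset.univ.sup' Finset.univ_nonempty ρ with hr
  have hrm : ∀ m, ρ m ≤ r := fun m => Finset.le_sup' ρ (Finset.mem_univ m)
  have hr0 : 0 ≤ r := le_trans (hρ (Classical.arbitrary _)).1.le (hrm _)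
  have hrlt : r < 1 := (Finset.sup'_lt_iff Finset.univ_nonempty).mpr (fun m _ => (hρ m).2)
  have hR0 : 0 ≤ R := by
    obtain ⟨y, hy⟩ := hOne
    exact dist_nonneg.trans (hR hy)
  have happrox : ∀ k, ∀ x ∈ OS k, ∃ γ ∈ Γ, dist x γ ≤ r ^ k * R := by
    intro k
    induction k with
    | zero =>
      intro x hx
      exact ⟨z₀, hz₀, by simpa using hR hx⟩
    | succ k ih =>
      intro x hx
      rw [hOSsucc] at hx
      simp only [mem_iUnion, mem_image] at hx
      obtain ⟨m, y, hy, rfl⟩ := hx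
      obtain ⟨γ, hγ, hd⟩ := ih y hy
      refine ⟨s m γ, hsmΓ m ⟨γ, hγ, rfl⟩, ?_⟩
      rw [hsim m]
      calc ρ m * dist y γ ≤ r * (r ^ k * R) :=
            mul_le_mul (hrm m) hd dist_nonneg hr0
        _ = r ^ (k + 1) * R := by ring
  have hinter : (⋂ k, OS k) ⊆ Γ := by
    intro x hx
    rw [← hΓcomp.isClosed.closure_eq]
    rw [Metric.mem_closure_iff]
    intro ε hε
    have htend : Filter.Tendsto (fun k => r ^ k * R) Filter.atTop (nhds 0) := by
      simpa using (tendsto_pow_atTop_nhds_zero_of_lt_one hr0 hrlt).mul_const R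
    obtain ⟨k, hk⟩ := (htend.eventually (gt_mem_nhds hε)).exists
    obtain ⟨γ, hγ, hd⟩ := happrox k x (mem_iInter.mp hx k)
    exact ⟨γ, hγ, lt_of_le_of_lt hd hk⟩
  -- O ⊆ Γ
  have hOsubΓ : O ⊆ Γ := by
    by_contra hc
    obtain ⟨x, hxO, hxΓ⟩ := not_subset.mp hc
    have hopen2 : IsOpen (O \ Γ) := hOopen.sdiff hΓcomp.isClosed
    have hpos : 0 < volume (O \ Γ) := hopen2.measure_pos volume ⟨x, hxO, hxΓ⟩
    have hnull : volume (O \ Γ) = 0 := by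
      refine measure_mono_null (diff_subset_diff_right hinter) ?_
      have hm : MeasurableSet (⋂ k, OS k) :=
        MeasurableSet.iInter (fun k => (hprop k).1.measurableSet)
      rw [measure_diff (show (⋂ k, OS k) ⊆ O from iInter_subset OS 0) hm.nullMeasurableSet (hiInt ▸ hOfin),
        hiInt, tsub_self]
    exact hpos.ne' hnull
  have hOint : O ⊆ interior Γ := interior_maximal hOsubΓ hOopen
  -- essential disjointness of the pieces of Γ
  have hΓfin : volume Γ ≠ ⊤ := hΓcomp.measure_lt_top.ne
  have hnull2 : ∀ m m', m ≠ m' → volume (s m '' Γ ∩ s m' '' Γ) = 0 := by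
    intro m m' hne
    set A : Fin M → Set (EuclideanSpace ℝ (Fin n)) := fun i => s i '' Γ with hA
    have hAm : ∀ i, MeasurableSet (A i) := fun i => (hΓcomp.image (hcont i)).measurableSet
    have hsumA : ∑ i, volume (A i) = volume Γ := by
      have : ∀ i, volume (A i) = ENNReal.ofReal (ρ i ^ n) * volume Γ := fun i => hvol i Γ
      simp_rw [this]
      rw [← Finset.sum_mul, hsum', one_mul]
    have hm'mem : m' ∈ Finset.univ.erase m := Finset.mem_erase.mpr ⟨hne.symm, Finset.mem_univ _⟩
    set t : Finset (Fin M) := (Finset.univ.erase m).erase m' with ht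
    have hsplit : volume (A m) + (volume (A m') + ∑ i ∈ t, volume (A i)) = volume Γ := by
      rw [ht, Finset.add_sum_erase _ (fun i => volume (A i)) hm'mem,
        Finset.add_sum_erase _ (fun i => volume (A i)) (Finset.mem_univ m), hsumA]
    have hcover : Γ ⊆ (A m ∪ A m') ∪ ⋃ i ∈ t, A i := by
      intro x hx
      obtain ⟨i, hi⟩ := mem_iUnion.mp (hattr.subset hx)
      by_cases h1 : i = m
      · exact Or.inl (Or.inl (h1 ▸ hi))
      by_cases h2 : i = m'
      · exact Or.inl (Or.inr (h2 ▸ hi))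
      · refine Or.inr (Set.mem_biUnion ?_ hi)
        rw [ht]
        exact Finset.mem_erase.mpr ⟨h2, Finset.mem_erase.mpr ⟨h1, Finset.mem_univ i⟩⟩
    have hub : volume Γ ≤ volume (A m ∪ A m') + ∑ i ∈ t, volume (A i) :=
      calc volume Γ ≤ volume ((A m ∪ A m') ∪ ⋃ i ∈ t, A i) := measure_mono hcover
        _ ≤ volume (A m ∪ A m') + volume (⋃ i ∈ t, A i) := measure_union_le _ _
        _ ≤ volume (A m ∪ A m') + ∑ i ∈ t, volume (A i) :=
            add_le_add le_rfl (measure_biUnion_finset_le _ _)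
    have hie : volume (A m ∪ A m') + volume (A m ∩ A m') = volume (A m) + volume (A m') :=
      measure_union_add_inter _ (hAm m')
    have hkey : volume Γ + volume (A m ∩ A m') ≤ volume Γ := by
      calc volume Γ + volume (A m ∩ A m')
          ≤ (volume (A m ∪ A m') + ∑ i ∈ t, volume (A i)) + volume (A m ∩ A m') :=
            add_le_add hub le_rfl
        _ = (volume (A m ∪ A m') + volume (A m ∩ A m')) + ∑ i ∈ t, volume (A i) := by
            ring
        _ = (volume (A m) + volume (A m')) + ∑ i ∈ t, volume (A i) := by rw [hie]
        _ = volume Γ := by rw [add_assoc, hsplit]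
    have : volume (A m ∩ A m') ≤ 0 :=
      (ENNReal.add_le_add_iff_left hΓfin).mp (by rw [add_zero]; exact hkey)
    exact le_antisymm this (zero_le)
  refine ⟨hOne.mono hOint, hΓcomp.isBounded.subset interior_subset, ?_, ?_⟩
  · refine iUnion_subset fun m => interior_maximal ?_ (hopen m _ isOpen_interior)
    exact (image_mono interior_subset).trans (hsmΓ m)
  · intro m m' hne
    rw [Set.disjoint_iff_inter_eq_empty]
    rcases eq_empty_or_nonempty (s m '' interior Γ ∩ s m' '' interior Γ) with h | h
    · exact h
    · exfalso
      have hopen3 : IsOpen (s m '' interior Γ ∩ s m' '' interior Γ) :=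
        (hopen m _ isOpen_interior).inter (hopen m' _ isOpen_interior)
      have h0 : volume (s m '' interior Γ ∩ s m' '' interior Γ) = 0 :=
        measure_mono_null
          (inter_subset_inter (image_mono interior_subset)
            (image_mono interior_subset)) (hnull2 m m' hne)
      exact (hopen3.measure_pos volume h).ne' h0
end

section
/- Let Γ ⊆ ℝⁿ be an n-attractor. Then the complement Γᶜ = ℝⁿ ∖ Γ is an open n-set: there exists c > 0 such that c·rⁿ ≤ |Γᶜ ∩ B(x,r)| for all x ∈ Γᶜ and all 0 < r ≤ 1. -/
open Metric MeasureTheory Set Pointwise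
open scoped ENNReal RealInnerProductSpace

set_option autoImplicit false
set_option maxHeartbeats 1000000
noncomputable section
namespace S6

variable {n : ℕ}

local notation "E" => EuclideanSpace ℝ (Fin n)

/-- A similarity with ratio `r`. -/
def IsSim (r : ℝ) (f : E → E) : Prop := ∀ x y, dist (f x) (f y) = r * dist x y

theorem IsSim.comp {r r' : ℝ} {f f' : E → E} (h : IsSim r f) (h' : IsSim r' f') :
    IsSim (r * r') (f ∘ f') := by
  intro x y
  show dist (f (f' x)) (f (f' y)) = _
  rw [h, h', mul_assoc]

theorem IsSim.injective {r : ℝ} {f : E → E} (hr : 0 < r) (h : IsSim r f) :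
    Function.Injective f := by
  intro x y hxy
  have := h x y
  rw [hxy, dist_self] at this
  have : dist x y = 0 := by
    have := this.symm
    nlinarith [dist_nonneg (x := x) (y := y)]
  exact dist_eq_zero.mp this

theorem IsSim.lipschitz {r : ℝ} {f : E → E} (hr : 0 < r) (h : IsSim r f) :
    LipschitzWith r.toNNReal f := by
  apply LipschitzWith.of_dist_le_mul
  intro x y
  rw [h x y, Real.coe_toNNReal r hr.le]

theorem IsSim.continuous {r : ℝ} {f : E → E} (hr : 0 < r) (h : IsSim r f) :
    Continuous f := (h.lipschitz hr).continuous

/-- Structure theorem: a similarity of Euclidean space is a translated scaled linear isometry. -/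
theorem IsSim.exists_decomp {r : ℝ} {f : E → E} (hr : 0 < r) (hf : IsSim r f) :
    ∃ φ : E ≃ₗᵢ[ℝ] E, ∀ x, f x = f 0 + r • φ x := by
  set g : E → E := fun x => r⁻¹ • (f x - f 0) with hg
  have hgdist : ∀ x y, ‖g x - g y‖ = ‖x - y‖ := by
    intro x y
    have : g x - g y = r⁻¹ • (f x - f y) := by
      simp only [hg]; rw [← smul_sub]; congr 1; abel
    rw [this, norm_smul]
    have h1 : ‖f x - f y‖ = r * ‖x - y‖ := by
      rw [← dist_eq_norm, ← dist_eq_norm, hf x y]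
    rw [h1]
    rw [Real.norm_eq_abs, abs_of_pos (inv_pos.mpr hr)]
    field_simp
  have hg0 : g 0 = 0 := by simp [hg]
  have hgnorm : ∀ x, ‖g x‖ = ‖x‖ := by
    intro x
    have := hgdist x 0
    simpa [hg0] using this
  have hinner : ∀ x y, ⟪g x, g y⟫ = ⟪x, y⟫ := by
    intro x y
    have h1 := norm_sub_sq_real (g x) (g y)
    have h2 := norm_sub_sq_real x y
    rw [hgdist x y, hgnorm x, hgnorm y] at h1
    linarith
  have hadd : ∀ x y, g (x + y) = g x + g y := by
    intro x y
    have hz : ‖g (x + y) - (g x + g y)‖ ^ 2 = 0 := by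
      have e1 : ‖g (x + y) - (g x + g y)‖ ^ 2
          = ‖g (x+y)‖^2 - 2 * ⟪g (x+y), g x + g y⟫ + ‖g x + g y‖^2 :=
        norm_sub_sq_real _ _
      rw [inner_add_right] at e1
      rw [hinner, hinner, hgnorm] at e1
      have e2 : ‖g x + g y‖^2 = ‖g x‖^2 + 2*⟪g x, g y⟫ + ‖g y‖^2 := norm_add_sq_real _ _
      rw [hinner, hgnorm, hgnorm] at e2
      have e3 : ‖x + y‖^2 = ‖x‖^2 + 2*⟪x, y⟫ + ‖y‖^2 := norm_add_sq_real _ _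
      have e4 : ⟪x + y, x⟫ = ‖x‖^2 + ⟪x, y⟫ := by
        rw [inner_add_left, real_inner_self_eq_norm_sq, real_inner_comm]
      have e5 : ⟪x + y, y⟫ = ⟪x, y⟫ + ‖y‖^2 := by
        rw [inner_add_left, real_inner_self_eq_norm_sq]
      rw [e2, e3, e4, e5] at e1
      linarith
    have := pow_eq_zero_iff (n := 2) (by norm_num) |>.mp hz
    rw [norm_eq_zero, sub_eq_zero] at this
    exact this
  have hsmul : ∀ (c : ℝ) (x : E), g (c • x) = c • g x := by
    intro c x
    have e1 : ‖g (c • x) - c • g x‖ ^ 2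
        = ‖g (c • x)‖^2 - 2 * ⟪g (c • x), c • g x⟫ + ‖c • g x‖^2 := norm_sub_sq_real _ _
    have e2 : ⟪g (c • x), c • g x⟫ = c * (c * ⟪x, x⟫) := by
      rw [real_inner_smul_right, hinner, real_inner_smul_left]
    have e3 : ‖g (c • x)‖^2 = c^2 * ‖x‖^2 := by
      rw [hgnorm, norm_smul, Real.norm_eq_abs, mul_pow, sq_abs]
    have e4 : ‖c • g x‖^2 = c^2 * ‖x‖^2 := by
      rw [norm_smul, hgnorm, Real.norm_eq_abs, mul_pow, sq_abs]
    have e5 : ⟪x, x⟫ = (‖x‖:ℝ)^2 := real_inner_self_eq_norm_sq x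
    have hz : ‖g (c • x) - c • g x‖ ^ 2 = 0 := by rw [e1, e2, e3, e4, e5]; ring
    have := pow_eq_zero_iff (n := 2) (by norm_num) |>.mp hz
    rw [norm_eq_zero, sub_eq_zero] at this
    exact this
  let L : E →ₗ[ℝ] E :=
    { toFun := g
      map_add' := hadd
      map_smul' := hsmul }
  have hLinj : Function.Injective L := by
    intro x y hxy
    have : ‖x - y‖ = 0 := by
      rw [← hgdist x y]
      show ‖L x - L y‖ = 0
      rw [hxy]; simp
    rwa [norm_eq_zero, sub_eq_zero] at this
  have hLsurj : Function.Surjective L := LinearMap.injective_iff_surjective.mp hLinj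
  let e : E ≃ₗ[ℝ] E := LinearEquiv.ofBijective L ⟨hLinj, hLsurj⟩
  refine ⟨{ toLinearEquiv := e, norm_map' := hgnorm }, ?_⟩
  intro x
  have : g x = r⁻¹ • (f x - f 0) := rfl
  have h2 : r • g x = f x - f 0 := by
    rw [this, smul_smul, mul_inv_cancel₀ hr.ne', one_smul]
  show f x = f 0 + r • g x
  rw [h2]; abel


theorem IsSim.surjective {r : ℝ} {f : E → E} (hr : 0 < r) (hf : IsSim r f) :
    Function.Surjective f := by
  obtain ⟨φ, hφ⟩ := hf.exists_decomp hr
  intro y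
  refine ⟨φ.symm (r⁻¹ • (y - f 0)), ?_⟩
  rw [hφ, LinearIsometryEquiv.apply_symm_apply, smul_smul, mul_inv_cancel₀ hr.ne', one_smul]
  abel

theorem IsSim.volume_image {r : ℝ} {f : E → E} (hr : 0 < r) (hf : IsSim r f) (A : Set E) :
    volume (f '' A) = ENNReal.ofReal (r ^ n) * volume A := by
  obtain ⟨φ, hφ⟩ := hf.exists_decomp hr
  have himg : f '' A = (fun z => f 0 + z) '' ((fun z => r • z) '' (⇑φ '' A)) := by
    rw [Set.image_image, Set.image_image]
    exact Set.image_congr fun x _ => hφ x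
  rw [himg]
  have h1 : volume ((fun z => f 0 + z) '' ((fun z => r • z) '' (⇑φ '' A)))
      = volume ((fun z => r • z) '' (⇑φ '' A)) := by
    rw [Set.image_add_left, measure_preimage_add]
  rw [h1, Set.image_smul, Measure.addHaar_smul_of_nonneg volume hr.le,
    φ.image_eq_preimage_symm,
    φ.symm.measurePreserving.measure_preimage_emb φ.symm.toHomeomorph.measurableEmbedding,
    finrank_euclideanSpace_fin]

theorem IsSim.volume_image_null {r : ℝ} {f : E → E} (hr : 0 < r) (hf : IsSim r f)
    {A : Set E} (hA : volume A = 0) : volume (f '' A) = 0 := by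
  rw [hf.volume_image hr, hA, mul_zero]

theorem IsSim.volume_preimage {r : ℝ} {f : E → E} (hr : 0 < r) (hf : IsSim r f) (A : Set E) :
    volume (f ⁻¹' A) = (ENNReal.ofReal (r ^ n))⁻¹ * volume A := by
  have himg : f '' (f ⁻¹' A) = A := Set.image_preimage_eq A (hf.surjective hr)
  have := hf.volume_image hr (f ⁻¹' A)
  rw [himg] at this
  have hne : ENNReal.ofReal (r ^ n) ≠ 0 := by
    simp [ENNReal.ofReal_eq_zero, not_le]
    positivity
  rw [this, ← mul_assoc, ENNReal.inv_mul_cancel hne ENNReal.ofReal_ne_top, one_mul]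

theorem IsSim.isOpenMap {r : ℝ} {f : E → E} (hr : 0 < r) (hf : IsSim r f) :
    IsOpenMap f := by
  obtain ⟨φ, hφ⟩ := hf.exists_decomp hr
  have : f = (fun z => f 0 + z) ∘ (fun z => r • z) ∘ ⇑φ := by
    funext x; exact hφ x
  rw [this]
  exact (Homeomorph.addLeft (f 0)).isOpenMap.comp
    ((Homeomorph.smulOfNeZero r hr.ne').isOpenMap.comp φ.toHomeomorph.isOpenMap)


section Words

variable {M : ℕ}

def wMap (s : Fin M → E → E) (w : List (Fin M)) : E → E :=
  w.foldr (fun m g => s m ∘ g) id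

def wRatio (ρ : Fin M → ℝ) (w : List (Fin M)) : ℝ := (w.map ρ).prod

variable (s : Fin M → EuclideanSpace ℝ (Fin n) → EuclideanSpace ℝ (Fin n)) (ρ : Fin M → ℝ)

theorem wMap_nil : wMap s [] = id := rfl
theorem wMap_cons (m : Fin M) (w : List (Fin M)) : wMap s (m :: w) = s m ∘ wMap s w := rfl
theorem wRatio_nil : wRatio ρ [] = 1 := rfl
theorem wRatio_cons (m : Fin M) (w : List (Fin M)) :
    wRatio ρ (m :: w) = ρ m * wRatio ρ w := by
  simp [wRatio]

theorem wMap_append (w v : List (Fin M)) :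
    wMap s (w ++ v) = wMap s w ∘ wMap s v := by
  induction w with
  | nil => rfl
  | cons m t ih =>
    rw [List.cons_append, wMap_cons, wMap_cons, ih, Function.comp_assoc]

theorem wRatio_append (w v : List (Fin M)) :
    wRatio ρ (w ++ v) = wRatio ρ w * wRatio ρ v := by
  simp [wRatio]

theorem wRatio_pos (hρ : ∀ m, 0 < ρ m) (w : List (Fin M)) : 0 < wRatio ρ w := by
  induction w with
  | nil => norm_num [wRatio_nil]
  | cons m t ih => rw [wRatio_cons]; exact mul_pos (hρ m) ih

theorem wRatio_le_one (hρ : ∀ m, 0 < ρ m) (hρ1 : ∀ m, ρ m ≤ 1) (w : List (Fin M)) :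
    wRatio ρ w ≤ 1 := by
  induction w with
  | nil => norm_num [wRatio_nil]
  | cons m t ih =>
    rw [wRatio_cons]
    calc ρ m * wRatio ρ t ≤ 1 * 1 := by
          apply mul_le_mul (hρ1 m) ih (wRatio_pos ρ hρ t).le zero_le_one
      _ = 1 := by ring

theorem wMap_isSim (hsim : ∀ m, IsSim (ρ m) (s m)) (w : List (Fin M)) :
    IsSim (wRatio ρ w) (wMap s w) := by
  induction w with
  | nil =>
    intro x y; rw [wRatio_nil, one_mul]; rfl
  | cons m t ih =>
    rw [wRatio_cons, wMap_cons]
    exact (hsim m).comp ih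

theorem wMap_image_subset {Γ : Set E} (hinv : ∀ m, s m '' Γ ⊆ Γ) (w : List (Fin M)) :
    wMap s w '' Γ ⊆ Γ := by
  induction w with
  | nil => simp [wMap_nil]
  | cons m t ih =>
    rw [wMap_cons, Set.image_comp]
    exact (Set.image_mono (f := s m) ih).trans (hinv m)

end Words

theorem pairwise_null_of_sum {ι : Type*} [Fintype ι] (A : ι → Set E)
    (hAm : ∀ i, MeasurableSet (A i)) (hfin : ∀ i, volume (A i) ≠ ⊤)
    (hsum : ∑ i, volume (A i) ≤ volume (⋃ i, A i)) {i j : ι} (hij : i ≠ j) :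
    volume (A i ∩ A j) = 0 := by
  classical
  set R : ℝ≥0∞ := ∑ k ∈ (Finset.univ.erase i).erase j, volume (A k) with hR
  have hRne : R ≠ ⊤ := by
    rw [hR]
    exact (ENNReal.sum_lt_top.mpr fun k _ => (hfin k).lt_top).ne
  have hcover : volume (⋃ k, A k) ≤ volume (A i ∪ A j) + R := by
    have hsub : (⋃ k, A k) ⊆ (A i ∪ A j) ∪ ⋃ k ∈ (Finset.univ.erase i).erase j, A k := by
      intro x hx
      rcases Set.mem_iUnion.mp hx with ⟨k, hk⟩
      by_cases hki : k = i
      · exact Or.inl (Or.inl (hki ▸ hk))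
      by_cases hkj : k = j
      · exact Or.inl (Or.inr (hkj ▸ hk))
      · exact Or.inr (Set.mem_biUnion
          (Finset.mem_erase.mpr ⟨hkj, Finset.mem_erase.mpr ⟨hki, Finset.mem_univ k⟩⟩) hk)
    refine le_trans (measure_mono hsub) (le_trans (measure_union_le _ _) ?_)
    gcongr
    exact measure_biUnion_finset_le _ _
  have hsplit : (volume (A i) + volume (A j)) + R = ∑ k, volume (A k) := by
    rw [hR, add_assoc,
      Finset.add_sum_erase _ (fun k => volume (A k))
        (Finset.mem_erase.mpr ⟨hij.symm, Finset.mem_univ j⟩),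
      Finset.add_sum_erase _ (fun k => volume (A k)) (Finset.mem_univ i)]
  have hui : volume (A i ∪ A j) + volume (A i ∩ A j) = volume (A i) + volume (A j) :=
    measure_union_add_inter (A i) (hAm j)
  have hkey : volume (A i) + volume (A j) ≤ volume (A i ∪ A j) := by
    have h1 : (volume (A i) + volume (A j)) + R ≤ volume (A i ∪ A j) + R := by
      calc (volume (A i) + volume (A j)) + R = ∑ k, volume (A k) := hsplit
        _ ≤ volume (⋃ k, A k) := hsum
        _ ≤ volume (A i ∪ A j) + R := hcover
    exact (ENNReal.add_le_add_iff_right hRne).mp h1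
  have hufin : volume (A i ∪ A j) ≠ ⊤ := by
    have := measure_union_le (μ := volume) (A i) (A j)
    exact (lt_of_le_of_lt this (ENNReal.add_lt_top.mpr ⟨(hfin i).lt_top, (hfin j).lt_top⟩)).ne
  have hfinal : volume (A i ∪ A j) + volume (A i ∩ A j) ≤ volume (A i ∪ A j) + 0 := by
    rw [add_zero, hui]; exact hkey
  simpa using (ENNReal.add_le_add_iff_left hufin).mp hfinal

section Helpers

variable {n : ℕ} {M : ℕ}

/-- Every point of the attractor has an infinite address. -/
theorem exists_address (s : Fin M → EuclideanSpace ℝ (Fin n) → EuclideanSpace ℝ (Fin n))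
    (Γ : Set (EuclideanSpace ℝ (Fin n))) (hattr : Γ = ⋃ m, s m '' Γ)
    {p : EuclideanSpace ℝ (Fin n)} (hp : p ∈ Γ) :
    ∃ m : ℕ → Fin M, ∀ k, p ∈ wMap s ((List.range k).map m) '' Γ := by
  have step : ∀ q : {x // x ∈ Γ}, ∃ (mk : Fin M) (q' : {x // x ∈ Γ}),
      q.val = s mk q'.val := by
    intro q
    have hq : q.val ∈ ⋃ m, s m '' Γ := (le_of_eq hattr) q.2
    rcases Set.mem_iUnion.mp hq with ⟨mk, y, hy, hyq⟩
    exact ⟨mk, ⟨y, hy⟩, hyq.symm⟩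
  choose F G hFG using step
  let Q : ℕ → {x // x ∈ Γ} := fun k => Nat.rec ⟨p, hp⟩ (fun _ q => G q) k
  have hQsucc : ∀ k, Q (k + 1) = G (Q k) := fun k => rfl
  refine ⟨fun k => F (Q k), ?_⟩
  have key : ∀ k, p = wMap s ((List.range k).map fun j => F (Q j)) (Q k).val := by
    intro k
    induction k with
    | zero => rfl
    | succ k ih =>
      have hr : ((List.range (k+1)).map fun j => F (Q j))
          = ((List.range k).map fun j => F (Q j)) ++ [F (Q k)] := by
        simp [List.range_succ]
      rw [hr, wMap_append, Function.comp_apply]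
      have h2 : wMap s [F (Q k)] (Q (k+1)).val = (Q k).val := by
        rw [show wMap s [F (Q k)] = s (F (Q k)) ∘ wMap s [] from rfl, wMap_nil]
        simp only [Function.comp_apply, id_eq]
        rw [hQsucc, ← hFG (Q k)]
      rw [h2, ← ih]
  intro k
  exact ⟨(Q k).val, (Q k).2, (key k).symm⟩

/-- Prefix words from an address. -/
theorem range_map_prefix (m : ℕ → Fin M) {k l : ℕ} (hkl : k ≤ l) :
    ((List.range k).map m) <+: ((List.range l).map m) := by
  induction l, hkl using Nat.le_induction with
  | base => exact List.prefix_refl _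
  | succ l hl ih =>
    refine ih.trans ?_
    rw [List.range_succ, List.map_append]
    exact List.prefix_append _ _

theorem word_null (s : Fin M → EuclideanSpace ℝ (Fin n) → EuclideanSpace ℝ (Fin n))
    (ρ : Fin M → ℝ) (hρpos : ∀ m, 0 < ρ m) (hsim : ∀ m, IsSim (ρ m) (s m))
    (Γ : Set (EuclideanSpace ℝ (Fin n))) (hinv : ∀ m, s m '' Γ ⊆ Γ)
    (hlevel1 : ∀ i j : Fin M, i ≠ j → volume (s i '' Γ ∩ s j '' Γ) = 0) :
    ∀ (w v : List (Fin M)), ¬ w <+: v → ¬ v <+: w →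
      volume (wMap s w '' Γ ∩ wMap s v '' Γ) = 0 := by
  intro w
  induction w with
  | nil => intro v hwv _; exact absurd List.nil_prefix hwv
  | cons m t ih =>
    intro v hwv hvw
    cases v with
    | nil => exact absurd List.nil_prefix hvw
    | cons m' t' =>
      by_cases hmm : m = m'
      · subst hmm
        have h1 : ¬ t <+: t' := fun h => hwv (List.cons_prefix_cons.mpr ⟨rfl, h⟩)
        have h2 : ¬ t' <+: t := fun h => hvw (List.cons_prefix_cons.mpr ⟨rfl, h⟩)
        have him : wMap s (m :: t) '' Γ ∩ wMap s (m :: t') '' Γ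
            = s m '' (wMap s t '' Γ ∩ wMap s t' '' Γ) := by
          rw [wMap_cons, wMap_cons, Set.image_comp, Set.image_comp,
            ← Set.image_inter ((hsim m).injective (hρpos m))]
        rw [him]
        exact (hsim m).volume_image_null (hρpos m) (ih t' h1 h2)
      · refine measure_mono_null ?_ (hlevel1 m m' hmm)
        refine Set.inter_subset_inter ?_ ?_
        · rw [wMap_cons, Set.image_comp]
          exact (Set.image_mono (wMap_image_subset s hinv t))
        · rw [wMap_cons, Set.image_comp]
          exact (Set.image_mono (wMap_image_subset s hinv t'))

theorem exists_two_tiles (s : Fin M → EuclideanSpace ℝ (Fin n) → EuclideanSpace ℝ (Fin n))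
    (ρ : Fin M → ℝ) (hρ : ∀ m, ρ m ∈ Set.Ioo (0:ℝ) 1)
    (Γ : Set (EuclideanSpace ℝ (Fin n))) (hattr : Γ = ⋃ m, s m '' Γ)
    (ρmin : ℝ) (hρminpos : 0 < ρmin) (hρminle : ∀ m, ρmin ≤ ρ m)
    (q : ℝ) (hqpos : 0 < q) (hq1 : q < 1) (hqge : ∀ m, ρ m ≤ q)
    {p : EuclideanSpace ℝ (Fin n)} (hp : p ∈ Γ)
    {a b : ℝ} (hb : 0 < b) (hba : b ≤ a) (ha1 : a ≤ 1) :
    ∃ w₁ w₂ : List (Fin M), w₁ <+: w₂ ∧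
      p ∈ wMap s w₁ '' Γ ∧ p ∈ wMap s w₂ '' Γ ∧
      wRatio ρ w₁ ≤ a ∧ ρmin * a < wRatio ρ w₁ ∧
      wRatio ρ w₂ ≤ b ∧ ρmin * b < wRatio ρ w₂ := by
  classical
  obtain ⟨m, hm⟩ := exists_address s Γ hattr hp
  set W : ℕ → List (Fin M) := fun k => (List.range k).map m with hW
  set R : ℕ → ℝ := fun k => wRatio ρ (W k) with hRdef
  have hR0 : R 0 = 1 := by simp [hRdef, hW, wRatio_nil, wRatio]
  have hRsucc : ∀ k, R (k+1) = R k * ρ (m k) := by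
    intro k
    simp only [hRdef, hW]
    rw [List.range_succ, List.map_append, wRatio_append]
    simp [wRatio_cons, wRatio_nil, wRatio]
  have hRpos : ∀ k, 0 < R k := fun k => wRatio_pos ρ (fun mm => (hρ mm).1) _
  have hRle : ∀ k, R k ≤ q ^ k := by
    intro k
    induction k with
    | zero => simp [hR0]
    | succ k ih =>
      rw [hRsucc, pow_succ]
      exact mul_le_mul ih (hqge (m k)) (hρ (m k)).1.le (pow_nonneg hqpos.le k)
  have hcross : ∀ θ : ℝ, 0 < θ → ∃ k, R k ≤ θ := by
    intro θ hθ
    obtain ⟨k, hk⟩ := exists_pow_lt_of_lt_one hθ hq1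
    exact ⟨k, (hRle k).trans hk.le⟩
  have hex_a := hcross a (lt_of_lt_of_le hb hba)
  have hex_b := hcross b hb
  have hk12 : Nat.find hex_a ≤ Nat.find hex_b :=
    Nat.find_mono (fun k hk => hk.trans hba)
  have hlow : ∀ (θ : ℝ) (hθ : 0 < θ), θ ≤ 1 → ρmin * θ < R (Nat.find (hcross θ hθ)) := by
    intro θ hθ hθ1
    rcases Nat.eq_zero_or_pos (Nat.find (hcross θ hθ)) with h0 | hposk
    · rw [h0, hR0]
      have h1 : ρmin ≤ ρ (m 0) := hρminle (m 0)
      have h2 : ρ (m 0) < 1 := (hρ (m 0)).2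
      nlinarith
    · obtain ⟨j, hj⟩ : ∃ j, Nat.find (hcross θ hθ) = j + 1 :=
        ⟨Nat.find (hcross θ hθ) - 1, by omega⟩
      have hnot : ¬ R j ≤ θ := Nat.find_min (hcross θ hθ) (by omega)
      push_neg at hnot
      rw [hj, hRsucc j]
      have h1 : ρmin ≤ ρ (m j) := hρminle (m j)
      nlinarith [hRpos j]
  have hlowa := hlow a (lt_of_lt_of_le hb hba) ha1
  have hlowb := hlow b hb (hba.trans ha1)
  exact ⟨W (Nat.find hex_a), W (Nat.find hex_b), range_map_prefix m hk12,
    hm _, hm _, Nat.find_spec hex_a, hlowa, Nat.find_spec hex_b, hlowb⟩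

theorem O_subset (s : Fin M → EuclideanSpace ℝ (Fin n) → EuclideanSpace ℝ (Fin n))
    (ρ : Fin M → ℝ) (hρ : ∀ m, ρ m ∈ Set.Ioo (0:ℝ) 1)
    (hsim : ∀ m, IsSim (ρ m) (s m))
    (Γ : Set (EuclideanSpace ℝ (Fin n))) (hΓne : Γ.Nonempty) (hΓcomp : IsCompact Γ)
    (hattr : Γ = ⋃ m, s m '' Γ)
    (O : Set (EuclideanSpace ℝ (Fin n))) (hOne : O.Nonempty) (hOopen : IsOpen O)
    (hObdd : Bornology.IsBounded O)
    (hOsub : (⋃ m, s m '' O) ⊆ O)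
    (hOdisj : ∀ m m', m ≠ m' → Disjoint (s m '' O) (s m' '' O))
    (hsum : ∑ m, ρ m ^ n = 1) : O ⊆ Γ := by
  classical
  obtain ⟨γ₀, hγ₀⟩ := hΓne
  have hMne : Nonempty (Fin M) := by
    have := (le_of_eq hattr) hγ₀
    rcases Set.mem_iUnion.mp this with ⟨m0, _⟩
    exact ⟨m0⟩
  haveI := hMne
  obtain ⟨m0⟩ := hMne
  set q : ℝ := Finset.univ.sup' (Finset.univ_nonempty) ρ with hqdef
  have hqge : ∀ mm, ρ mm ≤ q := fun mm => Finset.le_sup' ρ (Finset.mem_univ mm)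
  have hqpos : 0 < q := lt_of_lt_of_le (hρ m0).1 (hqge m0)
  have hq1 : q < 1 := by
    rw [hqdef]
    exact (Finset.sup'_lt_iff _).mpr (fun mm _ => (hρ mm).2)
  set T : Set (EuclideanSpace ℝ (Fin n)) → Set (EuclideanSpace ℝ (Fin n)) :=
    fun A => ⋃ mm, s mm '' A with hT
  have hTmono : ∀ A B, A ⊆ B → T A ⊆ T B := by
    intro A B hAB
    exact Set.iUnion_mono fun mm => Set.image_mono hAB
  set Sk : ℕ → Set (EuclideanSpace ℝ (Fin n)) := fun k => T^[k] O with hSk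
  have hSk0 : Sk 0 = O := rfl
  have hSksucc : ∀ k, Sk (k+1) = T (Sk k) := by
    intro k
    simp [hSk, Function.iterate_succ_apply']
  have hSkopen : ∀ k, IsOpen (Sk k) := by
    intro k
    induction k with
    | zero => exact hOopen
    | succ k ih =>
      rw [hSksucc]
      exact isOpen_iUnion fun mm => ((hsim mm).isOpenMap (hρ mm).1) _ ih
  have hSksub : ∀ k, Sk k ⊆ O := by
    intro k
    induction k with
    | zero => exact le_refl O
    | succ k ih =>
      rw [hSksucc]
      exact (hTmono _ _ ih).trans hOsub
  have hOfin : volume O ≠ ⊤ := by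
    have h1 : volume O ≤ volume (closure O) := measure_mono subset_closure
    exact (lt_of_le_of_lt h1 hObdd.isCompact_closure.measure_lt_top).ne
  have hSkvol : ∀ k, volume (Sk k) = volume O := by
    intro k
    induction k with
    | zero => rfl
    | succ k ih =>
      rw [hSksucc]
      have hdisj : Pairwise (Function.onFun Disjoint fun mm => s mm '' Sk k) := by
        intro i j hij
        exact (hOdisj i j hij).mono (Set.image_mono (hSksub k))
          (Set.image_mono (hSksub k))
      have hmeas : ∀ mm, MeasurableSet (s mm '' Sk k) :=
        fun mm => (((hsim mm).isOpenMap (hρ mm).1) _ (hSkopen k)).measurableSet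
      rw [show T (Sk k) = ⋃ mm, s mm '' Sk k from rfl, measure_iUnion hdisj hmeas]
      have : ∀ mm, volume (s mm '' Sk k) = ENNReal.ofReal (ρ mm ^ n) * volume (Sk k) :=
        fun mm => (hsim mm).volume_image (hρ mm).1 _
      rw [tsum_fintype]
      calc ∑ mm, volume (s mm '' Sk k)
          = ∑ mm, ENNReal.ofReal (ρ mm ^ n) * volume (Sk k) := by
            exact Finset.sum_congr rfl fun mm _ => this mm
        _ = (∑ mm, ENNReal.ofReal (ρ mm ^ n)) * volume (Sk k) := by
            rw [Finset.sum_mul]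
        _ = ENNReal.ofReal (∑ mm, ρ mm ^ n) * volume (Sk k) := by
            rw [ENNReal.ofReal_sum_of_nonneg (fun mm _ => pow_nonneg (hρ mm).1.le n)]
        _ = volume (Sk k) := by rw [hsum]; simp
        _ = volume O := ih
  -- distance control
  set C₀ : ℝ := Metric.diam (O ∪ Γ) with hC₀
  have hbddU : Bornology.IsBounded (O ∪ Γ) := hObdd.union hΓcomp.isBounded
  have happrox : ∀ k, ∀ p ∈ Sk k, ∃ γ ∈ Γ, dist p γ ≤ q ^ k * C₀ := by
    intro k
    induction k with
    | zero =>
      intro p hp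
      refine ⟨γ₀, hγ₀, ?_⟩
      rw [pow_zero, one_mul]
      exact Metric.dist_le_diam_of_mem hbddU (Or.inl hp) (Or.inr hγ₀)
    | succ k ih =>
      intro p hp
      rw [hSksucc] at hp
      rcases Set.mem_iUnion.mp hp with ⟨mm, y, hy, rfl⟩
      obtain ⟨γ, hγ, hdist⟩ := ih y hy
      refine ⟨s mm γ, ?_, ?_⟩
      · have : s mm γ ∈ ⋃ m', s m' '' Γ := Set.mem_iUnion.mpr ⟨mm, Set.mem_image_of_mem _ hγ⟩
        rwa [← hattr] at this
      · rw [hsim mm y γ]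
        calc ρ mm * dist y γ ≤ q * (q ^ k * C₀) := by
              apply mul_le_mul (hqge mm) hdist dist_nonneg hqpos.le
          _ = q ^ (k+1) * C₀ := by ring
  -- conclusion
  intro p hp
  by_contra hpΓ
  have hinf : 0 < Metric.infDist p Γ :=
    (hΓcomp.isClosed.notMem_iff_infDist_pos ⟨γ₀, hγ₀⟩).mp hpΓ
  obtain ⟨δ, hδpos, hδ⟩ := Metric.isOpen_iff.mp hOopen p hp
  set ε : ℝ := min δ (Metric.infDist p Γ) with hε
  have hεpos : 0 < ε := lt_min hδpos hinf
  obtain ⟨k, hk⟩ : ∃ k, q ^ k * C₀ < ε / 2 := by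
    rcases eq_or_lt_of_le (show (0:ℝ) ≤ C₀ from Metric.diam_nonneg) with h0 | hCpos
    · refine ⟨0, ?_⟩
      rw [← h0, mul_zero]
      linarith
    · obtain ⟨k, hk⟩ := exists_pow_lt_of_lt_one (div_pos (half_pos hεpos) hCpos) hq1
      refine ⟨k, ?_⟩
      rw [← lt_div_iff₀ hCpos]
      exact hk
  have hfar : ∀ z ∈ Sk k, ε / 2 ≤ dist p z := by
    intro z hz
    obtain ⟨γ, hγ, hdz⟩ := happrox k z hz
    have h1 : Metric.infDist p Γ ≤ dist p γ := Metric.infDist_le_dist_of_mem hγ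
    have h2 : dist p γ ≤ dist p z + dist z γ := dist_triangle p z γ
    have h3 : ε ≤ Metric.infDist p Γ := min_le_right _ _
    nlinarith [hdz, hk]
  have hball : Metric.ball p (ε / 2) ⊆ O \ Sk k := by
    intro z hz
    constructor
    · apply hδ
      refine Metric.ball_subset_ball ?_ hz
      have h4 : ε ≤ δ := min_le_left _ _
      linarith
    · intro hzS
      have := hfar z hzS
      rw [Metric.mem_ball, dist_comm] at hz
      linarith
  have hvol0 : volume (O \ Sk k) = 0 := by
    rw [measure_diff (hSksub k) (hSkopen k).measurableSet.nullMeasurableSet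
      (by rw [hSkvol k]; exact hOfin), hSkvol k, tsub_self]
  have : volume (Metric.ball p (ε / 2)) = 0 :=
    measure_mono_null hball hvol0
  exact (measure_ball_pos volume p (by positivity)).ne' this

end Helpers

end S6


open S6 in
/-- If Γ is an n-attractor then the complement Γᶜ = ℝⁿ ∖ Γ is an
open n-set: there exists c > 0 such that c·rⁿ ≤ |Γᶜ ∩ B(x,r)| for all x ∈ Γᶜ
and all 0 < r ≤ 1. -/
theorem statement6
    (n : ℕ) (hn : 1 ≤ n)
    (M : ℕ) (hM : 2 ≤ M)
    (s : Fin M → EuclideanSpace ℝ (Fin n) → EuclideanSpace ℝ (Fin n))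
    (ρ : Fin M → ℝ)
    (hρ : ∀ m, ρ m ∈ Set.Ioo (0 : ℝ) 1)
    (hsim : ∀ m x y, dist (s m x) (s m y) = ρ m * dist x y)
    (Γ : Set (EuclideanSpace ℝ (Fin n)))
    (hΓne : Γ.Nonempty) (hΓcomp : IsCompact Γ)
    (hattr : Γ = ⋃ m, s m '' Γ)
    (hOSC : ∃ O : Set (EuclideanSpace ℝ (Fin n)), O.Nonempty ∧ IsOpen O ∧
      Bornology.IsBounded O ∧ (⋃ m, s m '' O) ⊆ O ∧
      ∀ m m', m ≠ m' → Disjoint (s m '' O) (s m' '' O))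
    (hsum : ∑ m, ρ m ^ n = 1) :
    ∃ c : ℝ, 0 < c ∧ ∀ x ∈ Γᶜ, ∀ r : ℝ, 0 < r → r ≤ 1 →
      ENNReal.ofReal (c * r ^ n) ≤ volume (Γᶜ ∩ Metric.closedBall x r) := by
  classical
  have hsim' : ∀ m, IsSim (ρ m) (s m) := fun m x y => hsim m x y
  have hρpos : ∀ m, 0 < ρ m := fun m => (hρ m).1
  have hMne : Nonempty (Fin M) := ⟨⟨0, by omega⟩⟩
  haveI := hMne
  obtain ⟨m0⟩ := hMne
  -- ρmin and q
  set ρmin : ℝ := Finset.univ.inf' Finset.univ_nonempty ρ with hρmindef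
  have hρminle : ∀ m, ρmin ≤ ρ m := fun m => Finset.inf'_le ρ (Finset.mem_univ m)
  have hρminpos : 0 < ρmin := by
    rw [hρmindef]
    exact (Finset.lt_inf'_iff _).mpr fun m _ => (hρ m).1
  set q : ℝ := Finset.univ.sup' Finset.univ_nonempty ρ with hqdef
  have hqge : ∀ m, ρ m ≤ q := fun m => Finset.le_sup' ρ (Finset.mem_univ m)
  have hqpos : 0 < q := lt_of_lt_of_le (hρ m0).1 (hqge m0)
  have hq1 : q < 1 := by
    rw [hqdef]
    exact (Finset.sup'_lt_iff _).mpr fun m _ => (hρ m).2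
  -- invariance
  have hinv : ∀ m, s m '' Γ ⊆ Γ := fun m =>
    (Set.subset_iUnion (fun m' => s m' '' Γ) m).trans (le_of_eq hattr.symm)
  obtain ⟨O, hOne, hOopen, hObdd, hOsub, hOdisj⟩ := hOSC
  have hOΓ : O ⊆ Γ :=
    O_subset s ρ hρ hsim' Γ hΓne hΓcomp hattr O hOne hOopen hObdd hOsub hOdisj hsum
  have hΓfin : volume Γ ≠ ⊤ := hΓcomp.measure_lt_top.ne
  have hΓpos : 0 < volume Γ :=
    lt_of_lt_of_le (hOopen.measure_pos volume hOne) (measure_mono hOΓ)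
  -- level-1 a.e. disjointness
  have hsum1 : ∑ m, volume (s m '' Γ) = volume (⋃ m, s m '' Γ) := by
    have h1 : ∀ m : Fin M, volume (s m '' Γ) = ENNReal.ofReal (ρ m ^ n) * volume Γ :=
      fun m => (hsim' m).volume_image (hρpos m) Γ
    calc ∑ m, volume (s m '' Γ)
        = (∑ m, ENNReal.ofReal (ρ m ^ n)) * volume Γ := by
          rw [Finset.sum_mul]
          exact Finset.sum_congr rfl fun m _ => h1 m
      _ = ENNReal.ofReal (∑ m, ρ m ^ n) * volume Γ := by
          rw [ENNReal.ofReal_sum_of_nonneg (fun m _ => pow_nonneg (hρ m).1.le n)]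
      _ = volume Γ := by rw [hsum]; simp
      _ = volume (⋃ m, s m '' Γ) := by conv_lhs => rw [hattr]
  have hlevel1 : ∀ i j : Fin M, i ≠ j → volume (s i '' Γ ∩ s j '' Γ) = 0 := by
    intro i j hij
    refine pairwise_null_of_sum (fun m => s m '' Γ) (fun m => ?_) (fun m => ?_) (le_of_eq hsum1) hij
    · exact (hΓcomp.image ((hsim' m).continuous (hρpos m))).measurableSet
    · rw [(hsim' m).volume_image (hρpos m)]
      exact ENNReal.mul_ne_top ENNReal.ofReal_ne_top hΓfin
  have hwnull := word_null s ρ hρpos hsim' Γ hinv hlevel1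
  -- interior ball and diameter
  obtain ⟨p₀, hp₀O⟩ := hOne
  obtain ⟨a, hapos, haball⟩ := Metric.isOpen_iff.mp hOopen p₀ hp₀O
  have hp₀Γ : p₀ ∈ Γ := hOΓ hp₀O
  set D : ℝ := Metric.diam Γ with hDdef
  have hDpos : 0 < D := by
    set e1 : EuclideanSpace ℝ (Fin n) := EuclideanSpace.single ⟨0, by omega⟩ (a/2) with he1
    have hnorm : ‖e1‖ = a/2 := by
      rw [he1, EuclideanSpace.norm_single, Real.norm_eq_abs, abs_of_pos (by linarith)]
    have hp₁ball : p₀ + e1 ∈ Metric.ball p₀ a := by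
      rw [Metric.mem_ball, dist_comm, dist_self_add_right, hnorm]
      linarith
    have h1 : dist p₀ (p₀ + e1) ≤ D :=
      Metric.dist_le_diam_of_mem hΓcomp.isBounded hp₀Γ (hOΓ (haball hp₁ball))
    rw [dist_self_add_right, hnorm] at h1
    linarith
  -- the word ŵ with its tile inside the ball around p₀
  set θh : ℝ := min (1/2) (a / (2*D)) with hθh
  have hθhpos : 0 < θh := lt_min (by norm_num) (div_pos hapos (by linarith))
  have hθh1 : θh ≤ 1 := (min_le_left _ _).trans (by norm_num)
  obtain ⟨wtmp, wh, hpretmp, hmemtmp, hmemwh, htmp1, htmp2, hwhle, hwhgt⟩ :=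
    exists_two_tiles s ρ hρ Γ hattr ρmin hρminpos hρminle q hqpos hq1 hqge hp₀Γ
      hθhpos (le_refl θh) hθh1
  set ρh : ℝ := wRatio ρ wh with hρh
  have hρhpos : 0 < ρh := wRatio_pos ρ hρpos wh
  have hρhhalf : ρh ≤ 1/2 := hwhle.trans (min_le_left _ _)
  have hρh1 : ρh < 1 := lt_of_le_of_lt hρhhalf (by norm_num)
  have hsimwh : IsSim ρh (wMap s wh) := wMap_isSim s ρ hsim' wh
  have hwhtile : wMap s wh '' Γ ⊆ Metric.ball p₀ a := by
    rintro ζ ⟨u, huΓ, rfl⟩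
    obtain ⟨u₀, hu₀Γ, hp₀eq⟩ := hmemwh
    rw [Metric.mem_ball]
    have h1 : dist (wMap s wh u) p₀ = ρh * dist u u₀ := by
      rw [← hp₀eq]; exact hsimwh u u₀
    have h2 : dist u u₀ ≤ D := Metric.dist_le_diam_of_mem hΓcomp.isBounded huΓ hu₀Γ
    have h3 : ρh * dist u u₀ ≤ θh * D := by
      apply mul_le_mul hwhle h2 dist_nonneg hθhpos.le
    have h4 : θh * D ≤ (a / (2*D)) * D := by
      apply mul_le_mul_of_nonneg_right (min_le_right _ _) hDpos.le
    have h5 : (a / (2*D)) * D = a / 2 := by field_simp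
    rw [h1]
    linarith
  -- fixed point z of wMap s wh
  obtain ⟨γ₀, hγ₀⟩ := hΓne
  have hcontr : ContractingWith ρh.toNNReal (wMap s wh) := by
    constructor
    · rw [← NNReal.coe_lt_coe, Real.coe_toNNReal _ hρhpos.le, NNReal.coe_one]
      exact hρh1
    · exact hsimwh.lipschitz hρhpos
  obtain ⟨z, hzfix, hztend, -⟩ := hcontr.exists_fixedPoint γ₀ (edist_ne_top _ _)
  have hiter : ∀ k, (wMap s wh)^[k] γ₀ ∈ Γ := by
    intro k
    induction k with
    | zero => exact hγ₀
    | succ k ih =>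
      rw [Function.iterate_succ_apply']
      exact wMap_image_subset s hinv wh (Set.mem_image_of_mem _ ih)
  have hzΓ : z ∈ Γ := hΓcomp.isClosed.mem_of_tendsto hztend
    (Filter.Eventually.of_forall hiter)
  have hzO : z ∈ O := haball (hwhtile ⟨z, hzΓ, hzfix⟩)
  obtain ⟨δ, hδpos, hδball⟩ := Metric.isOpen_iff.mp hOopen z hzO
  -- choose K
  obtain ⟨K, hK⟩ : ∃ K, ρh ^ K * (1 + D) < δ := by
    obtain ⟨K, hK⟩ := exists_pow_lt_of_lt_one (div_pos hδpos (show (0:ℝ) < 1 + D by linarith)) hρh1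
    refine ⟨K, ?_⟩
    rw [← lt_div_iff₀ (by linarith : (0:ℝ) < 1 + D)]
    exact hK
  -- the inflation word v = wh^K
  set vK : ℕ → List (Fin M) := fun k => (List.replicate k wh).flatten with hvK
  have hvflat : ∀ k, vK (k+1) = wh ++ vK k := by
    intro k; rw [hvK]; simp [List.replicate_succ]
  have hvr : ∀ k, wRatio ρ (vK k) = ρh ^ k := by
    intro k
    induction k with
    | zero => simp [hvK, wRatio_nil, wRatio]
    | succ k ih => rw [hvflat, wRatio_append, ih, pow_succ]; ring
  have hvz : ∀ k, wMap s (vK k) z = z := by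
    intro k
    induction k with
    | zero => rfl
    | succ k ih => rw [hvflat, wMap_append, Function.comp_apply, ih, hzfix]
  set v : List (Fin M) := vK K with hvdef
  set F : EuclideanSpace ℝ (Fin n) → EuclideanSpace ℝ (Fin n) := wMap s v with hFdef
  set ρv : ℝ := ρh ^ K with hρv
  have hρvpos : 0 < ρv := pow_pos hρhpos K
  have hρv1 : ρv ≤ 1 := pow_le_one₀ hρhpos.le hρh1.le
  have hsimv : IsSim ρv (F) := by
    rw [hρv, ← hvr K]
    exact wMap_isSim s ρ hsim' v
  -- constants
  set ω : ℝ≥0∞ := volume (Metric.ball (0 : EuclideanSpace ℝ (Fin n)) 1) with hω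
  have hωpos : 0 < ω := measure_ball_pos volume _ one_pos
  have hωfin : ω ≠ ⊤ := by
    refine ((measure_mono Metric.ball_subset_closedBall).trans_lt ?_).ne
    exact (isCompact_closedBall _ _).measure_lt_top
  set V : ℝ := (volume Γ).toReal with hV
  have hVpos : 0 < V := ENNReal.toReal_pos hΓpos.ne' hΓfin
  have hVeq : volume Γ = ENNReal.ofReal V := (ENNReal.ofReal_toReal hΓfin).symm
  set z₁ : ℝ := ρmin * min D 1 / D with hz₁
  have hz₁pos : 0 < z₁ := div_pos (mul_pos hρminpos (lt_min hDpos one_pos)) hDpos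
  set c₁ : ℝ := V * z₁ ^ n with hc₁
  have hc₁pos : 0 < c₁ := mul_pos hVpos (pow_pos hz₁pos n)
  refine ⟨min c₁ ω.toReal, lt_min hc₁pos (ENNReal.toReal_pos hωpos.ne' hωfin), ?_⟩
  intro x hx r hrpos hr1
  set c : ℝ := min c₁ ω.toReal with hc
  have hcpos : 0 < c := lt_min hc₁pos (ENNReal.toReal_pos hωpos.ne' hωfin)
  by_cases hnear : (Γ ∩ Metric.closedBall x r).Nonempty
  swap
  · -- far case: the closed ball is entirely in the complement
    have hsubc : Metric.closedBall x r ⊆ Γᶜ := by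
      intro y hy hyΓ
      exact hnear ⟨y, hyΓ, hy⟩
    have heq : Γᶜ ∩ Metric.closedBall x r = Metric.closedBall x r :=
      Set.inter_eq_self_of_subset_right hsubc
    rw [heq]
    have hvol : volume (Metric.closedBall x r) = ENNReal.ofReal (r ^ n) * ω := by
      rw [hω, Measure.addHaar_closedBall volume x hrpos.le, finrank_euclideanSpace_fin]
    rw [hvol]
    calc ENNReal.ofReal (c * r ^ n)
        = ENNReal.ofReal (r ^ n) * ENNReal.ofReal c := by
          rw [← ENNReal.ofReal_mul (by positivity)]; ring_nf
      _ ≤ ENNReal.ofReal (r ^ n) * ω := by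
          apply mul_le_mul_right
          calc ENNReal.ofReal c ≤ ENNReal.ofReal ω.toReal :=
                ENNReal.ofReal_le_ofReal (min_le_right _ _)
            _ = ω := ENNReal.ofReal_toReal hωfin
  · -- near case
    obtain ⟨γ, hγΓ, hγB⟩ := hnear
    have hxz : dist x z ≤ 1 + D := by
      have h1 : dist x γ ≤ r := Metric.mem_closedBall'.mp hγB
      have h2 : dist γ z ≤ D := Metric.dist_le_diam_of_mem hΓcomp.isBounded hγΓ hzΓ
      calc dist x z ≤ dist x γ + dist γ z := dist_triangle x γ z
        _ ≤ 1 + D := by linarith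
    set y₀ : EuclideanSpace ℝ (Fin n) := F x with hy₀def
    have hy₀z : dist y₀ z < δ := by
      have h2 : F z = z := hvz K
      have h1 : dist (F x) z = ρv * dist x z := by
        conv_lhs => rw [← h2]
        exact hsimv x z
      calc dist y₀ z = dist (F x) z := by rw [hy₀def]
        _ = ρv * dist x z := h1
        _ ≤ ρv * (1 + D) := mul_le_mul_of_nonneg_left hxz hρvpos.le
        _ < δ := by rw [hρv]; exact hK
    have hy₀Γ : y₀ ∈ Γ := hOΓ (hδball (Metric.mem_ball.mpr hy₀z))
    have hy₀notin : y₀ ∉ F '' Γ := by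
      rintro ⟨u, huΓ, hequ⟩
      exact hx (((hsimv.injective hρvpos) hequ) ▸ huΓ)
    -- stopping times at y₀
    set u' : ℝ := r * min D 1 with hu'
    have hu'pos : 0 < u' := mul_pos hrpos (lt_min hDpos one_pos)
    have hu'r : u' ≤ r := by
      rw [hu']
      calc r * min D 1 ≤ r * 1 := by
            apply mul_le_mul_of_nonneg_left (min_le_right _ _) hrpos.le
        _ = r := mul_one r
    have hu'D : u' ≤ D := by
      rw [hu']
      calc r * min D 1 ≤ 1 * min D 1 := by
            apply mul_le_mul_of_nonneg_right hr1 (lt_min hDpos one_pos).le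
        _ = min D 1 := one_mul _
        _ ≤ D := min_le_left _ _
    set θ₂ : ℝ := ρv * u' / D with hθ₂
    have hθ₂pos : 0 < θ₂ := div_pos (mul_pos hρvpos hu'pos) hDpos
    have hθ₂1 : θ₂ ≤ ρv := by
      rw [hθ₂, div_le_iff₀ hDpos]
      calc ρv * u' ≤ ρv * D := mul_le_mul_of_nonneg_left hu'D hρvpos.le
        _ = ρv * D := rfl
    obtain ⟨w₁, w₂, hpre, hmem₁, hmem₂, hw₁le, hw₁gt, hw₂le, hw₂gt⟩ :=
      exists_two_tiles s ρ hρ Γ hattr ρmin hρminpos hρminle q hqpos hq1 hqge hy₀Γ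
        hθ₂pos hθ₂1 hρv1
    -- w₁ and v are incomparable
    have hvw₁ : ¬ v <+: w₁ := by
      rintro ⟨t, rfl⟩
      apply hy₀notin
      rw [wMap_append, Set.image_comp] at hmem₁
      exact Set.image_mono (f := F) (wMap_image_subset s hinv t) hmem₁
    have hw₁v : ¬ w₁ <+: v := by
      rintro ⟨t, ht⟩
      cases t with
      | nil =>
        rw [List.append_nil] at ht
        exact hvw₁ (ht ▸ List.prefix_refl w₁)
      | cons mh tt =>
        have h1 : wRatio ρ v = wRatio ρ w₁ * wRatio ρ (mh :: tt) := by
          rw [← ht, wRatio_append]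
        have h2 : wRatio ρ (mh :: tt) < 1 := by
          rw [wRatio_cons]
          have h3 := wRatio_le_one ρ hρpos (fun m => (hρ m).2.le) tt
          calc ρ mh * wRatio ρ tt ≤ ρ mh * 1 :=
                mul_le_mul_of_nonneg_left h3 (hρ mh).1.le
            _ = ρ mh := mul_one _
            _ < 1 := (hρ mh).2
        have h5 : wRatio ρ v = ρv := hvr K
        have h6 := wRatio_pos ρ hρpos w₁
        have h7 : wRatio ρ w₁ * wRatio ρ (mh :: tt) < wRatio ρ w₁ * 1 :=
          mul_lt_mul_of_pos_left h2 h6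
        rw [mul_one] at h7
        -- hw₁le : wRatio ρ w₁ ≤ ρv
        linarith [hw₁le]
    have hnull : volume (wMap s w₁ '' Γ ∩ F '' Γ) = 0 := hwnull w₁ v hw₁v hvw₁
    -- the small tile and its preimage
    set Sb : Set (EuclideanSpace ℝ (Fin n)) := wMap s w₂ '' Γ with hSb
    have hSbsub : Sb ⊆ wMap s w₁ '' Γ := by
      obtain ⟨t, rfl⟩ := hpre
      rw [hSb, wMap_append, Set.image_comp]
      exact Set.image_mono (wMap_image_subset s hinv t)
    have hSbdiam : ∀ ζ ∈ Sb, ∀ ζ' ∈ Sb, dist ζ ζ' ≤ ρv * u' := by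
      rintro ζ ⟨uu, huu, rfl⟩ ζ' ⟨uu', huu', rfl⟩
      have h1 : dist (wMap s w₂ uu) (wMap s w₂ uu') = wRatio ρ w₂ * dist uu uu' :=
        wMap_isSim s ρ hsim' w₂ uu uu'
      have h2 : dist uu uu' ≤ D := Metric.dist_le_diam_of_mem hΓcomp.isBounded huu huu'
      have h3 : wRatio ρ w₂ * dist uu uu' ≤ θ₂ * D := by
        apply mul_le_mul hw₂le h2 dist_nonneg hθ₂pos.le
      have h4 : θ₂ * D = ρv * u' := by
        rw [hθ₂]; field_simp
      rw [h1]; rw [h4] at h3; exact h3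
    set A : Set (EuclideanSpace ℝ (Fin n)) := F ⁻¹' Sb with hA
    have hxA : x ∈ A := hmem₂
    have hAsub : A ⊆ Metric.closedBall x r := by
      intro ξ hξ
      have h1 : dist (F ξ) (F x) ≤ ρv * u' := hSbdiam _ hξ _ hmem₂
      have h2 : dist (F ξ) (F x) = ρv * dist ξ x := hsimv ξ x
      rw [h2] at h1
      have h3 : dist ξ x ≤ u' := le_of_mul_le_mul_left h1 hρvpos
      exact Metric.mem_closedBall.mpr (h3.trans hu'r)
    -- measure computations
    have hFcont : Continuous F := hsimv.continuous hρvpos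
    have hSbmeas : MeasurableSet Sb :=
      (hΓcomp.image ((wMap_isSim s ρ hsim' w₂).continuous (wRatio_pos ρ hρpos w₂))).measurableSet
    have hAmeas : MeasurableSet A := hSbmeas.preimage hFcont.measurable
    have hSbA : volume Sb = ENNReal.ofReal (ρv ^ n) * volume A := by
      conv_lhs => rw [hSb, ← Set.image_preimage_eq (wMap s w₂ '' Γ) (hsimv.surjective hρvpos)]
      exact hsimv.volume_image hρvpos _
    have hAΓnull : volume (A ∩ Γ) = 0 := by
      have hsub2 : F '' (A ∩ Γ) ⊆ wMap s w₁ '' Γ ∩ F '' Γ := by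
        refine (Set.image_inter_subset F A Γ).trans ?_
        refine Set.inter_subset_inter ?_ (le_refl _)
        exact (Set.image_preimage_subset F Sb).trans hSbsub
      have h1 : volume (F '' (A ∩ Γ)) = 0 := measure_mono_null hsub2 hnull
      have h2 := hsimv.volume_image hρvpos (A ∩ Γ)
      rw [h1] at h2
      rcases mul_eq_zero.mp h2.symm with h3 | h3
      · exact absurd h3 (by simp [ENNReal.ofReal_eq_zero, not_le]; positivity)
      · exact h3
    have hAdiff : volume (A \ Γ) = volume A := measure_diff_null' hAΓnull
    have hfinal_sub : A \ Γ ⊆ Γᶜ ∩ Metric.closedBall x r :=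
      fun ξ hξ => ⟨hξ.2, hAsub hξ.1⟩
    -- numeric lower bound for volume A
    have hw₂r : ρmin * θ₂ < wRatio ρ w₂ := hw₂gt
    have hrealineq : (ρv ^ n) * (c * r ^ n) ≤ (wRatio ρ w₂) ^ n * V := by
      have h1 : ρmin * θ₂ = ρv * (z₁ * r) := by
        rw [hθ₂, hz₁, hu']; field_simp
      have h2 : (wRatio ρ w₂) ^ n ≥ (ρv * (z₁ * r)) ^ n := by
        apply pow_le_pow_left₀ (by positivity) (h1 ▸ hw₂r.le)
      have h3 : (ρv * (z₁ * r)) ^ n = ρv ^ n * (z₁ ^ n * r ^ n) := by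
        rw [mul_pow, mul_pow]
      have h4 : c ≤ c₁ := min_le_left _ _
      have h5 : ρv ^ n * (z₁ ^ n * r ^ n) * V = ρv ^ n * ((V * z₁ ^ n) * r ^ n) := by ring
      calc (ρv ^ n) * (c * r ^ n) ≤ (ρv ^ n) * (c₁ * r ^ n) := by
            apply mul_le_mul_of_nonneg_left ?_ (by positivity)
            apply mul_le_mul_of_nonneg_right h4 (by positivity)
        _ = ρv ^ n * ((V * z₁ ^ n) * r ^ n) := by rw [hc₁]
        _ = (ρv * (z₁ * r)) ^ n * V := by rw [h3]; ring
        _ ≤ (wRatio ρ w₂) ^ n * V := by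
            apply mul_le_mul_of_nonneg_right h2 hVpos.le
    have hkey : ENNReal.ofReal (ρv ^ n) * ENNReal.ofReal (c * r ^ n)
        ≤ ENNReal.ofReal (ρv ^ n) * volume A := by
      rw [← hSbA]
      have hSbvol : volume Sb = ENNReal.ofReal ((wRatio ρ w₂) ^ n) * volume Γ := by
        rw [hSb]
        exact (wMap_isSim s ρ hsim' w₂).volume_image (wRatio_pos ρ hρpos w₂) Γ
      rw [hSbvol, hVeq, ← ENNReal.ofReal_mul (pow_nonneg hρvpos.le n),
        ← ENNReal.ofReal_mul (pow_nonneg (wRatio_pos ρ hρpos w₂).le n)]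
      exact ENNReal.ofReal_le_ofReal hrealineq
    have hvolA : ENNReal.ofReal (c * r ^ n) ≤ volume A := by
      have hne0 : ENNReal.ofReal (ρv ^ n) ≠ 0 := by
        simp [ENNReal.ofReal_eq_zero, not_le]; positivity
      exact (ENNReal.mul_le_mul_iff_right hne0 ENNReal.ofReal_ne_top).mp hkey
    calc ENNReal.ofReal (c * r ^ n) ≤ volume A := hvolA
      _ = volume (A \ Γ) := hAdiff.symm
      _ ≤ volume (Γᶜ ∩ Metric.closedBall x r) := measure_mono hfinal_sub
end
end
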